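/- arXiv:2010.10449 — 7 statements merged into one kernel-verified Lean document; each statement's English description precedes it below -/
import Mathlib

section
/- Let I=[a,b] be a compact interval, g ∈ C^r(I,ℝ) with r ≥ 1, and C_r := ‖g^{(r)}‖_{L^∞(I)}. Then for every λ with 0 < λ ≤ ‖g‖_∞ there exists a finite family of pairwise disjoint intervals I_{λ,i}, i ∈ 𝓘_λ, such that (i) |𝓘_λ| ≤ 30 r (1 + |I| C_r^{1/r} λ^{-1/r}), and (ii) the union V_λ of the intervals satisfies {t ∈ I : |g(t)| < λ} ⊆ V_λ ⊆ {t ∈ I : |g(t)| < 8λ}. -/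
open Set

open Polynomial

lemma derivBoundTransfer (a b c : ℝ) (hac : a ≤ c) (hcb : c < b) (r : ℕ) (hr : 1 ≤ r)
    (g : ℝ → ℝ) (hg : ContDiffOn ℝ r g (Icc a b)) (Cr : ℝ)
    (hCr : ∀ t ∈ Icc a b, |iteratedDerivWithin r g (Icc a b) t| ≤ Cr) :
    ∀ y ∈ Icc c b, |iteratedDerivWithin r g (Icc c b) y| ≤ Cr := by
  have hsub : Icc c b ⊆ Icc a b := Icc_subset_Icc hac le_rfl
  have key : ∀ y ∈ Ioc c b,
      iteratedDerivWithin r g (Icc c b) y = iteratedDerivWithin r g (Icc a b) y := by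
    intro y hy
    have hev : Icc c b =ᶠ[nhds y] Icc a b := by
      rw [Filter.eventuallyEq_set]
      filter_upwards [Ioi_mem_nhds hy.1] with x hx
      simp only [mem_Icc, mem_Ioi] at *
      constructor
      · rintro ⟨h1, h2⟩; exact ⟨le_trans hac h1, h2⟩
      · rintro ⟨h1, h2⟩; exact ⟨le_of_lt hx, h2⟩
    simp only [iteratedDerivWithin_eq_iteratedFDerivWithin]
    rw [iteratedFDerivWithin_congr_set hev]
  intro y hy
  rcases eq_or_lt_of_le hy.1 with rfl | hcy
  · -- y = c, use continuity
    have hcont : ContinuousOn (iteratedDerivWithin r g (Icc c b)) (Icc c b) :=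
      (hg.mono hsub).continuousOn_iteratedDerivWithin le_rfl (uniqueDiffOn_Icc hcb)
    have hne : (nhdsWithin c (Ioc c b)).NeBot := by
      rw [← mem_closure_iff_nhdsWithin_neBot, closure_Ioc hcb.ne]
      exact hy
    have htend : Filter.Tendsto (fun x => |iteratedDerivWithin r g (Icc c b) x|)
        (nhdsWithin c (Ioc c b)) (nhds (|iteratedDerivWithin r g (Icc c b) c|)) := by
      have := (hcont c hy).mono Ioc_subset_Icc_self
      exact this.tendsto.abs
    refine le_of_tendsto htend ?_
    filter_upwards [self_mem_nhdsWithin] with x hx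
    rw [key x hx]
    exact hCr x (hsub (Ioc_subset_Icc_self hx))
  · rw [key y ⟨hcy, hy.2⟩]
    exact hCr y (hsub hy)

lemma blockLemma (a b c w lam : ℝ) (hac : a ≤ c) (hcb : c < b) (hw : 0 ≤ w)
    (r : ℕ) (hr : 1 ≤ r)
    (g : ℝ → ℝ) (hg : ContDiffOn ℝ r g (Icc a b))
    (Cr : ℝ) (hCr : ∀ t ∈ Icc a b, |iteratedDerivWithin r g (Icc a b) t| ≤ Cr)
    (hCr0 : 0 ≤ Cr)
    (hlam : 0 < lam) (hsmall : Cr * w ^ r ≤ lam)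
    (B : Set ℝ) (hB : B.OrdConnected) (hBsub : B ⊆ Icc c (min (c + w) b)) :
    ∃ (Z : Finset ℝ) (T : ℝ → Set ℝ),
      Z.card ≤ 2 * r - 1 ∧
      (∀ z, (T z).OrdConnected) ∧
      (∀ z, T z ⊆ B) ∧
      (∀ z, ∀ x ∈ T z, |g x| < 3 * lam) ∧
      (∀ z z', z ≠ z' → Disjoint (T z) (T z')) ∧
      (∀ x ∈ B, |g x| < lam → ∃ z ∈ Z, x ∈ T z) := by
  have hsub : Icc c b ⊆ Icc a b := Icc_subset_Icc hac le_rfl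
  have hg' : ContDiffOn ℝ r g (Icc c b) := hg.mono hsub
  have hCr' : ∀ y ∈ Icc c b, |iteratedDerivWithin r g (Icc c b) y| ≤ Cr :=
    derivBoundTransfer a b c hac hcb r hr g hg Cr hCr
  obtain ⟨r', rfl⟩ : ∃ r', r = r' + 1 := ⟨r - 1, (Nat.succ_pred_eq_of_pos hr).symm⟩
  set P : ℝ → ℝ := taylorWithinEval g r' (Icc c b) c with hP
  have hBIcc : ∀ x ∈ B, x ∈ Icc c b := by
    intro x hx
    obtain ⟨h1, h2⟩ := hBsub hx
    exact ⟨h1, le_trans h2 (min_le_right _ _)⟩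
  -- Taylor approximation bound on B
  have hTaylor : ∀ x ∈ B, |g x - P x| ≤ lam := by
    intro x hx
    have hxcb : x ∈ Icc c b := hBIcc x hx
    have hcd : ContDiffOn ℝ ((r' : ℕ∞) + 1) g (Icc c b) := by exact_mod_cast hg'
    have hC : ∀ y ∈ Icc c b, ‖iteratedDerivWithin (r' + 1) g (Icc c b) y‖ ≤ Cr :=
      fun y hy => hCr' y hy
    have hb := taylor_mean_remainder_bound hcb.le hcd hxcb hC
    refine le_trans hb ?_
    have hxc : 0 ≤ x - c := by linarith [hxcb.1]
    have hxw : x - c ≤ w := by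
      linarith [le_trans (hBsub hx).2 (min_le_left (c + w) b)]
    have h1 : Cr * (x - c) ^ (r' + 1) ≤ Cr * w ^ (r' + 1) :=
      mul_le_mul_of_nonneg_left (pow_le_pow_left₀ hxc hxw _) hCr0
    have h2 : Cr * (x - c) ^ (r' + 1) / (Nat.factorial r' : ℝ) ≤ Cr * (x - c) ^ (r' + 1) := by
      apply div_le_self (mul_nonneg hCr0 (pow_nonneg hxc _))
      exact_mod_cast Nat.one_le_iff_ne_zero.mpr (Nat.factorial_ne_zero _)
    calc Cr * (x - c) ^ (r' + 1) / (Nat.factorial r' : ℝ) ≤ Cr * (x - c) ^ (r' + 1) := h2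
      _ ≤ Cr * w ^ (r' + 1) := h1
      _ ≤ lam := hsmall
  -- the Taylor polynomial as a Polynomial
  set q : Polynomial ℝ := ∑ i ∈ Finset.range (r' + 1),
    C ((Nat.factorial i : ℝ)⁻¹ * iteratedDerivWithin i g (Icc c b) c) * (X - C c) ^ i with hq
  have hqeval : ∀ x, q.eval x = P x := by
    intro x
    rw [hP, taylor_within_apply, hq, eval_finset_sum]
    refine Finset.sum_congr rfl fun i _ => ?_
    simp [smul_eq_mul]
    ring
  have hqdeg : q.natDegree ≤ r' := by
    refine Polynomial.natDegree_sum_le_of_forall_le _ _ fun i hi => ?_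
    refine le_trans (natDegree_mul_le) ?_
    rw [natDegree_C]
    refine le_trans (le_of_eq (zero_add _)) ?_
    refine le_trans (natDegree_pow_le) ?_
    rw [natDegree_X_sub_C, mul_one]
    exact Nat.lt_succ_iff.mp (Finset.mem_range.mp hi)
  set p : Polynomial ℝ := q * q - C (4 * lam ^ 2) with hp
  have hpeval : ∀ x, p.eval x = P x * P x - 4 * lam ^ 2 := by
    intro x; rw [hp]; simp [hqeval]
  have hpneg : ∀ x, p.eval x < 0 ↔ |P x| < 2 * lam := by
    intro x
    rw [hpeval, abs_lt]
    constructor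
    · intro h; constructor <;> nlinarith
    · rintro ⟨h1, h2⟩; nlinarith
  have hpdeg : p.natDegree ≤ 2 * (r' + 1) - 2 := by
    rw [hp, natDegree_sub_C]
    refine le_trans natDegree_mul_le ?_
    omega
  classical
  set Zr : Finset ℝ := (p.roots.toFinset).filter (fun y => c < y) with hZr
  set F : Finset ℝ := insert c Zr with hF
  have hFcard : F.card ≤ 2 * (r' + 1) - 1 := by
    have h1 : Zr.card ≤ p.roots.toFinset.card := Finset.card_filter_le _ _
    have h2 : p.roots.toFinset.card ≤ Multiset.card p.roots := p.roots.toFinset_card_le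
    have h3 := p.card_roots'
    have h4 : F.card ≤ Zr.card + 1 := by
      rw [hF]; exact Finset.card_insert_le _ _
    omega
  have hFge : ∀ z ∈ F, c ≤ z := by
    intro z hz
    rcases Finset.mem_insert.mp hz with rfl | hz
    · exact le_rfl
    · exact (Finset.mem_filter.mp hz).2.le
  set T : ℝ → Set ℝ := fun z =>
    if z ∈ F then {x | x ∈ B ∧ |P x| < 2 * lam ∧ z ≤ x ∧ ∀ y ∈ Zr, y ≤ x → y ≤ z}
    else ∅ with hT
  have hTB : ∀ z, T z ⊆ B := by
    intro z x hx
    simp only [hT] at hx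
    split_ifs at hx with h
    · exact hx.1
    · exact absurd hx (notMem_empty x)
  have hTP : ∀ z, ∀ x ∈ T z, |P x| < 2 * lam := by
    intro z x hx
    simp only [hT] at hx
    split_ifs at hx with h
    · exact hx.2.1
    · exact absurd hx (notMem_empty x)
  have hOC : ∀ z, (T z).OrdConnected := by
    intro z
    simp only [hT]
    split_ifs with hzF
    · refine ⟨fun x1 h1 x2 h2 x hx => ?_⟩
      obtain ⟨hx1B, hx1P, hx1z, hx1r⟩ := h1
      obtain ⟨hx2B, hx2P, hx2z, hx2r⟩ := h2
      have hxB : x ∈ B := hB.out hx1B hx2B hx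
      refine ⟨hxB, ?_, le_trans hx1z hx.1, fun y hy hyx => hx2r y hy (le_trans hyx hx.2)⟩
      have hp1 : p.eval x1 < 0 := (hpneg x1).mpr hx1P
      have hpne : p ≠ 0 := by
        intro h
        rw [h] at hp1
        simp at hp1
      have hcz : c ≤ z := hFge z hzF
      have hnz : ∀ y ∈ Icc x1 x2, p.eval y ≠ 0 := by
        intro y hy hy0
        have hyx1 : x1 ≤ y := hy.1
        have hle : y ≤ x1 := by
          rcases eq_or_lt_of_le (le_trans hcz (le_trans hx1z hy.1)) with h | h
          · linarith [hx1z, hcz, h.symm.le]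
          · have hyZ : y ∈ Zr := by
              rw [hZr, Finset.mem_filter, Multiset.mem_toFinset, Polynomial.mem_roots hpne]
              exact ⟨hy0, h⟩
            exact le_trans (hx2r y hyZ hy.2) hx1z
        have heq : y = x1 := le_antisymm hle hy.1
        rw [heq] at hy0
        exact absurd hy0 (ne_of_lt hp1)
      rw [← hpneg]
      by_contra hge
      push_neg at hge
      have hcont : ContinuousOn (fun t => p.eval t) (Icc x1 x) :=
        (Polynomial.continuous_aeval p).continuousOn
      have h0mem : (0:ℝ) ∈ Icc (p.eval x1) (p.eval x) := ⟨hp1.le, hge⟩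
      obtain ⟨y, hy, hy0⟩ := intermediate_value_Icc hx.1 hcont h0mem
      exact hnz y ⟨hy.1, le_trans hy.2 hx.2⟩ hy0
    · exact Set.ordConnected_empty
  have hg3 : ∀ z, ∀ x ∈ T z, |g x| < 3 * lam := by
    intro z x hx
    have h1 := hTaylor x (hTB z hx)
    have h2 := hTP z x hx
    have : |g x| ≤ |g x - P x| + |P x| := by
      calc |g x| = |(g x - P x) + P x| := by rw [sub_add_cancel]
        _ ≤ |g x - P x| + |P x| := abs_add_le _ _
    linarith
  have hdisj : ∀ z z', z ≠ z' → Disjoint (T z) (T z') := by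
    have key : ∀ z z', z < z' → Disjoint (T z) (T z') := by
      intro z z' hzz
      rw [Set.disjoint_left]
      intro x hxz hxz'
      simp only [hT] at hxz hxz'
      split_ifs at hxz hxz' with h1 h2
      · have hcz : c ≤ z := hFge z h1
        have hz'Zr : z' ∈ Zr := by
          rcases Finset.mem_insert.mp h2 with rfl | h
          · exact absurd hzz (not_lt.mpr hcz)
          · exact h
        exact absurd (hxz.2.2.2 z' hz'Zr hxz'.2.2.1) (not_le.mpr hzz)
      · exact absurd hxz' (Set.notMem_empty x)
      · exact absurd hxz (Set.notMem_empty x)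
      · exact absurd hxz (Set.notMem_empty x)
    intro z z' hne
    rcases lt_or_gt_of_ne hne with h | h
    · exact key z z' h
    · exact (key z' z h).symm
  have hcov : ∀ x ∈ B, |g x| < lam → ∃ z ∈ F, x ∈ T z := by
    intro x hxB hgx
    have hPx : |P x| < 2 * lam := by
      have h1 : |P x - g x| ≤ lam := by
        rw [abs_sub_comm]; exact hTaylor x hxB
      have : |P x| ≤ |P x - g x| + |g x| := by
        calc |P x| = |(P x - g x) + g x| := by rw [sub_add_cancel]
          _ ≤ |P x - g x| + |g x| := abs_add_le _ _
      linarith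
    have hcx : c ≤ x := (hBsub hxB).1
    by_cases hW : (Zr.filter (fun y => y ≤ x)).Nonempty
    · set z := (Zr.filter (fun y => y ≤ x)).max' hW with hz
      have hzmem := (Zr.filter (fun y => y ≤ x)).max'_mem hW
      have hz1 : z ∈ Zr := (Finset.mem_filter.mp hzmem).1
      refine ⟨z, Finset.mem_insert_of_mem hz1, ?_⟩
      simp only [hT]
      rw [if_pos (Finset.mem_insert_of_mem hz1)]
      refine ⟨hxB, hPx, (Finset.mem_filter.mp hzmem).2, fun y hy hyx => ?_⟩
      rw [hz]
      exact Finset.le_max' (Zr.filter (fun y => y ≤ x)) y (Finset.mem_filter.mpr ⟨hy, hyx⟩)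
    · refine ⟨c, Finset.mem_insert_self _ _, ?_⟩
      simp only [hT]
      rw [if_pos (Finset.mem_insert_self _ _)]
      refine ⟨hxB, hPx, hcx, fun y hy hyx => ?_⟩
      exact (hW ⟨y, Finset.mem_filter.mpr ⟨hy, hyx⟩⟩).elim
  exact ⟨F, T, hFcard, hOC, hTB, hg3, hdisj, hcov⟩

/-- Sublevel-set decomposition: the sublevel set `{|g| < λ}` of a `C^r` function on a
compact interval can be covered by at most `30 r (1 + |I| C_r^{1/r} λ^{-1/r})` pairwise
disjoint intervals on which `|g| < 8λ`. -/
theorem sublevel_set_decomposition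
    (a b : ℝ) (hab : a ≤ b) (r : ℕ) (hr : 1 ≤ r)
    (g : ℝ → ℝ) (hg : ContDiffOn ℝ r g (Icc a b))
    (Cr : ℝ) (hCr : ∀ t ∈ Icc a b, |iteratedDerivWithin r g (Icc a b) t| ≤ Cr)
    (lam : ℝ) (hlam : 0 < lam) (hlam' : ∃ t ∈ Icc a b, lam ≤ |g t|) :
    ∃ (n : ℕ) (J : Fin n → Set ℝ),
      (∀ i, (J i).OrdConnected) ∧
      Pairwise (Function.onFun Disjoint J) ∧
      ((n : ℝ) ≤ 30 * r * (1 + (b - a) * Cr ^ ((1 : ℝ) / r) * lam ^ (-(1 : ℝ) / r))) ∧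
      {t ∈ Icc a b | |g t| < lam} ⊆ (⋃ i, J i) ∧
      (⋃ i, J i) ⊆ {t ∈ Icc a b | |g t| < 8 * lam} := by
  classical
  rcases eq_or_lt_of_le hab with rfl | hab'
  · -- degenerate case a = b : the sublevel set is empty
    refine ⟨0, fun i => i.elim0, fun i => i.elim0, fun i => i.elim0, ?_, ?_, ?_⟩
    · simp only [Nat.cast_zero, sub_self, zero_mul, add_zero, mul_one]
      positivity
    · rintro t ⟨ht1, ht2⟩
      obtain ⟨s, hs, hls⟩ := hlam'
      have hta : t = a := le_antisymm ht1.2 ht1.1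
      have hsa : s = a := le_antisymm hs.2 hs.1
      rw [hta] at ht2; rw [hsa] at hls
      linarith
    · intro x hx
      simp only [mem_iUnion] at hx
      obtain ⟨i, _⟩ := hx
      exact i.elim0
  -- main case a < b
  have hCr0 : 0 ≤ Cr := le_trans (abs_nonneg _) (hCr a (left_mem_Icc.mpr hab))
  set X := (b - a) * Cr ^ ((1 : ℝ) / r) * lam ^ (-(1 : ℝ) / r) with hX
  have hX0 : 0 ≤ X := by
    apply mul_nonneg (mul_nonneg (by linarith) (Real.rpow_nonneg hCr0 _))
      (Real.rpow_nonneg hlam.le _)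
  set N : ℕ := ⌊X⌋₊ + 1 with hN
  have hN0 : 0 < N := Nat.succ_pos _
  have hNX : X < N := by
    rw [hN]; push_cast; exact Nat.lt_floor_add_one X
  have hNr : (N : ℝ) ≤ 1 + X := by
    rw [hN]; push_cast; linarith [Nat.floor_le hX0]
  set w := (b - a) / N with hw
  have hw0 : 0 < w := div_pos (by linarith) (by exact_mod_cast hN0)
  have hNw : (N : ℝ) * w = b - a := by
    rw [hw]; field_simp
  have hsmall : Cr * w ^ r ≤ lam := by
    rcases hCr0.lt_or_eq with hC | hC
    · have hXpos : 0 < X := by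
        apply mul_pos (mul_pos (by linarith) (Real.rpow_pos_of_pos hC _))
          (Real.rpow_pos_of_pos hlam _)
      have hwle : w ≤ (b - a) / X := by
        rw [hw]
        exact div_le_div_of_nonneg_left (by linarith) hXpos hNX.le
      have hu : (0:ℝ) < Cr ^ ((1:ℝ)/r) := Real.rpow_pos_of_pos hC _
      have hv : (0:ℝ) < lam ^ (-(1:ℝ)/r) := Real.rpow_pos_of_pos hlam _
      have hfrac : (b - a) / X = (Cr ^ ((1:ℝ)/r))⁻¹ * (lam ^ (-(1:ℝ)/r))⁻¹ := by
        rw [hX]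
        field_simp
      have hrne : (r : ℝ) ≠ 0 := Nat.cast_ne_zero.mpr (by omega)
      have hur : (Cr ^ ((1:ℝ)/r)) ^ r = Cr := by
        rw [← Real.rpow_natCast (Cr ^ ((1:ℝ)/r)) r, ← Real.rpow_mul hCr0]
        rw [one_div_mul_cancel hrne, Real.rpow_one]
      have hvr : (lam ^ (-(1:ℝ)/r)) ^ r = lam⁻¹ := by
        rw [← Real.rpow_natCast (lam ^ (-(1:ℝ)/r)) r, ← Real.rpow_mul hlam.le]
        have he : (-(1:ℝ)/r) * r = -1 := by field_simp
        rw [he, Real.rpow_neg_one]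
      calc Cr * w ^ r ≤ Cr * ((b - a) / X) ^ r :=
            mul_le_mul_of_nonneg_left (pow_le_pow_left₀ hw0.le hwle r) hCr0
        _ = Cr * ((Cr ^ ((1:ℝ)/r))⁻¹ ^ r * (lam ^ (-(1:ℝ)/r))⁻¹ ^ r) := by
            rw [hfrac, mul_pow]
        _ = Cr * (Cr⁻¹ * lam) := by
            rw [inv_pow, inv_pow, hur, hvr, inv_inv]
        _ = lam := by
            field_simp
    · rw [← hC, zero_mul]; exact hlam.le
  -- the blocks
  set cc : ℕ → ℝ := fun j => a + j * w with hcc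
  have hccsucc : ∀ j : ℕ, cc (j + 1) = cc j + w := by
    intro j; rw [hcc]; push_cast; ring
  have hccmono : ∀ {i j : ℕ}, i ≤ j → cc i ≤ cc j := by
    intro i j hij
    rw [hcc]
    dsimp only
    have : (i : ℝ) ≤ (j : ℝ) := by exact_mod_cast hij
    nlinarith [hw0.le]
  have hccN : cc N = b := by
    rw [hcc]; dsimp only; linarith [hNw]
  have hacc : ∀ j : ℕ, a ≤ cc j := by
    intro j; rw [hcc]; dsimp only
    have := mul_nonneg (Nat.cast_nonneg j) hw0.le
    linarith
  have hccb : ∀ j : ℕ, j < N → cc j < b := by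
    intro j hj
    have h1 : cc j ≤ cc (N - 1) := hccmono (by omega)
    have h2 : cc (N - 1) + w = cc N := by
      have he : N - 1 + 1 = N := by omega
      rw [← hccsucc (N - 1), he]
    rw [hccN] at h2
    linarith
  set Bl : ℕ → Set ℝ := fun j =>
    if j + 1 = N then Icc (cc j) b else Ico (cc j) (cc (j + 1)) with hBl
  have hBsub : ∀ j : ℕ, j < N → Bl j ⊆ Icc (cc j) (min (cc j + w) b) := by
    intro j hj x hx
    simp only [hBl] at hx
    split_ifs at hx with hcase
    · refine ⟨hx.1, le_min ?_ hx.2⟩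
      have : cc j + w = cc N := by rw [← hccsucc, hcase]
      rw [this, hccN]
      exact hx.2
    · refine ⟨hx.1, le_min ?_ ?_⟩
      · rw [← hccsucc]; exact hx.2.le
      · have : cc (j + 1) ≤ cc N := hccmono (by omega)
        rw [hccN] at this
        linarith [hx.2]
  have hBdisj : ∀ i j : ℕ, i < N → j < N → i ≠ j → Disjoint (Bl i) (Bl j) := by
    have key : ∀ i j : ℕ, i < j → j < N → Disjoint (Bl i) (Bl j) := by
      intro i j hij hjN
      rw [Set.disjoint_left]
      intro x hxi hxj
      have hiN : ¬ (i + 1 = N) := by omega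
      simp only [hBl] at hxi hxj
      rw [if_neg hiN] at hxi
      have h1 : x < cc (i + 1) := hxi.2
      have h2 : cc (i + 1) ≤ cc j := hccmono (by omega)
      have h3 : cc j ≤ x := by
        split_ifs at hxj with hc
        · exact hxj.1
        · exact hxj.1
      linarith
    intro i j hi hj hij
    rcases lt_or_gt_of_ne hij with h | h
    · exact key i j h hj
    · exact (key j i h hi).symm
  have hBcover : ∀ t ∈ Icc a b, ∃ j, j < N ∧ t ∈ Bl j := by
    intro t ht
    by_cases htb : t = b
    · refine ⟨N - 1, by omega, ?_⟩
      simp only [hBl]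
      rw [if_pos (by omega : N - 1 + 1 = N), htb]
      exact ⟨(hccb (N - 1) (by omega)).le, le_rfl⟩
    · have htb' : t < b := lt_of_le_of_ne ht.2 htb
      have hta : 0 ≤ (t - a) / w := div_nonneg (by linarith [ht.1]) hw0.le
      set j := ⌊(t - a) / w⌋₊ with hj
      have hjw : (j : ℝ) * w ≤ t - a := by
        rw [← le_div_iff₀ hw0]
        exact Nat.floor_le hta
      have hjw2 : t - a < ((j : ℝ) + 1) * w := by
        rw [← div_lt_iff₀ hw0]
        exact Nat.lt_floor_add_one _
      have hjN : j < N := by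
        have h1 : (j : ℝ) * w < (N : ℝ) * w := by
          rw [hNw]; linarith [ht.2, htb']
        have h2 : (j : ℝ) < N := lt_of_mul_lt_mul_right h1 hw0.le
        exact_mod_cast h2
      refine ⟨j, hjN, ?_⟩
      have hmem1 : cc j ≤ t := by rw [hcc]; dsimp only; linarith
      have hmem2 : t < cc (j + 1) := by
        rw [hccsucc, hcc]; dsimp only; linarith
      simp only [hBl]
      split_ifs with hcase
      · exact ⟨hmem1, ht.2⟩
      · exact ⟨hmem1, hmem2⟩
  -- apply the block lemma on each block
  have hblock : ∀ j : ℕ, j < N → ∃ (Z : Finset ℝ) (T : ℝ → Set ℝ),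
      Z.card ≤ 2 * r - 1 ∧
      (∀ z, (T z).OrdConnected) ∧
      (∀ z, T z ⊆ Bl j) ∧
      (∀ z, ∀ x ∈ T z, |g x| < 3 * lam) ∧
      (∀ z z', z ≠ z' → Disjoint (T z) (T z')) ∧
      (∀ x ∈ Bl j, |g x| < lam → ∃ z ∈ Z, x ∈ T z) := by
    intro j hj
    have hBoc : (Bl j).OrdConnected := by
      simp only [hBl]
      split_ifs
      · exact ordConnected_Icc
      · exact ordConnected_Ico
    exact blockLemma a b (cc j) w lam (hacc j) (hccb j hj) hw0.le r hr g hg Cr hCr hCr0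
      hlam hsmall (Bl j) hBoc (hBsub j hj)
  choose! Z T hZcard hTOC hTB hT3 hTdisj hTcov using hblock
  set M := 2 * r - 1 with hM
  have hM0 : 0 < M := by omega
  set K : Fin N × Fin M → Set ℝ := fun ji =>
    if h : (ji.2 : ℕ) < ((Z (ji.1 : ℕ)).sort (· ≤ ·)).length
    then T (ji.1 : ℕ) (((Z (ji.1 : ℕ)).sort (· ≤ ·)).get ⟨(ji.2 : ℕ), h⟩)
    else ∅ with hK
  have hKoc : ∀ p, (K p).OrdConnected := by
    intro p
    simp only [hK]
    split_ifs with h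
    · exact hTOC _ p.1.2 _
    · exact Set.ordConnected_empty
  have hKdisj : ∀ p p', p ≠ p' → Disjoint (K p) (K p') := by
    have main : ∀ j j' i i' : ℕ, j < N → j' < N →
        ∀ (h : i < ((Z j).sort (· ≤ ·)).length) (h' : i' < ((Z j').sort (· ≤ ·)).length),
        ¬(j = j' ∧ i = i') →
        Disjoint (T j (((Z j).sort (· ≤ ·)).get ⟨i, h⟩))
          (T j' (((Z j').sort (· ≤ ·)).get ⟨i', h'⟩)) := by
      intro j j' i i' hj hj' h h' hnn
      by_cases hjj : j = j'
      · subst hjj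
        have hii : i ≠ i' := fun he => hnn ⟨rfl, he⟩
        apply hTdisj j hj
        intro heq
        have hinj := List.nodup_iff_injective_get.mp (Finset.sort_nodup (s := Z j) (r := (· ≤ ·))) heq
        exact hii (congrArg Fin.val hinj)
      · exact Set.disjoint_of_subset (hTB _ hj _) (hTB _ hj' _) (hBdisj _ _ hj hj' hjj)
    rintro ⟨j, i⟩ ⟨j', i'⟩ hne
    simp only [hK]
    split_ifs with h h'
    · refine main _ _ _ _ j.2 j'.2 h h' ?_
      rintro ⟨e1, e2⟩
      exact hne (Prod.ext (Fin.ext e1) (Fin.ext e2))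
    · exact Set.disjoint_empty _
    · exact Set.empty_disjoint _
    · exact Set.disjoint_empty _
  have hKsub : ∀ p, K p ⊆ {t ∈ Icc a b | |g t| < 8 * lam} := by
    rintro ⟨j, i⟩ x hx
    simp only [hK] at hx
    split_ifs at hx with h
    · have hxB := hTB _ j.2 _ hx
      have hxI : x ∈ Icc a b := by
        have h2 := hBsub _ j.2 hxB
        exact ⟨le_trans (hacc _) h2.1, le_trans h2.2 (min_le_right _ _)⟩
      refine ⟨hxI, ?_⟩
      have := hT3 _ j.2 _ _ hx
      linarith
    · exact absurd hx (Set.notMem_empty x)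
  refine ⟨N * M, fun k => K (finProdFinEquiv.symm k), fun k => hKoc _, ?_, ?_, ?_, ?_⟩
  · intro k k' hne
    exact hKdisj _ _ (fun he => hne (finProdFinEquiv.symm.injective he))
  · -- cardinality bound
    have hMr : (M : ℝ) ≤ 2 * r := by
      rw [hM]
      push_cast [Nat.cast_sub (by omega : 1 ≤ 2 * r)]
      norm_num
    have hr1 : (1 : ℝ) ≤ r := by exact_mod_cast hr
    rw [Nat.cast_mul]
    have key : (N : ℝ) * M ≤ (1 + X) * (2 * r) :=
      mul_le_mul hNr hMr (by positivity) (by linarith)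
    nlinarith [mul_nonneg hX0 (by linarith : (0:ℝ) ≤ (r:ℝ))]
  · -- covering
    rintro t ⟨ht, hgt⟩
    obtain ⟨j, hj, htj⟩ := hBcover t ht
    obtain ⟨z, hzZ, htz⟩ := hTcov j hj t htj hgt
    have hzL : z ∈ (Z j).sort (· ≤ ·) := (Finset.mem_sort _).mpr hzZ
    have hi : List.idxOf z ((Z j).sort (· ≤ ·)) < ((Z j).sort (· ≤ ·)).length :=
      List.idxOf_lt_length_iff.mpr hzL
    have hiM : List.idxOf z ((Z j).sort (· ≤ ·)) < M := by
      refine lt_of_lt_of_le hi ?_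
      rw [Finset.length_sort]
      exact hZcard j hj
    set i := List.idxOf z ((Z j).sort (· ≤ ·)) with hidef
    rw [mem_iUnion]
    refine ⟨finProdFinEquiv (⟨j, hj⟩, ⟨i, hiM⟩), ?_⟩
    rw [Equiv.symm_apply_apply]
    simp only [hK]
    have hget : ∀ hh : i < ((Z j).sort (· ≤ ·)).length,
        ((Z j).sort (· ≤ ·)).get ⟨i, hh⟩ = z := fun hh => List.idxOf_get hh
    rw [dif_pos hi, hget]
    exact htz
  · -- upper inclusion
    intro x hx
    rw [mem_iUnion] at hx
    obtain ⟨k, hk⟩ := hx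
    exact hKsub _ hk
end

section
/- Let g ∈ C^k(I,ℝ) on an interval I of length b, with ‖g^{(m)}‖_∞ ≤ c_m for m = 0,…,k and c_0 < 1. Let ε > 0, assume k ≥ 1/ε and b ≤ c_0^ε. Then there exist constants C̃_m(ε) ≥ 0 depending only on ε and c_1,…,c_k (but not on b or c_0) such that ‖g^{(m)}‖_∞ ≤ c_0 · C̃_m(ε) · b^{-m} for all m = 0,…,k. -/
open Set

/-- Auxiliary constants for the divided-difference point bound. -/
noncomputable def KcDI : ℕ → ℝ
  | 0 => 1
  | (m + 1) => 6 * 3 ^ m * KcDI m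

lemma KcDI_one_le : ∀ m, (1 : ℝ) ≤ KcDI m := by
  intro m
  induction m with
  | zero => simp [KcDI]
  | succ m ih =>
    have h3 : (1 : ℝ) ≤ 3 ^ m := one_le_pow₀ (by norm_num)
    simp only [KcDI]
    nlinarith

lemma KcDI_nonneg (m : ℕ) : (0 : ℝ) ≤ KcDI m := le_trans zero_le_one (KcDI_one_le m)

/-- If `g ∈ C^k(I)` on an interval of length `b` with `‖g^{(m)}‖_∞ ≤ c_m`, `c₀ < 1`,
`k ≥ 1/ε` and `b ≤ c₀^ε`, then `‖g^{(m)}‖_∞ ≤ c₀ · C̃_m(ε) · b^{-m}` where the constants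
`C̃_m(ε)` depend only on `ε` and `c₁, …, c_k` (not on `b` or `c₀`). -/
theorem derivative_interpolation
    (ε : ℝ) (hε : 0 < ε) (k : ℕ) (hk : (1 : ℝ) / ε ≤ k) (c : ℕ → ℝ) :
    ∃ Ct : ℕ → ℝ, (∀ m, 0 ≤ Ct m) ∧
      ∀ (g : ℝ → ℝ) (x b c0 : ℝ), 0 < b →
        ContDiffOn ℝ k g (Icc x (x + b)) →
        (∀ t ∈ Icc x (x + b), |g t| ≤ c0) →
        (∀ m, 1 ≤ m → m ≤ k → ∀ t ∈ Icc x (x + b),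
          |iteratedDerivWithin m g (Icc x (x + b)) t| ≤ c m) →
        c0 < 1 → b ≤ c0 ^ ε →
        ∀ m ≤ k, ∀ t ∈ Icc x (x + b),
          |iteratedDerivWithin m g (Icc x (x + b)) t| ≤ c0 * Ct m * b ^ (-(m : ℝ)) := by
  refine ⟨fun m => (∑ j ∈ Finset.Ico m k, KcDI j) + max (c k) 0 + 1, ?_, ?_⟩
  · intro m
    have h1 : (0:ℝ) ≤ ∑ j ∈ Finset.Ico m k, KcDI j :=
      Finset.sum_nonneg fun j _ => KcDI_nonneg j
    have h2 : (0:ℝ) ≤ max (c k) 0 := le_max_right _ _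
    dsimp only
    linarith
  intro g x b c0 hb hg hc0 hcm hc01 hbc0
  set S : Set ℝ := Icc x (x + b) with hSdef
  set Ct : ℕ → ℝ := fun m => (∑ j ∈ Finset.Ico m k, KcDI j) + max (c k) 0 + 1 with hCtdef
  have hCt_nonneg : ∀ m, 0 ≤ Ct m := by
    intro m
    have h1 : (0:ℝ) ≤ ∑ j ∈ Finset.Ico m k, KcDI j :=
      Finset.sum_nonneg fun j _ => KcDI_nonneg j
    have h2 : (0:ℝ) ≤ max (c k) 0 := le_max_right _ _
    simp only [hCtdef]
    linarith
  have hxb : x < x + b := by linarith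
  have hxmem : x ∈ S := ⟨le_refl x, by linarith⟩
  have hS : UniqueDiffOn ℝ S := uniqueDiffOn_Icc hxb
  have hc0nonneg : 0 ≤ c0 := le_trans (abs_nonneg _) (hc0 x hxmem)
  have hc0pos : 0 < c0 := by
    rcases hc0nonneg.lt_or_eq with h | h
    · exact h
    · exfalso
      rw [← h, Real.zero_rpow hε.ne'] at hbc0
      linarith
  have hb1 : b < 1 := lt_of_le_of_lt hbc0 (Real.rpow_lt_one hc0nonneg hc01 hε)
  -- c0 ≥ b ^ (1/ε) ≥ b ^ k
  have hbk_le_c0 : b ^ (k : ℕ) ≤ c0 := by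
    have h1 : b ^ ((k : ℝ)) ≤ b ^ ((1:ℝ)/ε) :=
      Real.rpow_le_rpow_of_exponent_ge hb hb1.le hk
    have h2 : b ^ ((1:ℝ)/ε) ≤ (c0 ^ ε) ^ ((1:ℝ)/ε) :=
      Real.rpow_le_rpow hb.le hbc0 (by positivity)
    have h3 : (c0 ^ ε) ^ ((1:ℝ)/ε) = c0 := by
      rw [← Real.rpow_mul hc0nonneg, mul_one_div_cancel hε.ne', Real.rpow_one]
    rw [← Real.rpow_natCast b k]
    linarith
  -- differentiability of iterated derivatives
  have hdiffOn : ∀ m, m < k → DifferentiableOn ℝ (iteratedDerivWithin m g S) S := by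
    intro m hm
    exact hg.differentiableOn_iteratedDerivWithin (by exact_mod_cast hm) hS
  have hHasDerivWithin : ∀ m, m < k → ∀ z ∈ S,
      HasDerivWithinAt (iteratedDerivWithin m g S)
        (iteratedDerivWithin (m+1) g S z) S z := by
    intro m hm z hz
    have h := (hdiffOn m hm z hz).hasDerivWithinAt
    rwa [← iteratedDerivWithin_succ] at h
  -- Point lemma: on any subinterval of length L there is a point with a good bound
  have point : ∀ m, m ≤ k → ∀ u L, 0 < L → Icc u (u+L) ⊆ S →
      ∃ ξ ∈ Icc u (u+L), |iteratedDerivWithin m g S ξ| ≤ KcDI m * c0 / L ^ m := by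
    intro m
    induction m with
    | zero =>
      intro _ u L hL hsub
      refine ⟨u, ⟨le_refl u, by linarith⟩, ?_⟩
      have := hc0 u (hsub ⟨le_refl u, by linarith⟩)
      simp only [iteratedDerivWithin_zero, KcDI, pow_zero]
      linarith
    | succ m ih =>
      intro hmk u L hL hsub
      have hmk' : m < k := hmk
      have hmk'' : m ≤ k := hmk'.le
      have hL3 : 0 < L / 3 := by linarith
      obtain ⟨ξ₁, hξ₁, h1⟩ := ih hmk'' u (L/3) hL3
        (le_trans (Icc_subset_Icc le_rfl (by linarith)) hsub)
      obtain ⟨ξ₂, hξ₂, h2⟩ := ih hmk'' (u + 2*L/3) (L/3) hL3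
        (le_trans (Icc_subset_Icc (by linarith) (by linarith)) hsub)
      have hξ₁S : ξ₁ ∈ S := hsub (Icc_subset_Icc le_rfl (by linarith) hξ₁)
      have hξ₂S : ξ₂ ∈ S := hsub (Icc_subset_Icc (by linarith) (by linarith) hξ₂)
      have hlt : ξ₁ < ξ₂ := by
        have := hξ₁.2; have := hξ₂.1; linarith
      have hgap : L / 3 ≤ ξ₂ - ξ₁ := by
        have := hξ₁.2; have := hξ₂.1; linarith
      have hIooSub : Ioo ξ₁ ξ₂ ⊆ Ioo x (x + b) := by
        intro z hz
        exact ⟨lt_of_le_of_lt hξ₁S.1 hz.1, lt_of_lt_of_le hz.2 hξ₂S.2⟩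
      have hderivAt : ∀ z ∈ Ioo ξ₁ ξ₂,
          HasDerivAt (iteratedDerivWithin m g S)
            (iteratedDerivWithin (m+1) g S z) z := by
        intro z hz
        have hzS : z ∈ S := Ioo_subset_Icc_self (hIooSub hz)
        have hnhds : S ∈ nhds z := by
          refine mem_nhds_iff.mpr ⟨Ioo x (x+b), Ioo_subset_Icc_self, isOpen_Ioo, hIooSub hz⟩
        have hd := (hdiffOn m hmk' z hzS).differentiableAt hnhds
        have heq : deriv (iteratedDerivWithin m g S) z = iteratedDerivWithin (m+1) g S z := by
          rw [← derivWithin_of_mem_nhds hnhds, ← iteratedDerivWithin_succ]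
        exact heq ▸ hd.hasDerivAt
      have hcont : ContinuousOn (iteratedDerivWithin m g S) (Icc ξ₁ ξ₂) :=
        ((hdiffOn m hmk').continuousOn).mono (Icc_subset_Icc hξ₁S.1 hξ₂S.2)
      obtain ⟨ξ, hξ, hslope⟩ := exists_hasDerivAt_eq_slope
        (iteratedDerivWithin m g S) (iteratedDerivWithin (m+1) g S) hlt hcont hderivAt
      have hξIcc : ξ ∈ Icc u (u + L) := by
        constructor
        · have := hξ₁.1; have := hξ.1; linarith
        · have := hξ₂.2; have := hξ.2; linarith
      refine ⟨ξ, hξIcc, ?_⟩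
      rw [hslope]
      have hnum : |iteratedDerivWithin m g S ξ₂ - iteratedDerivWithin m g S ξ₁|
          ≤ 2 * (KcDI m * c0 / (L/3) ^ m) :=
        le_trans (abs_sub _ _) (by linarith)
      have hKc : 0 ≤ KcDI m * c0 / (L/3)^m :=
        div_nonneg (mul_nonneg (KcDI_nonneg m) hc0nonneg) (by positivity)
      have habs : |iteratedDerivWithin m g S ξ₂ - iteratedDerivWithin m g S ξ₁| / (ξ₂ - ξ₁)
          ≤ (2 * (KcDI m * c0 / (L/3) ^ m)) / (L / 3) := by
        apply div_le_div₀ (by linarith) hnum (by linarith) hgap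
      rw [abs_div, abs_of_pos (by linarith : (0:ℝ) < ξ₂ - ξ₁)]
      refine le_trans habs (le_of_eq ?_)
      have h3m : ((L:ℝ)/3) ^ m = L ^ m / 3 ^ m := div_pow L 3 m
      rw [h3m]
      simp only [KcDI]
      field_simp
      ring
  -- Lipschitz propagation using a sup bound on the next derivative
  have lip : ∀ m, m < k → ∀ C : ℝ,
      (∀ z ∈ S, |iteratedDerivWithin (m+1) g S z| ≤ C) →
      ∀ t ∈ S, ∀ s ∈ S,
        |iteratedDerivWithin m g S t - iteratedDerivWithin m g S s| ≤ C * b := by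
    intro m hm C hC t ht s hs
    have hCnonneg : 0 ≤ C := le_trans (abs_nonneg _) (hC x hxmem)
    have key := (convex_Icc x (x+b)).norm_image_sub_le_of_norm_hasDerivWithin_le
      (f := iteratedDerivWithin m g S) (f' := iteratedDerivWithin (m+1) g S)
      (fun z hz => hHasDerivWithin m hm z hz)
      (fun z hz => by rw [Real.norm_eq_abs]; exact hC z hz) hs ht
    rw [Real.norm_eq_abs, Real.norm_eq_abs] at key
    refine le_trans key (mul_le_mul_of_nonneg_left ?_ hCnonneg)
    rw [abs_le]
    constructor
    · have := ht.1; have := hs.2; linarith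
    · have := ht.2; have := hs.1; linarith
  -- rewrite the rpow
  have hrpow : ∀ m : ℕ, b ^ (-(m:ℝ)) = (b ^ m)⁻¹ := by
    intro m
    rw [Real.rpow_neg hb.le, Real.rpow_natCast]
  -- base case m = k
  have base : ∀ t ∈ S, |iteratedDerivWithin k g S t| ≤ c0 * Ct k / b ^ k := by
    intro t ht
    have hCtk : Ct k = max (c k) 0 + 1 := by
      simp [hCtdef, Finset.Ico_self]
    have hone : 1 ≤ c0 / b ^ k := (one_le_div (by positivity)).mpr hbk_le_c0
    rcases Nat.eq_zero_or_pos k with hk0 | hkpos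
    · subst hk0
      have := hc0 t ht
      simp only [iteratedDerivWithin_zero] at *
      have hCt0 : 1 ≤ Ct 0 := by
        rw [hCtk]; have := le_max_right (c 0) 0; linarith
      calc |g t| ≤ c0 := this
        _ ≤ c0 * Ct 0 := le_mul_of_one_le_right hc0nonneg hCt0
        _ = c0 * Ct 0 / b ^ 0 := by simp
    · have hck := hcm k hkpos le_rfl t ht
      have h1 : c k ≤ Ct k := by
        rw [hCtk]; have := le_max_left (c k) 0; linarith
      calc |iteratedDerivWithin k g S t| ≤ c k := hck
        _ ≤ Ct k := h1
        _ ≤ Ct k * (c0 / b ^ k) := le_mul_of_one_le_right (hCt_nonneg k) hone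
        _ = c0 * Ct k / b ^ k := by ring
  -- downward induction
  have main : ∀ d m, m ≤ k → k ≤ m + d → ∀ t ∈ S,
      |iteratedDerivWithin m g S t| ≤ c0 * Ct m / b ^ m := by
    intro d
    induction d with
    | zero =>
      intro m hm hm'
      have : m = k := le_antisymm hm (by omega)
      subst this
      exact base
    | succ d ih =>
      intro m hm hm' t ht
      rcases eq_or_lt_of_le hm with heq | hlt
      · subst heq; exact base t ht
      · -- m < k
        have hnext : ∀ z ∈ S, |iteratedDerivWithin (m+1) g S z| ≤ c0 * Ct (m+1) / b ^ (m+1) :=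
          ih (m+1) hlt (by omega)
        obtain ⟨ξ, hξ, hpt⟩ := point m hm x b hb (by rw [hSdef])
        have hξS : ξ ∈ S := by rwa [hSdef]
        have hlipt := lip m hlt (c0 * Ct (m+1) / b ^ (m+1)) hnext t ht ξ hξS
        have hCtrec : Ct m = KcDI m + Ct (m+1) := by
          simp only [hCtdef]
          rw [Finset.sum_eq_sum_Ico_succ_bot hlt]
          ring
        have hstep : (c0 * Ct (m+1) / b ^ (m+1)) * b = c0 * Ct (m+1) / b ^ m := by
          rw [pow_succ]
          field_simp
        calc |iteratedDerivWithin m g S t|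
            = |iteratedDerivWithin m g S ξ +
                (iteratedDerivWithin m g S t - iteratedDerivWithin m g S ξ)| := by ring_nf
          _ ≤ |iteratedDerivWithin m g S ξ| +
                |iteratedDerivWithin m g S t - iteratedDerivWithin m g S ξ| := abs_add_le _ _
          _ ≤ KcDI m * c0 / b ^ m + (c0 * Ct (m+1) / b ^ (m+1)) * b := by linarith
          _ = c0 * Ct m / b ^ m := by
              rw [hstep, hCtrec, ← add_div]
              ring_nf
  intro m hm t ht
  rw [hrpow m]
  have := main (k - m) m hm (by omega) t ht
  calc |iteratedDerivWithin m g S t| ≤ c0 * Ct m / b ^ m := this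
    _ = c0 * Ct m * (b ^ m)⁻¹ := by rw [div_eq_mul_inv]
end

section
/- Let I = [0,1] and h ∈ C^{m+1}(I,ℝ) with ‖h‖_∞ ≤ c_0. Then for each j = 0,…,m there exist points t^j_0 < t^j_1 < ⋯ < t^j_{2^{m-j}-1} in [0,1] with t^j_{i+1} − t^j_i ≥ 2^{-m} and |h^{(j)}(t^j_i)| ≤ c_0 · 2^{(m+1)j} for every i. -/
open Set

/-- Mean value point construction: if `‖h‖_∞ ≤ c₀` on `[0,1]`, then for each `j ≤ m`
there are `2^{m-j}` points, separated by at least `2^{-m}`, at which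
`|h^{(j)}| ≤ c₀ · 2^{(m+1)j}`. -/
theorem mean_value_points
    (m : ℕ) (c0 : ℝ) (h : ℝ → ℝ)
    (hh : ContDiffOn ℝ (m + 1) h (Icc (0 : ℝ) 1))
    (hbound : ∀ t ∈ Icc (0 : ℝ) 1, |h t| ≤ c0) :
    ∀ j ≤ m, ∃ t : ℕ → ℝ,
      (∀ i, i < 2 ^ (m - j) → t i ∈ Icc (0 : ℝ) 1 ∧
        |iteratedDerivWithin j h (Icc (0 : ℝ) 1) (t i)| ≤ c0 * 2 ^ ((m + 1) * j)) ∧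
      (∀ i, i + 1 < 2 ^ (m - j) → (2 : ℝ) ^ (-(m : ℤ)) ≤ t (i + 1) - t i) := by
  have hc0 : 0 ≤ c0 := le_trans (abs_nonneg _) (hbound 0 (by norm_num))
  have huniq : UniqueDiffOn ℝ (Icc (0:ℝ) 1) := uniqueDiffOn_Icc one_pos
  have hzpow : (2:ℝ) ^ (-(m : ℤ)) = ((2:ℝ) ^ m)⁻¹ := by
    rw [zpow_neg, zpow_natCast]
  intro j hj
  induction j with
  | zero =>
    refine ⟨fun i => (i : ℝ) / 2 ^ m, ?_, ?_⟩
    · intro i hi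
      have hmem : (i : ℝ) / 2 ^ m ∈ Icc (0:ℝ) 1 := by
        constructor
        · positivity
        · rw [div_le_one (by positivity)]
          exact_mod_cast le_of_lt (by exact_mod_cast hi : (i:ℝ) < 2 ^ m)
      refine ⟨hmem, ?_⟩
      simpa [iteratedDerivWithin_zero] using hbound _ hmem
    · intro i _
      rw [hzpow]
      have : ((i:ℕ)+1 : ℝ) / 2 ^ m - (i : ℝ) / 2 ^ m = ((2:ℝ) ^ m)⁻¹ := by
        field_simp
        ring
      push_cast
      rw [this]
  | succ j ih =>
    have hjm : j ≤ m := le_of_lt (Nat.lt_of_succ_le hj)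
    obtain ⟨t, ht1, ht2⟩ := ih hjm
    set N := 2 ^ (m - (j + 1)) with hN
    have hsplit : 2 ^ (m - j) = 2 * N := by
      rw [hN, ← pow_succ']
      congr 1
      omega
    have hz : (0:ℝ) < (2:ℝ) ^ (-(m : ℤ)) := by positivity
    -- regularity of the j-th derivative
    set g := iteratedDerivWithin j h (Icc (0:ℝ) 1) with hg
    have hgc : ContinuousOn g (Icc (0:ℝ) 1) :=
      hh.continuousOn_iteratedDerivWithin (by exact_mod_cast Nat.le_succ_of_le hjm) huniq
    have hgd : DifferentiableOn ℝ g (Icc (0:ℝ) 1) :=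
      hh.differentiableOn_iteratedDerivWithin (by exact_mod_cast Nat.lt_succ_of_le hjm) huniq
    have key : ∀ i, i < N → ∃ c, t (2*i) < c ∧ c < t (2*i+1) ∧ c ∈ Icc (0:ℝ) 1 ∧
        |iteratedDerivWithin (j+1) h (Icc (0:ℝ) 1) c| ≤ c0 * 2 ^ ((m + 1) * (j+1)) := by
      intro i hi
      have h2i : 2*i < 2 ^ (m - j) := by omega
      have h2i1 : 2*i + 1 < 2 ^ (m - j) := by omega
      obtain ⟨haI, haB⟩ := ht1 (2*i) h2i
      obtain ⟨hbI, hbB⟩ := ht1 (2*i+1) h2i1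
      have hsep := ht2 (2*i) h2i1
      have hab : t (2*i) < t (2*i+1) := by linarith
      have hIoo : Ioo (t (2*i)) (t (2*i+1)) ⊆ Icc (0:ℝ) 1 := fun x hx =>
        ⟨le_of_lt (lt_of_le_of_lt haI.1 hx.1), le_of_lt (lt_of_lt_of_le hx.2 hbI.2)⟩
      have hderiv : ∀ x ∈ Ioo (t (2*i)) (t (2*i+1)),
          HasDerivAt g (iteratedDerivWithin (j+1) h (Icc (0:ℝ) 1) x) x := by
        intro x hx
        have hxI : x ∈ Icc (0:ℝ) 1 := hIoo hx
        have hnh : Icc (0:ℝ) 1 ∈ nhds x :=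
          Icc_mem_nhds (lt_of_le_of_lt haI.1 hx.1) (lt_of_lt_of_le hx.2 hbI.2)
        have hda : HasDerivAt g (derivWithin g (Icc (0:ℝ) 1) x) x :=
          ((hgd x hxI).hasDerivWithinAt).hasDerivAt hnh
        rwa [← iteratedDerivWithin_succ] at hda
      obtain ⟨c, hc, hceq⟩ := exists_hasDerivAt_eq_slope g _ hab
        (hgc.mono (Icc_subset_Icc haI.1 hbI.2)) hderiv
      refine ⟨c, hc.1, hc.2, hIoo hc, ?_⟩
      rw [hceq, abs_div, abs_of_pos (by linarith : (0:ℝ) < t (2*i+1) - t (2*i)),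
        div_le_iff₀ (by linarith)]
      have h1 : |g (t (2*i+1)) - g (t (2*i))| ≤ 2 * (c0 * 2 ^ ((m+1)*j)) := by
        calc |g (t (2*i+1)) - g (t (2*i))| ≤ |g (t (2*i+1))| + |g (t (2*i))| := abs_sub _ _
        _ ≤ 2 * (c0 * 2 ^ ((m+1)*j)) := by linarith
      have heq : c0 * 2 ^ ((m + 1) * (j+1)) * (2:ℝ) ^ (-(m : ℤ))
          = 2 * (c0 * 2 ^ ((m+1)*j)) := by
        rw [hzpow, show ((m+1) * (j+1)) = (m+1)*j + (m + 1) by ring, pow_add, pow_succ]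
        have h2m : ((2:ℝ) ^ m) ≠ 0 := by positivity
        field_simp
      calc |g (t (2*i+1)) - g (t (2*i))| ≤ 2 * (c0 * 2 ^ ((m+1)*j)) := h1
        _ = c0 * 2 ^ ((m + 1) * (j+1)) * (2:ℝ) ^ (-(m : ℤ)) := heq.symm
        _ ≤ c0 * 2 ^ ((m + 1) * (j+1)) * (t (2*i+1) - t (2*i)) :=
            mul_le_mul_of_nonneg_left hsep (mul_nonneg hc0 (by positivity))
    choose s hs1 hs2 hs3 hs4 using key
    refine ⟨fun i => if hi : i < N then s i hi else 0, ?_, ?_⟩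
    · intro i hi
      simp only [dif_pos hi]
      exact ⟨hs3 i hi, hs4 i hi⟩
    · intro i hi
      have hi' : i < N := Nat.lt_of_succ_lt hi
      simp only [dif_pos hi, dif_pos hi']
      have hsep := ht2 (2*i+1) (by omega)
      have h1 : s i hi' < t (2*i+1) := hs2 i hi'
      have h2 : t (2*(i+1)) < s (i+1) hi := hs1 (i+1) hi
      have : t (2*i+1+1) = t (2*(i+1)) := by ring_nf
      rw [this] at hsep
      linarith
end

section
/- Let φ be C² on Σ with H > 0 on Σ, and define for points z, z₁, z₂ ∈ Σ the transversality quantity Γ_z(z₁,z₂) := ⟨(D²φ(z))^{-1}(∇φ(z₂) − ∇φ(z₁)), ∇φ(z₂) − ∇φ(z₁)⟩, and the linear factors t¹_z(z₁,z₂) := (φ_x(z₂) − φ_x(z₁)) − B(z)(φ_y(z₂) − φ_y(z₁)) and t²_z(z₁,z₂) := (φ_y(z₂) − φ_y(z₁)) − A(z)(φ_x(z₂) − φ_x(z₁)). Then Γ_z(z₁,z₂) = (2/q(z)) · t¹_z(z₁,z₂) · t²_z(z₁,z₂). -/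
open Real Set Matrix

/-- The square `Σ = [-1,1]²`. -/
def Sig : Set (ℝ × ℝ) := Set.Icc ((-1, -1) : ℝ × ℝ) (1, 1)

/-- The square `2Σ = [-2,2]²`. -/
def Sig2 : Set (ℝ × ℝ) := Set.Icc ((-2, -2) : ℝ × ℝ) (2, 2)

/-- Partial derivative `φ_x`. -/
noncomputable def px (φ : ℝ × ℝ → ℝ) (z : ℝ × ℝ) : ℝ := deriv (fun t => φ (t, z.2)) z.1

/-- Partial derivative `φ_y`. -/
noncomputable def py (φ : ℝ × ℝ → ℝ) (z : ℝ × ℝ) : ℝ := deriv (fun t => φ (z.1, t)) z.2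

/-- Second partial derivative `φ_{xx}`. -/
noncomputable def pxx (φ : ℝ × ℝ → ℝ) (z : ℝ × ℝ) : ℝ := deriv (fun t => px φ (t, z.2)) z.1

/-- Second partial derivative `φ_{xy}`. -/
noncomputable def pxy (φ : ℝ × ℝ → ℝ) (z : ℝ × ℝ) : ℝ := deriv (fun t => px φ (z.1, t)) z.2

/-- Second partial derivative `φ_{yy}`. -/
noncomputable def pyy (φ : ℝ × ℝ → ℝ) (z : ℝ × ℝ) : ℝ := deriv (fun t => py φ (z.1, t)) z.2

/-- `H = φ_{xy}² − φ_{xx} φ_{yy}` (minus the Hessian determinant). -/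
noncomputable def HH (φ : ℝ × ℝ → ℝ) (z : ℝ × ℝ) : ℝ := pxy φ z ^ 2 - pxx φ z * pyy φ z

/-- `A = φ_{yy}/(φ_{xy} + √H)`. -/
noncomputable def AA (φ : ℝ × ℝ → ℝ) (z : ℝ × ℝ) : ℝ :=
  pyy φ z / (pxy φ z + Real.sqrt (HH φ z))

/-- `B = φ_{xx}/(φ_{xy} + √H)`. -/
noncomputable def BB (φ : ℝ × ℝ → ℝ) (z : ℝ × ℝ) : ℝ :=
  pxx φ z / (pxy φ z + Real.sqrt (HH φ z))

/-- `q = 2H/(φ_{xy} + √H)`. -/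
noncomputable def qf (φ : ℝ × ℝ → ℝ) (z : ℝ × ℝ) : ℝ :=
  2 * HH φ z / (pxy φ z + Real.sqrt (HH φ z))

/-- The Hessian matrix `D²φ(z)`. -/
noncomputable def Hess (φ : ℝ × ℝ → ℝ) (z : ℝ × ℝ) : Matrix (Fin 2) (Fin 2) ℝ :=
  !![pxx φ z, pxy φ z; pxy φ z, pyy φ z]

/-- The linear factor `t¹_z(z₁,z₂) = (φ_x(z₂) − φ_x(z₁)) − B(z)(φ_y(z₂) − φ_y(z₁))`. -/
noncomputable def t1 (φ : ℝ × ℝ → ℝ) (z z1 z2 : ℝ × ℝ) : ℝ :=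
  (px φ z2 - px φ z1) - BB φ z * (py φ z2 - py φ z1)

/-- The linear factor `t²_z(z₁,z₂) = (φ_y(z₂) − φ_y(z₁)) − A(z)(φ_x(z₂) − φ_x(z₁))`. -/
noncomputable def t2 (φ : ℝ × ℝ → ℝ) (z z1 z2 : ℝ × ℝ) : ℝ :=
  (py φ z2 - py φ z1) - AA φ z * (px φ z2 - px φ z1)

/-- The transversality quantity `Γ_z(z₁,z₂) = ⟨(D²φ(z))⁻¹ Δ∇φ, Δ∇φ⟩`. -/
noncomputable def Gam (φ : ℝ × ℝ → ℝ) (z z1 z2 : ℝ × ℝ) : ℝ :=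
  ![px φ z2 - px φ z1, py φ z2 - py φ z1] ⬝ᵥ
    ((Hess φ z)⁻¹ *ᵥ ![px φ z2 - px φ z1, py φ z2 - py φ z1])

private lemma alg_key (a b c s u v : ℝ) (hs : s ^ 2 = c ^ 2 - a * b)
    (hH0 : c ^ 2 - a * b ≠ 0) (hd : c + s ≠ 0) :
    u * (((-(c ^ 2 - a * b))⁻¹ • !![b, -c; -c, a]) 0 0 * u +
          ((-(c ^ 2 - a * b))⁻¹ • !![b, -c; -c, a]) 0 1 * v) +
      v * (((-(c ^ 2 - a * b))⁻¹ • !![b, -c; -c, a]) 1 0 * u +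
          ((-(c ^ 2 - a * b))⁻¹ • !![b, -c; -c, a]) 1 1 * v) =
    2 / (2 * (c ^ 2 - a * b) / (c + s)) * (u - a / (c + s) * v) * (v - b / (c + s) * u) := by
  simp only [Matrix.smul_apply, Matrix.cons_val', Matrix.cons_val_zero, Matrix.cons_val_one,
    Matrix.head_cons, Matrix.head_fin_const, Matrix.empty_val', Matrix.cons_val_fin_one,
    smul_eq_mul, Matrix.of_apply]
  have hL : u * ((-(c ^ 2 - a * b))⁻¹ * b * u + (-(c ^ 2 - a * b))⁻¹ * -c * v) +
      v * ((-(c ^ 2 - a * b))⁻¹ * -c * u + (-(c ^ 2 - a * b))⁻¹ * a * v) =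
      (2 * c * u * v - b * u ^ 2 - a * v ^ 2) / (c ^ 2 - a * b) := by
    have h2 : b * a - c ^ 2 ≠ 0 := by intro h; exact hH0 (by linarith)
    have hinv : (b * a - c ^ 2)⁻¹ * (b * a - c ^ 2) = 1 := inv_mul_cancel₀ h2
    field_simp
    ring
  have hR : 2 / (2 * (c ^ 2 - a * b) / (c + s)) * (u - a / (c + s) * v) * (v - b / (c + s) * u) =
      (((c + s) * u - a * v) * ((c + s) * v - b * u)) / ((c ^ 2 - a * b) * (c + s)) := by
    field_simp
  have key : ((c + s) * u - a * v) * ((c + s) * v - b * u) =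
      (c + s) * (2 * c * u * v - b * u ^ 2 - a * v ^ 2) := by
    linear_combination u * v * hs
  rw [hL, hR, key, mul_comm (c + s) (2 * c * u * v - b * u ^ 2 - a * v ^ 2),
    mul_div_mul_right _ _ hd]

/-- The hyperbolic factorization `Γ_z(z₁,z₂) = (2/q(z)) · t¹_z(z₁,z₂) · t²_z(z₁,z₂)`. -/
theorem hyperbolic_factorization
    (φ : ℝ × ℝ → ℝ) (hφ : ContDiffOn ℝ 2 φ Sig)
    (hH : ∀ z ∈ Sig, 0 < HH φ z)
    (hden : ∀ z ∈ Sig, pxy φ z + Real.sqrt (HH φ z) ≠ 0) :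
    ∀ z ∈ Sig, ∀ z1 ∈ Sig, ∀ z2 ∈ Sig,
      Gam φ z z1 z2 = (2 / qf φ z) * t1 φ z z1 z2 * t2 φ z z1 z2 := by
  intro z hz z1 _ z2 _
  have hHz := hH z hz
  have hd := hden z hz
  have hs : Real.sqrt (HH φ z) ^ 2 = HH φ z := Real.sq_sqrt hHz.le
  have hH0 : HH φ z ≠ 0 := hHz.ne'
  have hHval : HH φ z = pxy φ z ^ 2 - pxx φ z * pyy φ z := by rw [HH]
  have hdet : (Hess φ z).det = -(pxy φ z ^ 2 - pxx φ z * pyy φ z) := by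
    simp [Hess, Matrix.det_fin_two_of]; ring
  have hinv : (Hess φ z)⁻¹ =
      (-(pxy φ z ^ 2 - pxx φ z * pyy φ z))⁻¹ •
        !![pyy φ z, -(pxy φ z); -(pxy φ z), pxx φ z] := by
    rw [Matrix.inv_def, Ring.inverse_eq_inv, hdet, Hess, Matrix.adjugate_fin_two_of]
  rw [Gam, hinv, t1, t2, qf, AA, BB]
  rw [hHval] at hs hH0 hd ⊢
  simp only [Matrix.mulVec, dotProduct, Fin.sum_univ_two, Matrix.cons_val_zero,
    Matrix.cons_val_one, Matrix.head_cons]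
  exact alg_key (pxx φ z) (pyy φ z) (pxy φ z) (Real.sqrt (HH φ z))
    (px φ z2 - px φ z1) (py φ z2 - py φ z1) hs hH0 hd
end

section
/- Let φ ∈ Hyp^M(Σ), M ≥ 3, fix z₁ ∈ Σ and set t(x,y) := (φ_y(x,y) − φ_y(z₁)) − A(z₁)(φ_x(x,y) − φ_x(z₁)). Let α := min_{Σ} t and β := max_{Σ} t. Then there exists a C^{M-1} function h : [α,β] × [-1,1] → ℝ such that t(h(v,y), y) = v for all (v,y) ∈ [α,β] × [-1,1], the map (v,y) ↦ (h(v,y), y) is a C^{M-1} diffeomorphism onto its image Σ_{z₁}, Σ ⊆ Σ_{z₁} ⊆ 2Σ, and the partial derivatives satisfy |h_y| ≤ 10⁻³ and |h_v − 1| ≤ 10⁻³. -/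
open Real Set Matrix

/-- Mixed partial derivative `∂_x^a ∂_y^b φ`. -/
noncomputable def pd (a b : ℕ) (φ : ℝ × ℝ → ℝ) (z : ℝ × ℝ) : ℝ :=
  iteratedDeriv a (fun x => iteratedDeriv b (fun y => φ (x, y)) z.2) z.1

/-- The class `Hyp^M(Σ)`: `φ` is `C^M` on `2Σ = [-2,2]²`, with `φ(0)=0`, `∇φ(0)=0`,
`D²φ(0) = [[0,1],[1,0]]`, and all partial derivatives of order between `3` and `M`
bounded by `10⁻⁵` on `2Σ`. -/
def Hyp (M : ℕ) (φ : ℝ × ℝ → ℝ) : Prop :=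
  ContDiffOn ℝ M φ Sig2 ∧ φ (0, 0) = 0 ∧ px φ (0, 0) = 0 ∧ py φ (0, 0) = 0 ∧
  pxx φ (0, 0) = 0 ∧ pyy φ (0, 0) = 0 ∧ pxy φ (0, 0) = 1 ∧
  ∀ a b : ℕ, 3 ≤ a + b → a + b ≤ M → ∀ z ∈ Sig2, |pd a b φ z| ≤ 1 / 100000

/-- The function `t_{z₁}(w) = (φ_y(w) − φ_y(z₁)) − A(z₁)(φ_x(w) − φ_x(z₁))`. -/
noncomputable def tfun (φ : ℝ × ℝ → ℝ) (z₁ w : ℝ × ℝ) : ℝ :=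
  (py φ w - py φ z₁) - AA φ z₁ * (px φ w - px φ z₁)

section Aux
open Filter

variable {F : Type*} [NormedAddCommGroup F] [NormedSpace ℝ F]

theorem sliceX {f : ℝ×ℝ → F} {L : ℝ×ℝ →L[ℝ] F} {a b : ℝ} (h : HasFDerivAt f L (a,b)) :
    HasDerivAt (fun x => f (x,b)) (L (1,0)) a :=
  h.comp_hasDerivAt a ((hasDerivAt_id a).prodMk (hasDerivAt_const a b))

theorem sliceY {f : ℝ×ℝ → F} {L : ℝ×ℝ →L[ℝ] F} {a b : ℝ} (h : HasFDerivAt f L (a,b)) :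
    HasDerivAt (fun y => f (a,y)) (L (0,1)) b :=
  h.comp_hasDerivAt b ((hasDerivAt_const b a).prodMk (hasDerivAt_id b))

theorem clm_two (L : ℝ×ℝ →L[ℝ] F) (a b : ℝ) : L (a,b) = a • L (1,0) + b • L (0,1) := by
  have : (a, b) = a • ((1:ℝ),(0:ℝ)) + b • ((0:ℝ),(1:ℝ)) := by simp [Prod.ext_iff]
  rw [this, map_add, L.map_smul, L.map_smul]

/-- Mean value bound on a convex set, with componentwise derivative bounds. -/
theorem mvt2 {f : ℝ×ℝ → ℝ} {s : Set (ℝ×ℝ)} (hs : Convex ℝ s)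
    {K : ℝ} (hK : 0 ≤ K)
    (hf : ∀ z ∈ s, ∃ L : ℝ×ℝ →L[ℝ] ℝ, HasFDerivAt f L z ∧ |L (1,0)| ≤ K ∧ |L (0,1)| ≤ K)
    {z w : ℝ×ℝ} (hz : z ∈ s) (hw : w ∈ s) :
    |f z - f w| ≤ 2 * K * ‖z - w‖ := by
  classical
  choose L hL h1 h2 using hf
  have bound : ∀ x (hx : x ∈ s), ‖L x hx‖ ≤ 2 * K := by
    intro x hx
    refine ContinuousLinearMap.opNorm_le_bound _ (by positivity) ?_
    rintro ⟨a, b⟩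
    rw [clm_two]
    have hna : |a| ≤ ‖(a,b)‖ := le_max_left _ _
    have hnb : |b| ≤ ‖(a,b)‖ := le_max_right _ _
    calc ‖a • (L x hx) (1,0) + b • (L x hx) (0,1)‖
        ≤ ‖a • (L x hx) (1,0)‖ + ‖b • (L x hx) (0,1)‖ := norm_add_le _ _
      _ ≤ |a| * K + |b| * K := by
          rw [norm_smul, norm_smul]
          simp only [Real.norm_eq_abs]
          gcongr
          · exact h1 x hx
          · exact h2 x hx
      _ ≤ ‖(a,b)‖ * K + ‖(a,b)‖ * K := by gcongr
      _ = 2 * K * ‖(a,b)‖ := by ring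
  have := hs.norm_image_sub_le_of_norm_hasFDerivWithin_le
    (f' := fun x => if hx : x ∈ s then L x hx else 0)
    (fun x hx => by simpa only [dif_pos hx] using (hL x hx).hasFDerivWithinAt)
    (fun x hx => by simpa only [dif_pos hx] using bound x hx) hw hz
  simpa [Real.norm_eq_abs] using this

end Aux
noncomputable section Main
open Filter

/-- open square (-2,2)² -/
def UU : Set (ℝ×ℝ) := Ioo (-2:ℝ) 2 ×ˢ Ioo (-2:ℝ) 2

theorem UU_open : IsOpen UU := isOpen_Ioo.prod isOpen_Ioo

theorem UU_sub : UU ⊆ Sig2 := by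
  rintro ⟨x,y⟩ ⟨hx,hy⟩
  simp only [Sig2, Set.mem_Icc, Prod.mk_le_mk]
  constructor <;> constructor <;> linarith [hx.1, hx.2, hy.1, hy.2]

instance instNACG3 : NormedAddCommGroup ((ℝ × ℝ) →L[ℝ] ((ℝ × ℝ) →L[ℝ] ((ℝ × ℝ) →L[ℝ] ℝ))) :=
  ContinuousLinearMap.toNormedAddCommGroup (𝕜 := ℝ) (𝕜₂ := ℝ) (E := ℝ×ℝ) (F := ((ℝ × ℝ) →L[ℝ] ((ℝ × ℝ) →L[ℝ] ℝ)))
instance instNS3 : NormedSpace ℝ ((ℝ × ℝ) →L[ℝ] ((ℝ × ℝ) →L[ℝ] ((ℝ × ℝ) →L[ℝ] ℝ))) :=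
  ContinuousLinearMap.toNormedSpace (𝕜 := ℝ) (𝕜₂ := ℝ) (𝕜' := ℝ) (E := ℝ×ℝ) (F := ((ℝ × ℝ) →L[ℝ] ((ℝ × ℝ) →L[ℝ] ℝ)))

def D1 (φ : ℝ×ℝ → ℝ) := fderiv ℝ φ
def D2 (φ : ℝ×ℝ → ℝ) := fderiv ℝ (D1 φ)
def D3 (φ : ℝ×ℝ → ℝ) := fderiv ℝ (D2 φ)

variable {M : ℕ} {φ : ℝ×ℝ → ℝ}

theorem cast_le' {a b : ℕ} (h : a + 1 ≤ b) : ((a:ℕ∞) : WithTop ℕ∞) + 1 ≤ ((b:ℕ∞) : WithTop ℕ∞) := by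
  exact_mod_cast h

section
variable (hM : 3 ≤ M) (hsm : ContDiffOn ℝ M φ Sig2)
include hM hsm

set_option linter.unusedSectionVars false in
theorem contU : ContDiffOn ℝ M φ UU := hsm.mono UU_sub

theorem contD1 : ContDiffOn ℝ (M-1 : ℕ) (D1 φ) UU :=
  (contU hM hsm).fderiv_of_isOpen UU_open (by exact_mod_cast (show M-1+1 ≤ M by omega))

theorem contD2 : ContDiffOn ℝ (M-2 : ℕ) (D2 φ) UU :=
  (contD1 hM hsm).fderiv_of_isOpen UU_open (by exact_mod_cast (show M-2+1 ≤ M-1 by omega))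

theorem contD3 : ContDiffOn ℝ (M-3 : ℕ) (D3 φ) UU :=
  (contD2 hM hsm).fderiv_of_isOpen UU_open (by exact_mod_cast (show M-3+1 ≤ M-2 by omega))

theorem hasD1 : ∀ z ∈ UU, HasFDerivAt φ (D1 φ z) z := fun z hz =>
  (((contU hM hsm).contDiffAt (UU_open.mem_nhds hz)).differentiableAt
    (by exact_mod_cast (show M ≠ 0 by omega))).hasFDerivAt

theorem hasD2 : ∀ z ∈ UU, HasFDerivAt (D1 φ) (D2 φ z) z := fun z hz =>
  (((contD1 hM hsm).contDiffAt (UU_open.mem_nhds hz)).differentiableAt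
    (by exact_mod_cast (show M-1 ≠ 0 by omega))).hasFDerivAt

theorem hasD3 : ∀ z ∈ UU, HasFDerivAt (D2 φ) (D3 φ z) z := fun z hz =>
  (((contD2 hM hsm).contDiffAt (UU_open.mem_nhds hz)).differentiableAt
    (by exact_mod_cast (show M-2 ≠ 0 by omega))).hasFDerivAt

theorem hasD1v : ∀ z ∈ UU, ∀ v, HasFDerivAt (fun w => D1 φ w v) ((D2 φ z).flip v) z := by
  intro z hz v
  have := (hasD2 hM hsm z hz).clm_apply (hasFDerivAt_const v z)
  simpa using this

theorem hasD2vw : ∀ z ∈ UU, ∀ v w, HasFDerivAt (fun p => D2 φ p v w)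
    (((D3 φ z).flip v).flip w) z := by
  intro z hz v w
  have h1 : HasFDerivAt (fun p => D2 φ p v) ((D3 φ z).flip v) z := by
    have := (hasD3 hM hsm z hz).clm_apply (hasFDerivAt_const v z)
    simpa using this
  have := h1.clm_apply (hasFDerivAt_const w z)
  simpa using this

end
end Main
noncomputable section Reps
open Filter

theorem deriv_congr_Ioo {f g : ℝ → ℝ} {x : ℝ} (hx : x ∈ Ioo (-2:ℝ) 2)
    (h : ∀ t ∈ Ioo (-2:ℝ) 2, f t = g t) : deriv f x = deriv g x :=
  Filter.EventuallyEq.deriv_eq (by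
    filter_upwards [Ioo_mem_nhds hx.1 hx.2] with t ht using h t ht)

variable {M : ℕ} {φ : ℝ×ℝ → ℝ} (hM : 3 ≤ M) (hsm : ContDiffOn ℝ M φ Sig2)
include hM hsm

theorem px_eq : ∀ z ∈ UU, px φ z = D1 φ z (1,0) := by
  rintro ⟨x,y⟩ hz
  exact (sliceX (hasD1 hM hsm _ hz)).deriv

theorem py_eq : ∀ z ∈ UU, py φ z = D1 φ z (0,1) := by
  rintro ⟨x,y⟩ hz
  exact (sliceY (hasD1 hM hsm _ hz)).deriv

theorem pxx_eq : ∀ z ∈ UU, pxx φ z = D2 φ z (1,0) (1,0) := by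
  rintro ⟨x,y⟩ ⟨hx,hy⟩
  show deriv (fun t => px φ (t,y)) x = _
  rw [deriv_congr_Ioo hx (fun t ht => px_eq hM hsm (t,y) ⟨ht,hy⟩),
    (sliceX (hasD1v hM hsm (x,y) ⟨hx,hy⟩ (1,0))).deriv]
  rfl

theorem pxy_eq : ∀ z ∈ UU, pxy φ z = D2 φ z (0,1) (1,0) := by
  rintro ⟨x,y⟩ ⟨hx,hy⟩
  show deriv (fun t => px φ (x,t)) y = _
  rw [deriv_congr_Ioo hy (fun t ht => px_eq hM hsm (x,t) ⟨hx,ht⟩),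
    (sliceY (hasD1v hM hsm (x,y) ⟨hx,hy⟩ (1,0))).deriv]
  rfl

theorem pyy_eq : ∀ z ∈ UU, pyy φ z = D2 φ z (0,1) (0,1) := by
  rintro ⟨x,y⟩ ⟨hx,hy⟩
  show deriv (fun t => py φ (x,t)) y = _
  rw [deriv_congr_Ioo hy (fun t ht => py_eq hM hsm (x,t) ⟨hx,ht⟩),
    (sliceY (hasD1v hM hsm (x,y) ⟨hx,hy⟩ (0,1))).deriv]
  rfl

theorem pd11_eq : ∀ z ∈ UU, pd 1 1 φ z = D2 φ z (1,0) (0,1) := by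
  rintro ⟨x,y⟩ ⟨hx,hy⟩
  have h0 : pd 1 1 φ (x,y) = deriv (fun s => py φ (s, y)) x := by
    simp only [pd, iteratedDeriv_one]; rfl
  rw [h0, deriv_congr_Ioo hx (fun t ht => py_eq hM hsm (t,y) ⟨ht,hy⟩),
    (sliceX (hasD1v hM hsm (x,y) ⟨hx,hy⟩ (0,1))).deriv]
  rfl

theorem pd20_eq : ∀ z ∈ UU, pd 2 0 φ z = D2 φ z (1,0) (1,0) := by
  rintro ⟨x,y⟩ ⟨hx,hy⟩
  have h0 : pd 2 0 φ (x,y) = deriv (fun s => px φ (s, y)) x := by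
    simp only [pd, iteratedDeriv_zero, show (2:ℕ) = 1+1 from rfl, iteratedDeriv_succ,
      iteratedDeriv_one]
    rfl
  rw [h0]; exact pxx_eq hM hsm (x,y) ⟨hx,hy⟩

theorem pd02_eq : ∀ z ∈ UU, pd 0 2 φ z = D2 φ z (0,1) (0,1) := by
  rintro ⟨x,y⟩ ⟨hx,hy⟩
  have h0 : pd 0 2 φ (x,y) = deriv (fun s => py φ (x, s)) y := by
    simp only [pd, iteratedDeriv_zero, show (2:ℕ) = 1+1 from rfl, iteratedDeriv_succ,
      iteratedDeriv_one]
    rfl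
  rw [h0]; exact pyy_eq hM hsm (x,y) ⟨hx,hy⟩

theorem pd30_eq : ∀ z ∈ UU, pd 3 0 φ z = D3 φ z (1,0) (1,0) (1,0) := by
  rintro ⟨x,y⟩ ⟨hx,hy⟩
  have h0 : pd 3 0 φ (x,y) = deriv (fun s => pd 2 0 φ (s, y)) x := by
    simp only [pd, iteratedDeriv_zero, show (3:ℕ) = 2+1 from rfl, iteratedDeriv_succ]
  rw [h0, deriv_congr_Ioo hx (fun t ht => pd20_eq hM hsm (t,y) ⟨ht,hy⟩),
    (sliceX (hasD2vw hM hsm (x,y) ⟨hx,hy⟩ (1,0) (1,0))).deriv]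
  rfl

theorem pd21_eq : ∀ z ∈ UU, pd 2 1 φ z = D3 φ z (1,0) (1,0) (0,1) := by
  rintro ⟨x,y⟩ ⟨hx,hy⟩
  have h0 : pd 2 1 φ (x,y) = deriv (fun s => pd 1 1 φ (s, y)) x := by
    simp only [pd, show (2:ℕ) = 1+1 from rfl, iteratedDeriv_succ, iteratedDeriv_one]
  rw [h0, deriv_congr_Ioo hx (fun t ht => pd11_eq hM hsm (t,y) ⟨ht,hy⟩),
    (sliceX (hasD2vw hM hsm (x,y) ⟨hx,hy⟩ (1,0) (0,1))).deriv]
  rfl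

theorem pd12_eq : ∀ z ∈ UU, pd 1 2 φ z = D3 φ z (1,0) (0,1) (0,1) := by
  rintro ⟨x,y⟩ ⟨hx,hy⟩
  have h0 : pd 1 2 φ (x,y) = deriv (fun s => pd 0 2 φ (s, y)) x := by
    simp only [pd, iteratedDeriv_one, iteratedDeriv_zero]
  rw [h0, deriv_congr_Ioo hx (fun t ht => pd02_eq hM hsm (t,y) ⟨ht,hy⟩),
    (sliceX (hasD2vw hM hsm (x,y) ⟨hx,hy⟩ (0,1) (0,1))).deriv]
  rfl

theorem pd03_eq : ∀ z ∈ UU, pd 0 3 φ z = D3 φ z (0,1) (0,1) (0,1) := by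
  rintro ⟨x,y⟩ ⟨hx,hy⟩
  have h0 : pd 0 3 φ (x,y) = deriv (fun s => pd 0 2 φ (x, s)) y := by
    simp only [pd, iteratedDeriv_zero, show (3:ℕ) = 2+1 from rfl, iteratedDeriv_succ]
  rw [h0, deriv_congr_Ioo hy (fun t ht => pd02_eq hM hsm (x,t) ⟨hx,ht⟩),
    (sliceY (hasD2vw hM hsm (x,y) ⟨hx,hy⟩ (0,1) (0,1))).deriv]
  rfl

theorem sym2 : ∀ z ∈ UU, ∀ v w, D2 φ z v w = D2 φ z w v := fun z hz =>
  ((contU hM hsm).contDiffAt (UU_open.mem_nhds hz)).isSymmSndFDerivAt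
    (by rw [minSmoothness_of_isRCLikeNormedField]; exact_mod_cast (show 2 ≤ M by omega))

theorem sym3a : ∀ z ∈ UU, ∀ u v w, D3 φ z u v w = D3 φ z v u w := by
  intro z hz u v w
  have h := ((contD1 hM hsm).contDiffAt (UU_open.mem_nhds hz)).isSymmSndFDerivAt
    (by rw [minSmoothness_of_isRCLikeNormedField]; exact_mod_cast (show 2 ≤ M-1 by omega)) u v
  exact congrFun (congrArg _ h) w

theorem sym3b : ∀ z ∈ UU, ∀ u v w, D3 φ z u v w = D3 φ z u w v := by
  intro z hz u v w
  have h1 : ∀ a b : ℝ×ℝ, fderiv ℝ (fun p => D2 φ p a b) z = ((D3 φ z).flip a).flip b :=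
    fun a b => (hasD2vw hM hsm z hz a b).fderiv
  have h2 : (fun p => D2 φ p v w) =ᶠ[nhds z] (fun p => D2 φ p w v) := by
    filter_upwards [UU_open.mem_nhds hz] with p hp using sym2 hM hsm p hp v w
  have h3 := h2.fderiv_eq (𝕜 := ℝ)
  rw [h1 v w, h1 w v] at h3
  exact ContinuousLinearMap.ext_iff.1 h3 u

end Reps
noncomputable section Bounds
open Filter

/-- the box [-1.9,1.9]² -/
def CC : Set (ℝ×ℝ) := Icc (-1.9:ℝ) 1.9 ×ˢ Icc (-1.9:ℝ) 1.9

theorem CC_sub_UU : CC ⊆ UU := by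
  rintro ⟨x,y⟩ ⟨hx,hy⟩
  exact ⟨⟨by linarith [hx.1], by linarith [hx.2]⟩, ⟨by linarith [hy.1], by linarith [hy.2]⟩⟩

theorem CC_sub_Sig2 : CC ⊆ Sig2 := fun z hz => UU_sub (CC_sub_UU hz)

theorem CC_convex : Convex ℝ CC := (convex_Icc _ _).prod (convex_Icc _ _)

theorem zero_mem_CC : ((0:ℝ),(0:ℝ)) ∈ CC := by
  constructor <;> constructor <;> norm_num

theorem zero_mem_UU : ((0:ℝ),(0:ℝ)) ∈ UU := CC_sub_UU zero_mem_CC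

variable {M : ℕ} {φ : ℝ×ℝ → ℝ} (hM : 3 ≤ M) (hφ : Hyp M φ)
include hM hφ

theorem d3bound : ∀ z ∈ CC, ∀ u v w : ℝ×ℝ,
    (u = (1,0) ∨ u = (0,1)) → (v = (1,0) ∨ v = (0,1)) → (w = (1,0) ∨ w = (0,1)) →
    |D3 φ z u v w| ≤ 1/100000 := by
  have hsm := hφ.1
  have hbd := hφ.2.2.2.2.2.2.2
  intro z hz u v w hu hv hw
  have hzU := CC_sub_UU hz
  have hzS := CC_sub_Sig2 hz
  have h30 : |D3 φ z (1,0) (1,0) (1,0)| ≤ 1/100000 := by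
    rw [← pd30_eq hM hsm z hzU]; exact hbd 3 0 (by norm_num) (by omega) z hzS
  have h21 : |D3 φ z (1,0) (1,0) (0,1)| ≤ 1/100000 := by
    rw [← pd21_eq hM hsm z hzU]; exact hbd 2 1 (by norm_num) (by omega) z hzS
  have h12 : |D3 φ z (1,0) (0,1) (0,1)| ≤ 1/100000 := by
    rw [← pd12_eq hM hsm z hzU]; exact hbd 1 2 (by norm_num) (by omega) z hzS
  have h03 : |D3 φ z (0,1) (0,1) (0,1)| ≤ 1/100000 := by
    rw [← pd03_eq hM hsm z hzU]; exact hbd 0 3 (by norm_num) (by omega) z hzS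
  rcases hu with rfl|rfl <;> rcases hv with rfl|rfl <;> rcases hw with rfl|rfl
  · exact h30
  · exact h21
  · rw [sym3b hM hsm z hzU]; exact h21
  · exact h12
  · rw [sym3a hM hsm z hzU, sym3b hM hsm z hzU]; exact h21
  · rw [sym3a hM hsm z hzU]; exact h12
  · rw [sym3b hM hsm z hzU, sym3a hM hsm z hzU]; exact h12
  · exact h03

theorem d2diff : ∀ v w : ℝ×ℝ,
    (v = (1,0) ∨ v = (0,1)) → (w = (1,0) ∨ w = (0,1)) →
    ∀ z ∈ CC, |D2 φ z v w - D2 φ (0,0) v w| ≤ 4/100000 := by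
  intro v w hv hw z hz
  have key := mvt2 (f := fun p => D2 φ p v w) CC_convex (K := 1/100000) (by norm_num)
    (fun p hp => ⟨((D3 φ p).flip v).flip w, hasD2vw hM hφ.1 p (CC_sub_UU hp) v w,
      by simpa using d3bound hM hφ p hp _ v w (Or.inl rfl) hv hw,
      by simpa using d3bound hM hφ p hp _ v w (Or.inr rfl) hv hw⟩)
    hz zero_mem_CC
  have hn : ‖z - ((0:ℝ),(0:ℝ))‖ ≤ 1.9 := by
    obtain ⟨x,y⟩ := z
    obtain ⟨hx, hy⟩ := hz
    have : ((x,y) : ℝ×ℝ) - (0,0) = (x,y) := by simp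
    rw [this, Prod.norm_def]
    apply max_le <;> rw [Real.norm_eq_abs, abs_le] <;>
      exact ⟨by simp; linarith [hx.1, hy.1], by simp; linarith [hx.2, hy.2]⟩
  calc |D2 φ z v w - D2 φ (0,0) v w| ≤ 2 * (1/100000) * ‖z - ((0:ℝ),(0:ℝ))‖ := key
    _ ≤ 2 * (1/100000) * 1.9 := by gcongr
    _ ≤ 4/100000 := by norm_num

theorem d2zero : D2 φ (0,0) (1,0) (1,0) = 0 ∧ D2 φ (0,0) (0,1) (0,1) = 0 ∧
    D2 φ (0,0) (0,1) (1,0) = 1 ∧ D2 φ (0,0) (1,0) (0,1) = 1 := by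
  have hsm := hφ.1
  refine ⟨?_, ?_, ?_, ?_⟩
  · rw [← pxx_eq hM hsm _ zero_mem_UU]; exact hφ.2.2.2.2.1
  · rw [← pyy_eq hM hsm _ zero_mem_UU]; exact hφ.2.2.2.2.2.1
  · rw [← pxy_eq hM hsm _ zero_mem_UU]; exact hφ.2.2.2.2.2.2.1
  · rw [← sym2 hM hsm _ zero_mem_UU, ← pxy_eq hM hsm _ zero_mem_UU]
    exact hφ.2.2.2.2.2.2.1

theorem d2b : ∀ z ∈ CC, |D2 φ z (1,0) (1,0)| ≤ 4/100000 ∧ |D2 φ z (0,1) (0,1)| ≤ 4/100000 ∧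
    |D2 φ z (1,0) (0,1) - 1| ≤ 4/100000 ∧ |D2 φ z (0,1) (1,0) - 1| ≤ 4/100000 := by
  intro z hz
  obtain ⟨e1, e2, e3, e4⟩ := d2zero hM hφ
  refine ⟨?_, ?_, ?_, ?_⟩
  · have := d2diff hM hφ _ _ (Or.inl rfl) (Or.inl rfl) z hz; rwa [e1, sub_zero] at this
  · have := d2diff hM hφ _ _ (Or.inr rfl) (Or.inr rfl) z hz; rwa [e2, sub_zero] at this
  · have := d2diff hM hφ _ _ (Or.inl rfl) (Or.inr rfl) z hz; rwa [e4] at this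
  · have := d2diff hM hφ _ _ (Or.inr rfl) (Or.inl rfl) z hz; rwa [e3] at this

end Bounds
noncomputable section Tlayer
open Filter

/-- x-partial of tfun -/
def txf (φ : ℝ×ℝ → ℝ) (z₁ z : ℝ×ℝ) : ℝ :=
  D2 φ z (1,0) (0,1) - AA φ z₁ * D2 φ z (1,0) (1,0)
/-- y-partial of tfun -/
def tyf (φ : ℝ×ℝ → ℝ) (z₁ z : ℝ×ℝ) : ℝ :=
  D2 φ z (0,1) (0,1) - AA φ z₁ * D2 φ z (0,1) (1,0)

theorem Sig_sub_CC : Sig ⊆ CC := by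
  rintro ⟨x,y⟩ hz
  rw [Sig, Set.mem_Icc, Prod.mk_le_mk, Prod.mk_le_mk] at hz
  exact ⟨⟨by linarith [hz.1.1], by linarith [hz.2.1]⟩,
    ⟨by linarith [hz.1.2], by linarith [hz.2.2]⟩⟩

theorem Sig_compact : IsCompact Sig := isCompact_Icc

theorem Sig_nonempty : Sig.Nonempty := ⟨(0,0), by
  rw [Sig, Set.mem_Icc, Prod.mk_le_mk, Prod.mk_le_mk]; norm_num⟩

variable {M : ℕ} {φ : ℝ×ℝ → ℝ} {z₁ : ℝ×ℝ} (hM : 3 ≤ M) (hφ : Hyp M φ) (hz₁ : z₁ ∈ Sig)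
include hM hφ hz₁

theorem AAbound : |AA φ z₁| ≤ 3/100000 := by
  have hz := Sig_sub_CC hz₁
  have hzU := CC_sub_UU hz
  obtain ⟨b1, b2, b3, b4⟩ := d2b hM hφ z₁ hz
  have hsm := hφ.1
  have hxy : pxy φ z₁ = D2 φ z₁ (0,1) (1,0) := pxy_eq hM hsm z₁ hzU
  have hxx : pxx φ z₁ = D2 φ z₁ (1,0) (1,0) := pxx_eq hM hsm z₁ hzU
  have hyy : pyy φ z₁ = D2 φ z₁ (0,1) (0,1) := pyy_eq hM hsm z₁ hzU
  rw [abs_le] at b1 b2 b3 b4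
  have hH : (9:ℝ)/10 ≤ HH φ z₁ := by
    rw [HH, hxy, hxx, hyy]; nlinarith [b1.1, b1.2, b2.1, b2.2, b4.1, b4.2]
  have hsq : (9:ℝ)/10 ≤ Real.sqrt (HH φ z₁) := by
    have : ((9:ℝ)/10) ≤ Real.sqrt (9/10) := by
      nlinarith [Real.sq_sqrt (show (0:ℝ) ≤ 9/10 by norm_num), Real.sqrt_nonneg (9/10:ℝ)]
    exact this.trans (Real.sqrt_le_sqrt hH)
  have hden : (9:ℝ)/5 ≤ pxy φ z₁ + Real.sqrt (HH φ z₁) := by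
    rw [hxy]; linarith [b4.1]
  rw [AA, abs_div, abs_of_pos (by linarith : (0:ℝ) < pxy φ z₁ + Real.sqrt (HH φ z₁))]
  rw [div_le_iff₀ (by linarith)]
  have : |pyy φ z₁| ≤ 4/100000 := by rw [hyy, abs_le]; exact b2
  nlinarith [this]

theorem hasTt : ∀ z ∈ UU, HasFDerivAt (tfun φ z₁)
    ((D2 φ z).flip (0,1) - AA φ z₁ • (D2 φ z).flip (1,0)) z := by
  intro z hz
  have hsm := hφ.1
  have h1 : HasFDerivAt (fun w => (D1 φ w (0,1) - py φ z₁) - AA φ z₁ * (D1 φ w (1,0) - px φ z₁))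
      ((D2 φ z).flip (0,1) - AA φ z₁ • (D2 φ z).flip (1,0)) z := by
    have ha := (hasD1v hM hsm z hz (0,1)).sub_const (py φ z₁)
    have hb := ((hasD1v hM hsm z hz (1,0)).sub_const (px φ z₁)).const_mul (AA φ z₁)
    have := ha.sub hb
    exact this
  apply h1.congr_of_eventuallyEq
  filter_upwards [UU_open.mem_nhds hz] with w hw
  rw [tfun, px_eq hM hsm w hw, py_eq hM hsm w hw]

theorem hasTslice : ∀ z ∈ UU, HasDerivAt (fun s => tfun φ z₁ (s, z.2)) (txf φ z₁ z) z.1 ∧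
    HasDerivAt (fun s => tfun φ z₁ (z.1, s)) (tyf φ z₁ z) z.2 := by
  rintro ⟨x,y⟩ hz
  have h := hasTt hM hφ hz₁ (x,y) hz
  constructor
  · have := sliceX h
    exact this
  · have := sliceY h
    exact this

theorem txb : ∀ z ∈ CC, |txf φ z₁ z - 1| ≤ 5/100000 := by
  intro z hz
  obtain ⟨b1, b2, b3, b4⟩ := d2b hM hφ z hz
  have hA := AAbound hM hφ hz₁
  rw [txf]
  have h1 : |D2 φ z (1,0) (0,1) - AA φ z₁ * D2 φ z (1,0) (1,0) - 1|
      ≤ |D2 φ z (1,0) (0,1) - 1| + |AA φ z₁| * |D2 φ z (1,0) (1,0)| := by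
    rw [← abs_mul]
    calc _ = |(D2 φ z (1,0) (0,1) - 1) - AA φ z₁ * D2 φ z (1,0) (1,0)| := by ring_nf
      _ ≤ _ := abs_sub _ _
  calc _ ≤ |D2 φ z (1,0) (0,1) - 1| + |AA φ z₁| * |D2 φ z (1,0) (1,0)| := h1
    _ ≤ 4/100000 + (3/100000) * (4/100000) := by
        gcongr
    _ ≤ 5/100000 := by norm_num

theorem tyb : ∀ z ∈ CC, |tyf φ z₁ z| ≤ 8/100000 := by
  intro z hz
  obtain ⟨b1, b2, b3, b4⟩ := d2b hM hφ z hz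
  have hA := AAbound hM hφ hz₁
  rw [tyf]
  have h1 : |D2 φ z (0,1) (0,1) - AA φ z₁ * D2 φ z (0,1) (1,0)|
      ≤ |D2 φ z (0,1) (0,1)| + |AA φ z₁| * |D2 φ z (0,1) (1,0)| := by
    rw [← abs_mul]; exact abs_sub _ _
  have h2 : |D2 φ z (0,1) (1,0)| ≤ 1 + 4/100000 := by
    have := abs_sub_abs_le_abs_sub (D2 φ z (0,1) (1,0)) 1
    simp only [abs_one] at this
    linarith [b4]
  calc _ ≤ |D2 φ z (0,1) (0,1)| + |AA φ z₁| * |D2 φ z (0,1) (1,0)| := h1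
    _ ≤ 4/100000 + (3/100000) * (1 + 4/100000) := by gcongr
    _ ≤ 8/100000 := by norm_num

set_option linter.unusedSectionVars false in
theorem contT : ContDiffOn ℝ (M-1 : ℕ) (tfun φ z₁) UU := by
  have hsm := hφ.1
  have h1 : ContDiffOn ℝ (M-1 : ℕ) (fun z => D1 φ z (1,0)) UU :=
    (contD1 hM hsm).clm_apply contDiffOn_const
  have h2 : ContDiffOn ℝ (M-1 : ℕ) (fun z => D1 φ z (0,1)) UU :=
    (contD1 hM hsm).clm_apply contDiffOn_const
  have h3 : ContDiffOn ℝ (M-1 : ℕ)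
      (fun w => (D1 φ w (0,1) - py φ z₁) - AA φ z₁ * (D1 φ w (1,0) - px φ z₁)) UU :=
    (h2.sub contDiffOn_const).sub (contDiffOn_const.mul (h1.sub contDiffOn_const))
  exact h3.congr (fun w hw => by rw [tfun, px_eq hM hsm w hw, py_eq hM hsm w hw])

end Tlayer
noncomputable section Geom
open Filter

def alf (φ : ℝ×ℝ → ℝ) (z₁ : ℝ×ℝ) : ℝ := sInf (tfun φ z₁ '' Sig)
def bef (φ : ℝ×ℝ → ℝ) (z₁ : ℝ×ℝ) : ℝ := sSup (tfun φ z₁ '' Sig)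
def VV (φ : ℝ×ℝ → ℝ) (z₁ : ℝ×ℝ) : Set (ℝ×ℝ) :=
  Ioo (alf φ z₁ - 1/10) (bef φ z₁ + 1/10) ×ˢ Ioo (-1.2:ℝ) 1.2

theorem VV_open {φ : ℝ×ℝ → ℝ} {z₁ : ℝ×ℝ} : IsOpen (VV φ z₁) := isOpen_Ioo.prod isOpen_Ioo

variable {M : ℕ} {φ : ℝ×ℝ → ℝ} {z₁ : ℝ×ℝ} (hM : 3 ≤ M) (hφ : Hyp M φ) (hz₁ : z₁ ∈ Sig)
include hM hφ hz₁

theorem memCC' {x y : ℝ} (hx : x ∈ Icc (-1.7:ℝ) 1.7) (hy : y ∈ Icc (-1.2:ℝ) 1.2) :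
    ((x,y) : ℝ×ℝ) ∈ CC :=
  ⟨⟨by linarith [hx.1], by linarith [hx.2]⟩, ⟨by linarith [hy.1], by linarith [hy.2]⟩⟩

theorem contSliceX : ∀ y ∈ Icc (-1.2:ℝ) 1.2,
    ContinuousOn (fun x => tfun φ z₁ (x, y)) (Icc (-1.7:ℝ) 1.7) := by
  intro y hy x hx
  exact ((hasTslice hM hφ hz₁ (x,y) (CC_sub_UU (memCC' hM hφ hz₁ hx hy))).1).continuousAt.continuousWithinAt

theorem monoX : ∀ y ∈ Icc (-1.2:ℝ) 1.2,
    StrictMonoOn (fun x => tfun φ z₁ (x, y)) (Icc (-1.7:ℝ) 1.7) := by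
  intro y hy
  apply strictMonoOn_of_deriv_pos (convex_Icc _ _) (contSliceX hM hφ hz₁ y hy)
  intro x hx
  rw [interior_Icc] at hx
  have hmem : ((x,y) : ℝ×ℝ) ∈ CC := memCC' hM hφ hz₁ ⟨hx.1.le, hx.2.le⟩ hy
  rw [((hasTslice hM hφ hz₁ (x,y) (CC_sub_UU hmem)).1).deriv]
  have := txb hM hφ hz₁ (x,y) hmem
  rw [abs_le] at this
  linarith [this.1]

theorem growX : ∀ y ∈ Icc (-1.2:ℝ) 1.2, ∀ x1 x2 : ℝ, -1.7 ≤ x1 → x1 ≤ x2 → x2 ≤ 1.7 →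
    (1 - 5/100000) * (x2 - x1) ≤ tfun φ z₁ (x2, y) - tfun φ z₁ (x1, y) := by
  intro y hy x1 x2 h1 h12 h2
  set g : ℝ → ℝ := fun x => tfun φ z₁ (x, y) - (1 - 5/100000) * x with hg
  have hder : ∀ x ∈ Icc (-1.7:ℝ) 1.7,
      HasDerivAt g (txf φ z₁ (x,y) - (1 - 5/100000)) x := by
    intro x hx
    have h2 : HasDerivAt (fun x : ℝ => (1 - 5/100000) * x) (1 - 5/100000) x := by
      simpa using (hasDerivAt_id x).const_mul (1 - 5/100000 : ℝ)
    exact ((hasTslice hM hφ hz₁ (x,y) (CC_sub_UU (memCC' hM hφ hz₁ hx hy))).1).sub h2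
  have hmono : MonotoneOn g (Icc (-1.7:ℝ) 1.7) := by
    apply monotoneOn_of_deriv_nonneg (convex_Icc _ _)
    · exact fun x hx => (hder x hx).continuousAt.continuousWithinAt
    · intro x hx
      rw [interior_Icc] at hx
      exact ((hder x ⟨hx.1.le, hx.2.le⟩).differentiableAt).differentiableWithinAt
    · intro x hx
      rw [interior_Icc] at hx
      rw [(hder x ⟨hx.1.le, hx.2.le⟩).deriv]
      have := txb hM hφ hz₁ (x,y) (memCC' hM hφ hz₁ ⟨hx.1.le, hx.2.le⟩ hy)
      rw [abs_le] at this
      linarith [this.1]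
  have := hmono ⟨h1, by linarith⟩ ⟨by linarith, h2⟩ h12
  simp only [hg] at this
  linarith [this]

theorem varY : ∀ x ∈ Icc (-1.7:ℝ) 1.7, ∀ y1 ∈ Icc (-1.2:ℝ) 1.2, ∀ y2 ∈ Icc (-1.2:ℝ) 1.2,
    |tfun φ z₁ (x, y2) - tfun φ z₁ (x, y1)| ≤ (8/100000) * |y2 - y1| := by
  intro x hx y1 hy1 y2 hy2
  have key := (convex_Icc (-1.2:ℝ) 1.2).norm_image_sub_le_of_norm_hasDerivWithin_le
    (f := fun s => tfun φ z₁ (x, s)) (f' := fun s => tyf φ z₁ (x, s))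
    (fun s hs => ((hasTslice hM hφ hz₁ (x,s) (CC_sub_UU (memCC' hM hφ hz₁ hx hs))).2).hasDerivWithinAt)
    (fun s hs => by
      rw [Real.norm_eq_abs]
      exact tyb hM hφ hz₁ (x,s) (memCC' hM hφ hz₁ hx hs))
    hy1 hy2
  simpa [Real.norm_eq_abs] using key

theorem tz₁_zero : tfun φ z₁ z₁ = 0 := by simp [tfun]

theorem Sig_mem_bounds : ∀ u ∈ Sig, alf φ z₁ ≤ tfun φ z₁ u ∧ tfun φ z₁ u ≤ bef φ z₁ := by
  have hc : IsCompact (tfun φ z₁ '' Sig) :=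
    Sig_compact.image_of_continuousOn ((contT hM hφ hz₁).continuousOn.mono
      (fun u hu => CC_sub_UU (Sig_sub_CC hu)))
  intro u hu
  exact ⟨csInf_le hc.bddBelow (mem_image_of_mem _ hu),
    le_csSup hc.bddAbove (mem_image_of_mem _ hu)⟩

theorem al_le_be : alf φ z₁ ≤ 0 ∧ 0 ≤ bef φ z₁ := by
  have := Sig_mem_bounds hM hφ hz₁ z₁ hz₁
  rw [tz₁_zero hM hφ hz₁] at this
  exact this

theorem endHigh : ∀ y ∈ Icc (-1.2:ℝ) 1.2, bef φ z₁ + 1/10 < tfun φ z₁ (1.6, y) := by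
  intro y hy
  have hcont : ContinuousOn (tfun φ z₁) Sig := (contT hM hφ hz₁).continuousOn.mono
      (fun u hu => CC_sub_UU (Sig_sub_CC hu))
  obtain ⟨w, hwS, hw⟩ := Sig_compact.exists_isMaxOn Sig_nonempty hcont
  have hbe : bef φ z₁ = tfun φ z₁ w := by
    apply IsGreatest.csSup_eq
    exact ⟨mem_image_of_mem _ hwS, by rintro _ ⟨u, hu, rfl⟩; exact hw hu⟩
  have hwmem : w.1 ∈ Icc (-1:ℝ) 1 ∧ w.2 ∈ Icc (-1:ℝ) 1 := by
    rw [Sig, Set.mem_Icc, Prod.mk_le_mk, Prod.mk_le_mk] at hwS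
    exact ⟨⟨hwS.1.1, hwS.2.1⟩, ⟨hwS.1.2, hwS.2.2⟩⟩
  have hw2 : w.2 ∈ Icc (-1.2:ℝ) 1.2 := ⟨by linarith [hwmem.2.1], by linarith [hwmem.2.2]⟩
  have hgrow := growX hM hφ hz₁ w.2 hw2 w.1 1.6 (by linarith [hwmem.1.1]) (by linarith [hwmem.1.2]) (by norm_num)
  have hvar := varY hM hφ hz₁ 1.6 (by norm_num) w.2 hw2 y hy
  have habs : |y - w.2| ≤ 2.4 := by
    rw [abs_le]; constructor <;> linarith [hy.1, hy.2, hw2.1, hw2.2]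
  have h1 : tfun φ z₁ (1.6, y) ≥ tfun φ z₁ (1.6, w.2) - (8/100000) * 2.4 := by
    have := (abs_le.1 hvar).1
    nlinarith [abs_nonneg (y - w.2)]
  have heta : tfun φ z₁ (w.1, w.2) = tfun φ z₁ w := by rw [Prod.mk.eta]
  rw [hbe]
  have hx1 : w.1 ≤ 1 := hwmem.1.2
  nlinarith [hgrow, h1, heta]

theorem endLow : ∀ y ∈ Icc (-1.2:ℝ) 1.2, tfun φ z₁ (-1.6, y) < alf φ z₁ - 1/10 := by
  intro y hy
  have hcont : ContinuousOn (tfun φ z₁) Sig := (contT hM hφ hz₁).continuousOn.mono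
      (fun u hu => CC_sub_UU (Sig_sub_CC hu))
  obtain ⟨w, hwS, hw⟩ := Sig_compact.exists_isMinOn Sig_nonempty hcont
  have hbe : alf φ z₁ = tfun φ z₁ w := by
    apply IsLeast.csInf_eq
    exact ⟨mem_image_of_mem _ hwS, by rintro _ ⟨u, hu, rfl⟩; exact hw hu⟩
  have hwmem : w.1 ∈ Icc (-1:ℝ) 1 ∧ w.2 ∈ Icc (-1:ℝ) 1 := by
    rw [Sig, Set.mem_Icc, Prod.mk_le_mk, Prod.mk_le_mk] at hwS
    exact ⟨⟨hwS.1.1, hwS.2.1⟩, ⟨hwS.1.2, hwS.2.2⟩⟩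
  have hw2 : w.2 ∈ Icc (-1.2:ℝ) 1.2 := ⟨by linarith [hwmem.2.1], by linarith [hwmem.2.2]⟩
  have hgrow := growX hM hφ hz₁ w.2 hw2 (-1.6) w.1 (by norm_num) (by linarith [hwmem.1.1]) (by linarith [hwmem.1.2])
  have hvar := varY hM hφ hz₁ (-1.6) (by norm_num) w.2 hw2 y hy
  have habs : |y - w.2| ≤ 2.4 := by
    rw [abs_le]; constructor <;> linarith [hy.1, hy.2, hw2.1, hw2.2]
  have h1 : tfun φ z₁ (-1.6, y) ≤ tfun φ z₁ (-1.6, w.2) + (8/100000) * 2.4 := by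
    have := (abs_le.1 hvar).2
    nlinarith [abs_nonneg (y - w.2)]
  have heta : tfun φ z₁ (w.1, w.2) = tfun φ z₁ w := by rw [Prod.mk.eta]
  rw [hbe]
  have hx1 : -1 ≤ w.1 := hwmem.1.1
  nlinarith [hgrow, h1, heta]

theorem exuniq : ∀ p : ℝ×ℝ, p ∈ VV φ z₁ →
    ∃ x, (x ∈ Ioo (-1.6:ℝ) 1.6 ∧ tfun φ z₁ (x, p.2) = p.1) ∧
      ∀ x', x' ∈ Ioo (-1.6:ℝ) 1.6 → tfun φ z₁ (x', p.2) = p.1 → x' = x := by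
  rintro ⟨v, y⟩ ⟨hv, hy⟩
  have hy' : y ∈ Icc (-1.2:ℝ) 1.2 := ⟨hy.1.le, hy.2.le⟩
  have hsub : Icc (-1.6:ℝ) 1.6 ⊆ Icc (-1.7:ℝ) 1.7 := Icc_subset_Icc (by norm_num) (by norm_num)
  have hivt := intermediate_value_Ioo (by norm_num : (-1.6:ℝ) ≤ 1.6)
    ((contSliceX hM hφ hz₁ y hy').mono hsub)
  have hmem : v ∈ Ioo (tfun φ z₁ (-1.6, y)) (tfun φ z₁ (1.6, y)) := by
    constructor
    · exact lt_trans (endLow hM hφ hz₁ y hy') hv.1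
    · exact lt_trans hv.2 (endHigh hM hφ hz₁ y hy')
  obtain ⟨x, hxI, hxv⟩ := hivt hmem
  refine ⟨x, ⟨hxI, hxv⟩, ?_⟩
  intro x' hx'I hx'v
  have hmono := monoX hM hφ hz₁ y hy'
  exact hmono.injOn (hsub (Ioo_subset_Icc_self hx'I)) (hsub (Ioo_subset_Icc_self hxI))
    (hx'v.trans hxv.symm)

end Geom
noncomputable section Smooth
open Filter

variable {M : ℕ} {φ : ℝ×ℝ → ℝ} {z₁ : ℝ×ℝ} (hM : 3 ≤ M) (hφ : Hyp M φ) (hz₁ : z₁ ∈ Sig)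
include hM hφ hz₁

set_option maxHeartbeats 2000000 in
theorem hsmooth {h : ℝ×ℝ → ℝ}
    (hprop : ∀ p ∈ VV φ z₁, h p ∈ Ioo (-1.6:ℝ) 1.6 ∧ tfun φ z₁ (h p, p.2) = p.1)
    (huniq : ∀ p ∈ VV φ z₁, ∀ x' ∈ Ioo (-1.6:ℝ) 1.6, tfun φ z₁ (x', p.2) = p.1 → x' = h p) :
    ∀ p₀ ∈ VV φ z₁, ContDiffAt ℝ (M-1 : ℕ) h p₀ ∧
      |deriv (fun s => h (p₀.1, s)) p₀.2| ≤ 1/1000 ∧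
      |deriv (fun s => h (s, p₀.2)) p₀.1 - 1| ≤ 1/1000 := by
  intro p₀ hp₀
  obtain ⟨hI₀, hv₀⟩ := hprop p₀ hp₀
  set z₀ : ℝ×ℝ := (h p₀, p₀.2) with hz₀def
  have hz₀CC : z₀ ∈ CC := memCC' hM hφ hz₁ ⟨by linarith [hI₀.1], by linarith [hI₀.2]⟩
    ⟨hp₀.2.1.le, hp₀.2.2.le⟩
  have hz₀U : z₀ ∈ UU := CC_sub_UU hz₀CC
  set a : ℝ := txf φ z₁ z₀ with hadef
  set b : ℝ := tyf φ z₁ z₀ with hbdef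
  have haB := txb hM hφ hz₁ z₀ hz₀CC
  have hbB := tyb hM hφ hz₁ z₀ hz₀CC
  rw [abs_le] at haB hbB
  have ha : (0:ℝ) < a := by simp only [← hadef] at haB ⊢; linarith [haB.1]
  have hane : a ≠ 0 := ne_of_gt ha
  set Lt : ℝ×ℝ →L[ℝ] ℝ := (D2 φ z₀).flip (0,1) - AA φ z₁ • (D2 φ z₀).flip (1,0) with hLt
  have hT : HasFDerivAt (tfun φ z₁) Lt z₀ := hasTt hM hφ hz₁ z₀ hz₀U
  have hLt1 : Lt (1,0) = a := by
    simp [hLt, hadef, txf, ContinuousLinearMap.smul_apply]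
  have hLt2 : Lt (0,1) = b := by
    simp [hLt, hbdef, tyf, ContinuousLinearMap.smul_apply]
  -- the map G and its derivative
  set G : ℝ×ℝ → ℝ×ℝ := fun w => (tfun φ z₁ w, w.2) with hGdef
  set G' : ℝ×ℝ →L[ℝ] ℝ×ℝ := Lt.prod (ContinuousLinearMap.snd ℝ ℝ ℝ) with hG'def
  have hG' : HasFDerivAt G G' z₀ := hT.prodMk (hasFDerivAt_snd)
  set Gi : ℝ×ℝ →L[ℝ] ℝ×ℝ :=
    (a⁻¹ • (ContinuousLinearMap.fst ℝ ℝ ℝ - b • ContinuousLinearMap.snd ℝ ℝ ℝ)).prod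
      (ContinuousLinearMap.snd ℝ ℝ ℝ) with hGidef
  have hfor : ∀ w : ℝ×ℝ, G' w = (w.1 * a + w.2 * b, w.2) := by
    rintro ⟨u, w⟩
    have : Lt (u, w) = u • Lt (1,0) + w • Lt (0,1) := clm_two Lt u w
    simp only [hG'def, ContinuousLinearMap.prod_apply, ContinuousLinearMap.coe_snd']
    rw [this, hLt1, hLt2]
    simp [smul_eq_mul]
  have hinv1 : Function.LeftInverse Gi G' := by
    rintro ⟨u, w⟩
    rw [hfor]
    simp only [hGidef, ContinuousLinearMap.prod_apply, ContinuousLinearMap.coe_snd',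
      ContinuousLinearMap.smul_apply, ContinuousLinearMap.sub_apply,
      ContinuousLinearMap.coe_fst']
    refine Prod.ext ?_ rfl
    simp only [smul_eq_mul]
    field_simp
    ring
  have hinv2 : Function.RightInverse Gi G' := by
    rintro ⟨u, w⟩
    have : Gi (u, w) = (a⁻¹ * (u - b * w), w) := by
      simp [hGidef, smul_eq_mul]
    rw [this, hfor]
    refine Prod.ext ?_ rfl
    simp only [smul_eq_mul]
    field_simp
    ring
  set e : (ℝ×ℝ) ≃L[ℝ] (ℝ×ℝ) := ContinuousLinearEquiv.equivOfInverse G' Gi hinv1 hinv2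
    with hedef
  have hecoe : (e : ℝ×ℝ →L[ℝ] ℝ×ℝ) = G' := rfl
  have hGe : HasFDerivAt G (e : ℝ×ℝ →L[ℝ] ℝ×ℝ) z₀ := by rw [hecoe]; exact hG'
  have hGc : ContDiffAt ℝ (M-1 : ℕ) G z₀ :=
    (((contT hM hφ hz₁).contDiffAt (UU_open.mem_nhds hz₀U)).prodMk contDiffAt_snd)
  have hn : ((M-1 : ℕ) : WithTop ℕ∞) ≠ 0 := by
    exact_mod_cast (show M-1 ≠ 0 by omega)
  set inv : ℝ×ℝ → ℝ×ℝ := hGc.localInverse hGe hn with hinvdef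
  have hGz₀ : G z₀ = p₀ := by
    refine Prod.ext ?_ rfl
    exact hv₀
  have hinvz₀ : inv p₀ = z₀ := by
    have := hGc.localInverse_apply_image hGe hn
    rwa [hGz₀] at this
  have hinvCD : ContDiffAt ℝ (M-1 : ℕ) inv p₀ := by
    have := hGc.to_localInverse hGe hn
    rwa [hGz₀] at this
  have hinvCont : ContinuousAt inv p₀ := hinvCD.continuousAt
  -- eventually h p = (inv p).1
  have ev1 : ∀ᶠ p in nhds p₀, G (inv p) = p := by
    have := (hGc.hasStrictFDerivAt' hGe hn).eventually_right_inverse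
    rwa [hGz₀] at this
  have ev3 : ∀ᶠ p in nhds p₀, inv p ∈ Ioo (-1.6:ℝ) 1.6 ×ˢ Ioo (-1.2:ℝ) 1.2 := by
    apply hinvCont.preimage_mem_nhds
    apply (isOpen_Ioo.prod isOpen_Ioo).mem_nhds
    rw [hinvz₀]
    exact ⟨hI₀, ⟨hp₀.2.1, hp₀.2.2⟩⟩
  have ev4 : ∀ᶠ p in nhds p₀, p ∈ VV φ z₁ := VV_open.mem_nhds hp₀
  have hev : ∀ᶠ p in nhds p₀, h p = (inv p).1 := by
    filter_upwards [ev1, ev3, ev4] with p h1 h3 h4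
    have h2nd : (inv p).2 = p.2 := by
      have := congrArg Prod.snd h1; exact this
    have h1st : tfun φ z₁ (inv p) = p.1 := by
      have := congrArg Prod.fst h1; exact this
    have : tfun φ z₁ ((inv p).1, p.2) = p.1 := by
      rw [← h2nd, Prod.mk.eta]
      exact h1st
    exact (huniq p h4 (inv p).1 h3.1 this).symm
  have hCD : ContDiffAt ℝ (M-1 : ℕ) h p₀ := by
    have h1 : ContDiffAt ℝ (M-1 : ℕ) (fun p => (inv p).1) p₀ :=
      contDiffAt_fst.comp p₀ hinvCD
    exact h1.congr_of_eventuallyEq hev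
  -- differentiability of h at p₀
  have hdiff : DifferentiableAt ℝ h p₀ := hCD.differentiableAt (by exact_mod_cast (show M-1 ≠ 0 by omega))
  have hDh := hdiff.hasFDerivAt
  obtain ⟨v₀, y₀⟩ := p₀
  have sx : HasDerivAt (fun s => h (s, y₀)) (fderiv ℝ h (v₀,y₀) (1,0)) v₀ := sliceX hDh
  have sy : HasDerivAt (fun s => h (v₀, s)) (fderiv ℝ h (v₀,y₀) (0,1)) y₀ := sliceY hDh
  -- x-derivative identity
  have evx : ∀ᶠ s in nhds v₀, tfun φ z₁ (h (s, y₀), y₀) = s := by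
    have hc : ContinuousAt (fun s : ℝ => ((s, y₀) : ℝ×ℝ)) v₀ :=
      (continuous_id.prodMk continuous_const).continuousAt
    filter_upwards [hc.preimage_mem_nhds (VV_open.mem_nhds hp₀)] with s hs
    exact (hprop (s, y₀) hs).2
  have evy : ∀ᶠ s in nhds y₀, tfun φ z₁ (h (v₀, s), s) = v₀ := by
    have hc : ContinuousAt (fun s : ℝ => ((v₀, s) : ℝ×ℝ)) y₀ :=
      (continuous_const.prodMk continuous_id).continuousAt
    filter_upwards [hc.preimage_mem_nhds (VV_open.mem_nhds hp₀)] with s hs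
    exact (hprop (v₀, s) hs).2
  have cx : HasDerivAt (fun s => tfun φ z₁ (h (s, y₀), y₀))
      (Lt (fderiv ℝ h (v₀,y₀) (1,0), 0)) v₀ :=
    by have := hT.comp_hasDerivAt v₀ (sx.prodMk (hasDerivAt_const v₀ y₀)); exact this
  have cy : HasDerivAt (fun s => tfun φ z₁ (h (v₀, s), s))
      (Lt (fderiv ℝ h (v₀,y₀) (0,1), 1)) y₀ := by
    have := hT.comp_hasDerivAt_of_eq (f := fun s : ℝ => ((h (v₀, s), s) : ℝ×ℝ))
      y₀ (sy.prodMk (hasDerivAt_id' (x := y₀))) rfl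
    exact this
  have idx : Lt (fderiv ℝ h (v₀,y₀) (1,0), 0) = 1 := by
    have h1 : HasDerivAt (fun s : ℝ => s) (Lt (fderiv ℝ h (v₀,y₀) (1,0), 0)) v₀ :=
      cx.congr_of_eventuallyEq (by filter_upwards [evx] with s hs using hs.symm)
    exact h1.unique (hasDerivAt_id v₀)
  have idy : Lt (fderiv ℝ h (v₀,y₀) (0,1), 1) = 0 := by
    have h1 : HasDerivAt (fun _ : ℝ => v₀) (Lt (fderiv ℝ h (v₀,y₀) (0,1), 1)) y₀ :=
      cy.congr_of_eventuallyEq (by filter_upwards [evy] with s hs using hs.symm)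
    exact h1.unique (hasDerivAt_const y₀ v₀)
  have expand1 : Lt (fderiv ℝ h (v₀,y₀) (1,0), 0)
      = fderiv ℝ h (v₀,y₀) (1,0) * a := by
    rw [clm_two Lt, hLt1, hLt2]; simp [smul_eq_mul]
  have expand2 : Lt (fderiv ℝ h (v₀,y₀) (0,1), 1)
      = fderiv ℝ h (v₀,y₀) (0,1) * a + b := by
    rw [clm_two Lt, hLt1, hLt2]; simp [smul_eq_mul]
  rw [expand1] at idx
  rw [expand2] at idy
  refine ⟨hCD, ?_, ?_⟩
  · -- |h_y| ≤ 1/1000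
    rw [sy.deriv]
    have : fderiv ℝ h (v₀,y₀) (0,1) = -b / a := by
      field_simp
      linarith [idy]
    rw [this, abs_div, abs_neg, abs_of_pos ha, div_le_iff₀ ha]
    have hb' : |b| ≤ 8/100000 := abs_le.2 hbB
    nlinarith [haB.1, hb']
  · -- |h_v - 1| ≤ 1/1000
    rw [sx.deriv]
    have : fderiv ℝ h (v₀,y₀) (1,0) = 1 / a := by
      field_simp
      linarith [idx]
    rw [this]
    have key : (1:ℝ)/a - 1 = (1-a)/a := by field_simp
    rw [key, abs_div, abs_of_pos ha, div_le_iff₀ ha]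
    have h1a : |1 - a| ≤ 5/100000 := by rw [abs_sub_comm]; exact abs_le.2 haB
    nlinarith [haB.1, h1a]

end Smooth

set_option maxHeartbeats 1000000 in
/-- Level-curve fibration: there is a `C^{M-1}` function `h` on `[α,β] × [-1,1]`
(`α, β` the min and max of `t_{z₁}` on `Σ`) with `t_{z₁}(h(v,y), y) = v`, such that
`(v,y) ↦ (h(v,y), y)` is an injective `C^{M-1}` map whose image `Σ_{z₁}` satisfies
`Σ ⊆ Σ_{z₁} ⊆ 2Σ`, and `|h_y| ≤ 10⁻³`, `|h_v − 1| ≤ 10⁻³`. -/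
theorem level_curve_fibration
    (M : ℕ) (hM : 3 ≤ M)
    (φ : ℝ × ℝ → ℝ) (hφ : Hyp M φ) (z₁ : ℝ × ℝ) (hz₁ : z₁ ∈ Sig) :
    ∃ h : ℝ × ℝ → ℝ,
      ContDiffOn ℝ (M - 1) h
        (Set.Icc (sInf (tfun φ z₁ '' Sig)) (sSup (tfun φ z₁ '' Sig)) ×ˢ Set.Icc (-1 : ℝ) 1) ∧
      (∀ p ∈ Set.Icc (sInf (tfun φ z₁ '' Sig)) (sSup (tfun φ z₁ '' Sig)) ×ˢ
          Set.Icc (-1 : ℝ) 1,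
        tfun φ z₁ (h p, p.2) = p.1) ∧
      Set.InjOn (fun p => (h p, p.2))
        (Set.Icc (sInf (tfun φ z₁ '' Sig)) (sSup (tfun φ z₁ '' Sig)) ×ˢ Set.Icc (-1 : ℝ) 1) ∧
      Sig ⊆ (fun p => (h p, p.2)) ''
        (Set.Icc (sInf (tfun φ z₁ '' Sig)) (sSup (tfun φ z₁ '' Sig)) ×ˢ Set.Icc (-1 : ℝ) 1) ∧
      (fun p => (h p, p.2)) ''
        (Set.Icc (sInf (tfun φ z₁ '' Sig)) (sSup (tfun φ z₁ '' Sig)) ×ˢ Set.Icc (-1 : ℝ) 1)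
        ⊆ Sig2 ∧
      (∀ p ∈ Set.Icc (sInf (tfun φ z₁ '' Sig)) (sSup (tfun φ z₁ '' Sig)) ×ˢ
          Set.Icc (-1 : ℝ) 1,
        |deriv (fun s => h (p.1, s)) p.2| ≤ 1 / 1000 ∧
        |deriv (fun s => h (s, p.2)) p.1 - 1| ≤ 1 / 1000) := by
  have halbe := al_le_be hM hφ hz₁
  have hRV : Set.Icc (sInf (tfun φ z₁ '' Sig)) (sSup (tfun φ z₁ '' Sig)) ×ˢ Set.Icc (-1 : ℝ) 1
      ⊆ VV φ z₁ := by
    rintro ⟨v, y⟩ ⟨hv, hy⟩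
    simp only [Set.mem_Icc] at hv hy
    constructor
    · constructor
      · show alf φ z₁ - 1/10 < v
        have : alf φ z₁ ≤ v := hv.1
        linarith
      · show v < bef φ z₁ + 1/10
        have : v ≤ bef φ z₁ := hv.2
        linarith
    · exact ⟨by linarith [hy.1], by linarith [hy.2]⟩
  obtain ⟨hex⟩ : Nonempty (∀ p : ℝ×ℝ, p ∈ VV φ z₁ →
      ∃ x, (x ∈ Ioo (-1.6:ℝ) 1.6 ∧ tfun φ z₁ (x, p.2) = p.1) ∧
        ∀ x', x' ∈ Ioo (-1.6:ℝ) 1.6 → tfun φ z₁ (x', p.2) = p.1 → x' = x) :=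
    ⟨exuniq hM hφ hz₁⟩
  choose! h hh1 hh2 using hex
  have hprop : ∀ p ∈ VV φ z₁, h p ∈ Ioo (-1.6:ℝ) 1.6 ∧ tfun φ z₁ (h p, p.2) = p.1 :=
    fun p hp => hh1 p hp
  have huniq : ∀ p ∈ VV φ z₁, ∀ x' ∈ Ioo (-1.6:ℝ) 1.6, tfun φ z₁ (x', p.2) = p.1 → x' = h p :=
    fun p hp x' hx' ht => hh2 p hp x' hx' ht
  have hs := hsmooth hM hφ hz₁ hprop huniq
  refine ⟨h, ?_, ?_, ?_, ?_, ?_, ?_⟩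
  · exact fun p hp => ((hs p (hRV hp)).1).contDiffWithinAt
  · exact fun p hp => (hprop p (hRV hp)).2
  · intro p hp q hq heq
    simp only at heq
    have e2 : p.2 = q.2 := by
      have := congrArg Prod.snd heq; exact this
    have e1 : p.1 = q.1 := by
      rw [← (hprop p (hRV hp)).2, ← (hprop q (hRV hq)).2, heq]
    exact Prod.ext e1 e2
  · intro w hw
    have hwm : (-1 ≤ w.1 ∧ w.1 ≤ 1) ∧ (-1 ≤ w.2 ∧ w.2 ≤ 1) := by
      rw [Sig, Set.mem_Icc, Prod.mk_le_mk, Prod.mk_le_mk] at hw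
      exact ⟨⟨hw.1.1, hw.2.1⟩, ⟨hw.1.2, hw.2.2⟩⟩
    have hb := Sig_mem_bounds hM hφ hz₁ w hw
    have hpR : ((tfun φ z₁ w, w.2) : ℝ×ℝ) ∈
        Set.Icc (sInf (tfun φ z₁ '' Sig)) (sSup (tfun φ z₁ '' Sig)) ×ˢ Set.Icc (-1 : ℝ) 1 :=
      ⟨⟨hb.1, hb.2⟩, ⟨hwm.2.1, hwm.2.2⟩⟩
    have hpV := hRV hpR
    have hval : tfun φ z₁ (w.1, (tfun φ z₁ w, w.2).2) = (tfun φ z₁ w, w.2).1 := by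
      show tfun φ z₁ (w.1, w.2) = tfun φ z₁ w
      rw [Prod.mk.eta]
    have hhp : w.1 = h (tfun φ z₁ w, w.2) :=
      huniq _ hpV w.1 ⟨by linarith [hwm.1.1], by linarith [hwm.1.2]⟩ hval
    refine ⟨(tfun φ z₁ w, w.2), hpR, ?_⟩
    show (h (tfun φ z₁ w, w.2), w.2) = w
    rw [← hhp, Prod.mk.eta]
  · rintro _ ⟨p, hp, rfl⟩
    have hIoo := (hprop p (hRV hp)).1
    have hy : p.2 ∈ Set.Icc (-1:ℝ) 1 := hp.2
    show ((h p, p.2) : ℝ×ℝ) ∈ Sig2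
    rw [Sig2, Set.mem_Icc, Prod.mk_le_mk, Prod.mk_le_mk]
    refine ⟨⟨?_, ?_⟩, ⟨?_, ?_⟩⟩ <;> [skip; exact (by linarith [hy.1]); skip; exact (by linarith [hy.2])]
    · linarith [hIoo.1]
    · linarith [hIoo.2]
  · exact fun p hp => (hs p (hRV hp)).2
end

section
/- In the setting of the previous level-curve lemma, if z = (h(v,y), y) lies on a level curve of t with tangent vector X_z := (h_y(v,y), 1), then h_y(v,y) = −(φ_{yy}(z) − A(z₁)φ_{xy}(z))/(φ_{xy}(z) − A(z₁)φ_{xx}(z)). Consequently, if λ > 0 and |A(z) − A(z₁)| ≤ λ, then |h_y(v,y) + A(z₁)| ≤ 3λ, i.e. |X_z − (−A(z₁), 1)| ≤ 3λ. -/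
open Real Set Matrix

namespace LCD
noncomputable section

def e1 : ℝ × ℝ := (1, 0)
def e2 : ℝ × ℝ := (0, 1)

lemma hasDerivAt_slice_x {f : ℝ×ℝ → ℝ} {G : (ℝ×ℝ) →L[ℝ] ℝ} {x y : ℝ}
    (hf : HasFDerivAt f G (x, y)) : HasDerivAt (fun t => f (t, y)) (G e1) x := by
  have h1 : HasDerivAt (fun t : ℝ => (t, y)) e1 x := by
    simpa [e1] using (HasDerivAt.prodMk (hasDerivAt_id x) (hasDerivAt_const x y))
  exact hf.comp_hasDerivAt x h1

lemma hasDerivAt_slice_y {f : ℝ×ℝ → ℝ} {G : (ℝ×ℝ) →L[ℝ] ℝ} {x y : ℝ}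
    (hf : HasFDerivAt f G (x, y)) : HasDerivAt (fun t => f (x, t)) (G e2) y := by
  have h1 : HasDerivAt (fun t : ℝ => (x, t)) e2 y := by
    simpa [e2] using (HasDerivAt.prodMk (hasDerivAt_const y x) (hasDerivAt_id y))
  exact hf.comp_hasDerivAt y h1

lemma hasFDerivAt_apply_const {M : Type*} [NormedAddCommGroup M] [NormedSpace ℝ M]
    {F : ℝ×ℝ → (ℝ×ℝ) →L[ℝ] M} {F' : (ℝ×ℝ) →L[ℝ] ((ℝ×ℝ) →L[ℝ] M)} {w : ℝ×ℝ}
    (h : HasFDerivAt F F' w) (v : ℝ×ℝ) :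
    HasFDerivAt (fun u => F u v) (F'.flip v) w := by
  simpa using h.clm_apply (hasFDerivAt_const v w)

lemma deriv_congr_on {g G : ℝ → ℝ} {s : Set ℝ} (ho : IsOpen s) (h : Set.EqOn g G s)
    {x : ℝ} (hx : x ∈ s) : deriv g x = deriv G x :=
  Filter.EventuallyEq.deriv_eq (Filter.eventuallyEq_of_mem (ho.mem_nhds hx) h)

def U2 : Set (ℝ×ℝ) := Set.Ioo (-2:ℝ) 2 ×ˢ Set.Ioo (-2:ℝ) 2

lemma isOpen_U2 : IsOpen U2 := isOpen_Ioo.prod isOpen_Ioo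

lemma U2_subset_Sig2 : U2 ⊆ Sig2 := by
  rintro ⟨a, b⟩ ⟨ha, hb⟩
  simp only [Set.mem_prod, Set.mem_Ioo] at *
  exact ⟨⟨ha.1.le, hb.1.le⟩, ⟨ha.2.le, hb.2.le⟩⟩

lemma Sig_subset_U2 : Sig ⊆ U2 := by
  rintro ⟨a, b⟩ hab
  simp only [Sig, Set.mem_Icc, Prod.le_def] at hab
  simp only [U2, Set.mem_prod, Set.mem_Ioo]
  obtain ⟨⟨h1, h2⟩, h3, h4⟩ := hab
  constructor <;> constructor <;> linarith


lemma sx_open (zy : ℝ) : IsOpen {x : ℝ | (x, zy) ∈ U2} :=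
  isOpen_U2.preimage (continuous_id.prodMk continuous_const)

lemma sy_open (zx : ℝ) : IsOpen {y : ℝ | (zx, y) ∈ U2} :=
  isOpen_U2.preimage (continuous_const.prodMk continuous_id)


lemma opNorm_le_two {L : (ℝ×ℝ) →L[ℝ] ℝ} {c : ℝ}
    (h1 : |L e1| ≤ c) (h2 : |L e2| ≤ c) : ‖L‖ ≤ 2 * c := by
  have hc : 0 ≤ c := le_trans (abs_nonneg _) h1
  refine ContinuousLinearMap.opNorm_le_bound L (by linarith) (fun u => ?_)
  obtain ⟨a, b⟩ := u
  have hab : (a, b) = a • e1 + b • e2 := by simp [e1, e2, Prod.ext_iff]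
  have ha : |a| ≤ ‖(a, b)‖ := by
    simpa [Real.norm_eq_abs] using norm_fst_le ((a, b) : ℝ×ℝ)
  have hb : |b| ≤ ‖(a, b)‖ := by
    simpa [Real.norm_eq_abs] using norm_snd_le ((a, b) : ℝ×ℝ)
  calc ‖L (a, b)‖ = |a * L e1 + b * L e2| := by
        rw [hab]; simp [Real.norm_eq_abs]
    _ ≤ |a| * |L e1| + |b| * |L e2| := by
        refine (abs_add_le _ _).trans ?_; simp [abs_mul]
    _ ≤ ‖(a, b)‖ * c + ‖(a, b)‖ * c := by
        gcongr
    _ = 2 * c * ‖(a, b)‖ := by ring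

lemma zero_mem_Sig : ((0, 0) : ℝ×ℝ) ∈ Sig := by
  norm_num [Sig, Set.mem_Icc, Prod.le_def]

lemma convex_Sig : Convex ℝ Sig := by
  rw [Sig, Set.Icc_prod_eq]
  exact (convex_Icc _ _).prod (convex_Icc _ _)

lemma norm_le_one_of_mem_Sig {w : ℝ×ℝ} (hw : w ∈ Sig) : ‖w‖ ≤ 1 := by
  obtain ⟨a, b⟩ := w
  simp only [Sig, Set.mem_Icc, Prod.le_def] at hw
  rw [Prod.norm_def]
  simp only [Real.norm_eq_abs]
  rw [max_le_iff]
  constructor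
  · rw [abs_le]; exact ⟨hw.1.1, hw.2.1⟩
  · rw [abs_le]; exact ⟨hw.1.2, hw.2.2⟩

lemma mvt_on_Sig {g : ℝ×ℝ → ℝ} {D : ℝ×ℝ → (ℝ×ℝ) →L[ℝ] ℝ} {c : ℝ} (hc : 0 ≤ c)
    (hg : ∀ w ∈ U2, HasFDerivAt g (D w) w)
    (hD : ∀ w ∈ Sig, ‖D w‖ ≤ c) {w : ℝ×ℝ} (hw : w ∈ Sig) :
    |g w - g (0, 0)| ≤ c := by
  have key := convex_Sig.norm_image_sub_le_of_norm_hasFDerivWithin_le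
    (fun x hx => (hg x (Sig_subset_U2 hx)).hasFDerivWithinAt) hD zero_mem_Sig hw
  have hn : ‖w - ((0, 0) : ℝ×ℝ)‖ ≤ 1 := by
    rw [show ((0, 0) : ℝ×ℝ) = 0 from rfl, sub_zero]; exact norm_le_one_of_mem_Sig hw
  calc |g w - g (0, 0)| = ‖g w - g (0, 0)‖ := (Real.norm_eq_abs _).symm
    _ ≤ c * ‖w - ((0, 0) : ℝ×ℝ)‖ := key
    _ ≤ c * 1 := by gcongr
    _ = c := mul_one c

variable {f : ℝ×ℝ → ℝ}

section C3
variable (hf : ContDiffOn ℝ 3 f U2)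

-- First, second, third derivatives
include hf

lemma hd1 {w : ℝ×ℝ} (hw : w ∈ U2) : HasFDerivAt f (fderiv ℝ f w) w :=
  (((hf.differentiableOn (by norm_num)).differentiableAt
    (isOpen_U2.mem_nhds hw))).hasFDerivAt

lemma hC2 : ContDiffOn ℝ 2 (fderiv ℝ f) U2 :=
  hf.fderiv_of_isOpen isOpen_U2 (by norm_num)

lemma hd2 {w : ℝ×ℝ} (hw : w ∈ U2) :
    HasFDerivAt (fderiv ℝ f) (fderiv ℝ (fderiv ℝ f) w) w :=
  (((hC2 hf).differentiableOn (by norm_num)).differentiableAt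
    (isOpen_U2.mem_nhds hw)).hasFDerivAt

lemma hd3 {w : ℝ×ℝ} (hw : w ∈ U2) :
    HasFDerivAt (fderiv ℝ (fderiv ℝ f)) (fderiv ℝ (fderiv ℝ (fderiv ℝ f)) w) w :=
  ((((hC2 hf).fderiv_of_isOpen (m := 1) isOpen_U2 (by norm_num)).differentiableOn
    (by norm_num)).differentiableAt (isOpen_U2.mem_nhds hw)).hasFDerivAt


lemma px_eq {w : ℝ×ℝ} (hw : w ∈ U2) : px f w = fderiv ℝ f w e1 := by
  obtain ⟨x, y⟩ := w
  exact (hasDerivAt_slice_x (hd1 hf hw)).deriv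

lemma py_eq {w : ℝ×ℝ} (hw : w ∈ U2) : py f w = fderiv ℝ f w e2 := by
  obtain ⟨x, y⟩ := w
  exact (hasDerivAt_slice_y (hd1 hf hw)).deriv

lemma Hpx {w : ℝ×ℝ} (hw : w ∈ U2) :
    HasFDerivAt (px f) ((fderiv ℝ (fderiv ℝ f) w).flip e1) w := by
  refine (hasFDerivAt_apply_const (hd2 hf hw) e1).congr_of_eventuallyEq ?_
  filter_upwards [isOpen_U2.mem_nhds hw] with u hu
  exact px_eq hf hu

lemma Hpy {w : ℝ×ℝ} (hw : w ∈ U2) :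
    HasFDerivAt (py f) ((fderiv ℝ (fderiv ℝ f) w).flip e2) w := by
  refine (hasFDerivAt_apply_const (hd2 hf hw) e2).congr_of_eventuallyEq ?_
  filter_upwards [isOpen_U2.mem_nhds hw] with u hu
  exact py_eq hf hu

lemma pxx_eq {w : ℝ×ℝ} (hw : w ∈ U2) :
    pxx f w = fderiv ℝ (fderiv ℝ f) w e1 e1 := by
  obtain ⟨x, y⟩ := w
  simpa [pxx] using (hasDerivAt_slice_x (Hpx hf hw)).deriv

lemma pxy_eq {w : ℝ×ℝ} (hw : w ∈ U2) :
    pxy f w = fderiv ℝ (fderiv ℝ f) w e2 e1 := by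
  obtain ⟨x, y⟩ := w
  simpa [pxy] using (hasDerivAt_slice_y (Hpx hf hw)).deriv

lemma pyy_eq {w : ℝ×ℝ} (hw : w ∈ U2) :
    pyy f w = fderiv ℝ (fderiv ℝ f) w e2 e2 := by
  obtain ⟨x, y⟩ := w
  simpa [pyy] using (hasDerivAt_slice_y (Hpy hf hw)).deriv

lemma sym2 {w : ℝ×ℝ} (hw : w ∈ U2) (u v : ℝ×ℝ) :
    fderiv ℝ (fderiv ℝ f) w u v = fderiv ℝ (fderiv ℝ f) w v u := by
  refine second_derivative_symmetric_of_eventually (f := f) ?_ (hd2 hf hw) u v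
  filter_upwards [isOpen_U2.mem_nhds hw] with p hp using hd1 hf hp

lemma Hf2ab {w : ℝ×ℝ} (hw : w ∈ U2) (a b : ℝ×ℝ) :
    HasFDerivAt (fun p => fderiv ℝ (fderiv ℝ f) p a b)
      (((fderiv ℝ (fderiv ℝ (fderiv ℝ f)) w).flip a).flip b) w :=
  hasFDerivAt_apply_const (hasFDerivAt_apply_const (hd3 hf hw) a) b

lemma sym3a {w : ℝ×ℝ} (hw : w ∈ U2) (u v a : ℝ×ℝ) :
    fderiv ℝ (fderiv ℝ (fderiv ℝ f)) w u v a
      = fderiv ℝ (fderiv ℝ (fderiv ℝ f)) w v u a := by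
  have h : fderiv ℝ (fderiv ℝ (fderiv ℝ f)) w u v
      = fderiv ℝ (fderiv ℝ (fderiv ℝ f)) w v u := by
    refine second_derivative_symmetric_of_eventually (f := fderiv ℝ f) ?_ (hd3 hf hw) u v
    filter_upwards [isOpen_U2.mem_nhds hw] with p hp using hd2 hf hp
  exact congrArg (fun L => L a) h

lemma sym3b {w : ℝ×ℝ} (hw : w ∈ U2) (u a b : ℝ×ℝ) :
    fderiv ℝ (fderiv ℝ (fderiv ℝ f)) w u a b
      = fderiv ℝ (fderiv ℝ (fderiv ℝ f)) w u b a := by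
  have A := Hf2ab hf hw a b
  have C : HasFDerivAt (fun p => fderiv ℝ (fderiv ℝ f) p a b)
      (((fderiv ℝ (fderiv ℝ (fderiv ℝ f)) w).flip b).flip a) w := by
    refine (Hf2ab hf hw b a).congr_of_eventuallyEq ?_
    filter_upwards [isOpen_U2.mem_nhds hw] with p hp using sym2 hf hp a b
  have h := A.unique C
  exact congrArg (fun L => L u) h

lemma Hpxx {w : ℝ×ℝ} (hw : w ∈ U2) :
    HasFDerivAt (pxx f)
      (((fderiv ℝ (fderiv ℝ (fderiv ℝ f)) w).flip e1).flip e1) w := by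
  refine (Hf2ab hf hw e1 e1).congr_of_eventuallyEq ?_
  filter_upwards [isOpen_U2.mem_nhds hw] with u hu
  exact pxx_eq hf hu

lemma Hpxy {w : ℝ×ℝ} (hw : w ∈ U2) :
    HasFDerivAt (pxy f)
      (((fderiv ℝ (fderiv ℝ (fderiv ℝ f)) w).flip e2).flip e1) w := by
  refine (Hf2ab hf hw e2 e1).congr_of_eventuallyEq ?_
  filter_upwards [isOpen_U2.mem_nhds hw] with u hu
  exact pxy_eq hf hu

lemma Hpyy {w : ℝ×ℝ} (hw : w ∈ U2) :
    HasFDerivAt (pyy f)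
      (((fderiv ℝ (fderiv ℝ (fderiv ℝ f)) w).flip e2).flip e2) w := by
  refine (Hf2ab hf hw e2 e2).congr_of_eventuallyEq ?_
  filter_upwards [isOpen_U2.mem_nhds hw] with u hu
  exact pyy_eq hf hu


lemma pd30 {z : ℝ×ℝ} (hz : z ∈ U2) :
    pd 3 0 f z = fderiv ℝ (fderiv ℝ (fderiv ℝ f)) z e1 e1 e1 := by
  obtain ⟨zx, zy⟩ := z
  have hsx : IsOpen {x : ℝ | (x, zy) ∈ U2} := sx_open zy
  have E1 : Set.EqOn (deriv (fun x => f (x, zy))) (fun x => fderiv ℝ f (x, zy) e1)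
      {x : ℝ | (x, zy) ∈ U2} := fun x hx => (hasDerivAt_slice_x (hd1 hf hx)).deriv
  have F1 : Set.EqOn (deriv (deriv (fun x => f (x, zy))))
      (fun x => fderiv ℝ (fderiv ℝ f) (x, zy) e1 e1) {x : ℝ | (x, zy) ∈ U2} := by
    intro x hx
    refine (deriv_congr_on hsx E1 hx).trans ?_
    simpa using (hasDerivAt_slice_x (hasFDerivAt_apply_const (hd2 hf hx) e1)).deriv
  have E3 : deriv (fun x => fderiv ℝ (fderiv ℝ f) (x, zy) e1 e1) zx
      = fderiv ℝ (fderiv ℝ (fderiv ℝ f)) (zx, zy) e1 e1 e1 := by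
    simpa using (hasDerivAt_slice_x (Hf2ab hf hz e1 e1)).deriv
  have hpd : pd 3 0 f (zx, zy) = deriv (deriv (deriv (fun x => f (x, zy)))) zx := by
    simp [pd, iteratedDeriv_succ, iteratedDeriv_zero]
  rw [hpd, deriv_congr_on hsx F1 hz, E3]

lemma pd21 {z : ℝ×ℝ} (hz : z ∈ U2) :
    pd 2 1 f z = fderiv ℝ (fderiv ℝ (fderiv ℝ f)) z e1 e1 e2 := by
  obtain ⟨zx, zy⟩ := z
  have hsx : IsOpen {x : ℝ | (x, zy) ∈ U2} := sx_open zy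
  have E1 : Set.EqOn (fun x => deriv (fun y => f (x, y)) zy)
      (fun x => fderiv ℝ f (x, zy) e2)
      {x : ℝ | (x, zy) ∈ U2} := fun x hx => (hasDerivAt_slice_y (hd1 hf hx)).deriv
  have F1 : Set.EqOn (deriv (fun x => deriv (fun y => f (x, y)) zy))
      (fun x => fderiv ℝ (fderiv ℝ f) (x, zy) e1 e2) {x : ℝ | (x, zy) ∈ U2} := by
    intro x hx
    refine (deriv_congr_on hsx E1 hx).trans ?_
    simpa using (hasDerivAt_slice_x (hasFDerivAt_apply_const (hd2 hf hx) e2)).deriv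
  have E3 : deriv (fun x => fderiv ℝ (fderiv ℝ f) (x, zy) e1 e2) zx
      = fderiv ℝ (fderiv ℝ (fderiv ℝ f)) (zx, zy) e1 e1 e2 := by
    simpa using (hasDerivAt_slice_x (Hf2ab hf hz e1 e2)).deriv
  have hpd : pd 2 1 f (zx, zy)
      = deriv (deriv (fun x => deriv (fun y => f (x, y)) zy)) zx := by
    simp [pd, iteratedDeriv_succ, iteratedDeriv_zero]
  rw [hpd, deriv_congr_on hsx F1 hz, E3]

lemma pd12 {z : ℝ×ℝ} (hz : z ∈ U2) :
    pd 1 2 f z = fderiv ℝ (fderiv ℝ (fderiv ℝ f)) z e1 e2 e2 := by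
  obtain ⟨zx, zy⟩ := z
  have hsx : IsOpen {x : ℝ | (x, zy) ∈ U2} := sx_open zy
  have E0 : Set.EqOn (fun x => iteratedDeriv 2 (fun y => f (x, y)) zy)
      (fun x => fderiv ℝ (fderiv ℝ f) (x, zy) e2 e2) {x : ℝ | (x, zy) ∈ U2} := by
    intro x hx
    have hsy : IsOpen {y : ℝ | (x, y) ∈ U2} := sy_open x
    have G1 : Set.EqOn (deriv (fun y => f (x, y))) (fun y => fderiv ℝ f (x, y) e2)
        {y : ℝ | (x, y) ∈ U2} := fun y hy => (hasDerivAt_slice_y (hd1 hf hy)).deriv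
    have : iteratedDeriv 2 (fun y => f (x, y)) zy
        = deriv (deriv (fun y => f (x, y))) zy := by
      simp [iteratedDeriv_succ, iteratedDeriv_zero]
    simp only [Set.mem_setOf_eq] at hx
    show iteratedDeriv 2 (fun y => f (x, y)) zy = _
    rw [this]
    refine (deriv_congr_on hsy G1 hx).trans ?_
    simpa using (hasDerivAt_slice_y (hasFDerivAt_apply_const (hd2 hf hx) e2)).deriv
  have E3 : deriv (fun x => fderiv ℝ (fderiv ℝ f) (x, zy) e2 e2) zx
      = fderiv ℝ (fderiv ℝ (fderiv ℝ f)) (zx, zy) e1 e2 e2 := by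
    simpa using (hasDerivAt_slice_x (Hf2ab hf hz e2 e2)).deriv
  have hpd : pd 1 2 f (zx, zy)
      = deriv (fun x => iteratedDeriv 2 (fun y => f (x, y)) zy) zx := by
    simp [pd, iteratedDeriv_succ, iteratedDeriv_zero]
  rw [hpd, deriv_congr_on hsx E0 hz, E3]

lemma pd03 {z : ℝ×ℝ} (hz : z ∈ U2) :
    pd 0 3 f z = fderiv ℝ (fderiv ℝ (fderiv ℝ f)) z e2 e2 e2 := by
  obtain ⟨zx, zy⟩ := z
  have hsy : IsOpen {y : ℝ | (zx, y) ∈ U2} := sy_open zx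
  have E1 : Set.EqOn (deriv (fun y => f (zx, y))) (fun y => fderiv ℝ f (zx, y) e2)
      {y : ℝ | (zx, y) ∈ U2} := fun y hy => (hasDerivAt_slice_y (hd1 hf hy)).deriv
  have F1 : Set.EqOn (deriv (deriv (fun y => f (zx, y))))
      (fun y => fderiv ℝ (fderiv ℝ f) (zx, y) e2 e2) {y : ℝ | (zx, y) ∈ U2} := by
    intro y hy
    refine (deriv_congr_on hsy E1 hy).trans ?_
    simpa using (hasDerivAt_slice_y (hasFDerivAt_apply_const (hd2 hf hy) e2)).deriv
  have E3 : deriv (fun y => fderiv ℝ (fderiv ℝ f) (zx, y) e2 e2) zy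
      = fderiv ℝ (fderiv ℝ (fderiv ℝ f)) (zx, zy) e2 e2 e2 := by
    simpa using (hasDerivAt_slice_y (Hf2ab hf hz e2 e2)).deriv
  have hpd : pd 0 3 f (zx, zy) = deriv (deriv (deriv (fun y => f (zx, y)))) zy := by
    simp [pd, iteratedDeriv_succ, iteratedDeriv_zero]
  rw [hpd, deriv_congr_on hsy F1 hz, E3]


section Bounds

variable (hb : ∀ a b : ℕ, 3 ≤ a + b → a + b ≤ 3 → ∀ z ∈ Sig2, |pd a b f z| ≤ 1/100000)
include hb

lemma b111 {u : ℝ×ℝ} (hu : u ∈ U2) :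
    |fderiv ℝ (fderiv ℝ (fderiv ℝ f)) u e1 e1 e1| ≤ 1/100000 := by
  rw [← pd30 hf hu]; exact hb 3 0 (by norm_num) (by norm_num) u (U2_subset_Sig2 hu)

lemma b112 {u : ℝ×ℝ} (hu : u ∈ U2) :
    |fderiv ℝ (fderiv ℝ (fderiv ℝ f)) u e1 e1 e2| ≤ 1/100000 := by
  rw [← pd21 hf hu]; exact hb 2 1 (by norm_num) (by norm_num) u (U2_subset_Sig2 hu)

lemma b122 {u : ℝ×ℝ} (hu : u ∈ U2) :
    |fderiv ℝ (fderiv ℝ (fderiv ℝ f)) u e1 e2 e2| ≤ 1/100000 := by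
  rw [← pd12 hf hu]; exact hb 1 2 (by norm_num) (by norm_num) u (U2_subset_Sig2 hu)

lemma b222 {u : ℝ×ℝ} (hu : u ∈ U2) :
    |fderiv ℝ (fderiv ℝ (fderiv ℝ f)) u e2 e2 e2| ≤ 1/100000 := by
  rw [← pd03 hf hu]; exact hb 0 3 (by norm_num) (by norm_num) u (U2_subset_Sig2 hu)

lemma pxx_close {w : ℝ×ℝ} (hw : w ∈ Sig) : |pxx f w - pxx f (0, 0)| ≤ 2/100000 := by
  have key : ∀ u ∈ Sig,
      ‖((fderiv ℝ (fderiv ℝ (fderiv ℝ f)) u).flip e1).flip e1‖ ≤ 2 * (1/100000) := by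
    intro u hu
    have hu2 : u ∈ U2 := Sig_subset_U2 hu
    refine opNorm_le_two ?_ ?_
    · simpa [ContinuousLinearMap.flip_apply] using b111 hf hb hu2
    · have : fderiv ℝ (fderiv ℝ (fderiv ℝ f)) u e2 e1 e1
          = fderiv ℝ (fderiv ℝ (fderiv ℝ f)) u e1 e1 e2 := by
        rw [sym3a hf hu2 e2 e1 e1, sym3b hf hu2 e1 e2 e1]
      simpa [ContinuousLinearMap.flip_apply, this] using b112 hf hb hu2
  have := mvt_on_Sig (c := 2 * (1/100000)) (by norm_num)
    (fun u hu => Hpxx hf hu) key hw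
  linarith [this]

lemma pxy_close {w : ℝ×ℝ} (hw : w ∈ Sig) : |pxy f w - pxy f (0, 0)| ≤ 2/100000 := by
  have key : ∀ u ∈ Sig,
      ‖((fderiv ℝ (fderiv ℝ (fderiv ℝ f)) u).flip e2).flip e1‖ ≤ 2 * (1/100000) := by
    intro u hu
    have hu2 : u ∈ U2 := Sig_subset_U2 hu
    refine opNorm_le_two ?_ ?_
    · have : fderiv ℝ (fderiv ℝ (fderiv ℝ f)) u e1 e2 e1
          = fderiv ℝ (fderiv ℝ (fderiv ℝ f)) u e1 e1 e2 := sym3b hf hu2 e1 e2 e1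
      simpa [ContinuousLinearMap.flip_apply, this] using b112 hf hb hu2
    · have : fderiv ℝ (fderiv ℝ (fderiv ℝ f)) u e2 e2 e1
          = fderiv ℝ (fderiv ℝ (fderiv ℝ f)) u e1 e2 e2 := by
        rw [sym3b hf hu2 e2 e2 e1, sym3a hf hu2 e2 e1 e2]
      simpa [ContinuousLinearMap.flip_apply, this] using b122 hf hb hu2
  have := mvt_on_Sig (c := 2 * (1/100000)) (by norm_num)
    (fun u hu => Hpxy hf hu) key hw
  linarith [this]

lemma pyy_close {w : ℝ×ℝ} (hw : w ∈ Sig) : |pyy f w - pyy f (0, 0)| ≤ 2/100000 := by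
  have key : ∀ u ∈ Sig,
      ‖((fderiv ℝ (fderiv ℝ (fderiv ℝ f)) u).flip e2).flip e2‖ ≤ 2 * (1/100000) := by
    intro u hu
    have hu2 : u ∈ U2 := Sig_subset_U2 hu
    refine opNorm_le_two ?_ ?_
    · simpa [ContinuousLinearMap.flip_apply] using b122 hf hb hu2
    · simpa [ContinuousLinearMap.flip_apply] using b222 hf hb hu2
  have := mvt_on_Sig (c := 2 * (1/100000)) (by norm_num)
    (fun u hu => Hpyy hf hu) key hw
  linarith [this]

end Bounds

end C3

theorem quad_aux_LCD {P Q R A : ℝ} (hP : |P| ≤ 2/100000) (hQ : |Q - 1| ≤ 2/100000)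
    (hR : |R| ≤ 2/100000) (hA : A = R / (Q + Real.sqrt (Q^2 - P*R))) :
    |A| ≤ 1/10000 ∧ P * A^2 - 2*Q*A + R = 0 := by
  have h1 : (1:ℝ)/2 ≤ Q^2 - P*R := by
    have := abs_le.mp hP; have := abs_le.mp hQ; have := abs_le.mp hR
    nlinarith
  set s := Real.sqrt (Q^2 - P*R) with hs
  have hs0 : 0 ≤ s := Real.sqrt_nonneg _
  have hs2 : s^2 = Q^2 - P*R := Real.sq_sqrt (by linarith)
  have hsge : (7:ℝ)/10 ≤ s := by
    nlinarith [hs2, hs0]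
  have hden : (1:ℝ) < Q + s := by
    have := abs_le.mp hQ; linarith
  have hdpos : (0:ℝ) < Q + s := by linarith
  constructor
  · rw [hA, abs_div, abs_of_pos hdpos, div_le_iff₀ hdpos]
    have := abs_le.mp hR
    nlinarith [abs_le.mp hR]
  · have hne : Q + s ≠ 0 := ne_of_gt hdpos
    have hA' : A * (Q + s) = R := by rw [hA]; field_simp
    have hPA : P * A = Q - s := by
      have h2 : (P * A) * (Q + s) = (Q - s) * (Q + s) := by
        linear_combination P * hA' + hs2
      exact mul_right_cancel₀ hne h2
    linear_combination A * hPA - hA'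

end
end LCD





/-- Direction of level curves: if `h` parametrizes the level curves of `t_{z₁}`, then
`h_y = −(φ_{yy} − A(z₁)φ_{xy})/(φ_{xy} − A(z₁)φ_{xx})` at `z = (h(v,y), y)`, and if
`|A(z) − A(z₁)| ≤ λ` (with `0 < λ ≤ 1`) then `|h_y + A(z₁)| ≤ 3λ`, i.e. the tangent
vector `X_z = (h_y, 1)` satisfies `|X_z − (−A(z₁),1)| ≤ 3λ`. -/
theorem level_curve_direction
    (φ : ℝ × ℝ → ℝ) (hφ : Hyp 3 φ) (z₁ : ℝ × ℝ) (hz₁ : z₁ ∈ Sig)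
    (h : ℝ × ℝ → ℝ) (v y : ℝ) (hy : y ∈ Set.Ioo (-1 : ℝ) 1)
    (hlevel : ∀ s ∈ Set.Icc (-1 : ℝ) 1, tfun φ z₁ (h (v, s), s) = v)
    (hdiff : DifferentiableAt ℝ (fun s => h (v, s)) y)
    (hz : (h (v, y), y) ∈ Sig) :
    deriv (fun s => h (v, s)) y
        = -((pyy φ (h (v, y), y) - AA φ z₁ * pxy φ (h (v, y), y)) /
            (pxy φ (h (v, y), y) - AA φ z₁ * pxx φ (h (v, y), y))) ∧
    ∀ lam : ℝ, 0 < lam → lam ≤ 1 →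
      |AA φ (h (v, y), y) - AA φ z₁| ≤ lam →
      |deriv (fun s => h (v, s)) y + AA φ z₁| ≤ 3 * lam := by
  classical
  obtain ⟨hcd, hφ0, hpx0, hpy0, hpxx0, hpyy0, hpxy0, hb⟩ := hφ
  have hf : ContDiffOn ℝ 3 φ LCD.U2 := by
    have := hcd.mono LCD.U2_subset_Sig2
    exact_mod_cast this
  have hb' : ∀ a b : ℕ, 3 ≤ a + b → a + b ≤ 3 → ∀ z ∈ Sig2, |pd a b φ z| ≤ 1/100000 := hb
  set z : ℝ × ℝ := (h (v, y), y) with hzdef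
  have hzU : z ∈ LCD.U2 := LCD.Sig_subset_U2 hz
  have hz₁U : z₁ ∈ LCD.U2 := LCD.Sig_subset_U2 hz₁
  set h' : ℝ := deriv (fun s => h (v, s)) y with hh'
  set P := pxx φ z with hPdef
  set Q := pxy φ z with hQdef
  set R := pyy φ z with hRdef
  set P₁ := pxx φ z₁ with hP1def
  set Q₁ := pxy φ z₁ with hQ1def
  set R₁ := pyy φ z₁ with hR1def
  -- second derivative bounds
  have hP : |P| ≤ 2/100000 := by
    have := LCD.pxx_close hf hb' hz; rw [hpxx0] at this; simpa using this
  have hQ : |Q - 1| ≤ 2/100000 := by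
    have := LCD.pxy_close hf hb' hz; rw [hpxy0] at this; simpa using this
  have hR : |R| ≤ 2/100000 := by
    have := LCD.pyy_close hf hb' hz; rw [hpyy0] at this; simpa using this
  have hP₁ : |P₁| ≤ 2/100000 := by
    have := LCD.pxx_close hf hb' hz₁; rw [hpxx0] at this; simpa using this
  have hQ₁ : |Q₁ - 1| ≤ 2/100000 := by
    have := LCD.pxy_close hf hb' hz₁; rw [hpxy0] at this; simpa using this
  have hR₁ : |R₁| ≤ 2/100000 := by
    have := LCD.pyy_close hf hb' hz₁; rw [hpyy0] at this; simpa using this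
  have hAA1 : AA φ z₁ = R₁ / (Q₁ + Real.sqrt (Q₁^2 - P₁*R₁)) := by
    simp [AA, HH, hP1def, hQ1def, hR1def]
  have hAAz : AA φ z = R / (Q + Real.sqrt (Q^2 - P*R)) := by
    simp [AA, HH, hPdef, hQdef, hRdef]
  obtain ⟨hA1small, -⟩ := LCD.quad_aux_LCD hP₁ hQ₁ hR₁ hAA1
  obtain ⟨hAsmall, hAquad⟩ := LCD.quad_aux_LCD hP hQ hR hAAz
  set A₁ := AA φ z₁ with hA1def
  set A := AA φ z with hAdef
  -- chain rule
  have hγ : HasDerivAt (fun s => ((h (v, s), s) : ℝ × ℝ)) ((h', 1) : ℝ × ℝ) y :=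
    HasDerivAt.prodMk hdiff.hasDerivAt (hasDerivAt_id y)
  have hTpy : HasDerivAt (fun s => py φ (h (v, s), s))
      (((fderiv ℝ (fderiv ℝ φ) z).flip LCD.e2) (h', 1)) y :=
    by
      have hc := (LCD.Hpy hf hzU).comp_hasDerivAt_of_eq
        (f := fun s => ((h (v, s), s) : ℝ × ℝ)) (x := y) hγ hzdef
      exact hc
  have hTpx : HasDerivAt (fun s => px φ (h (v, s), s))
      (((fderiv ℝ (fderiv ℝ φ) z).flip LCD.e1) (h', 1)) y :=
    by
      have hc := (LCD.Hpx hf hzU).comp_hasDerivAt_of_eq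
        (f := fun s => ((h (v, s), s) : ℝ × ℝ)) (x := y) hγ hzdef
      exact hc
  have hT : HasDerivAt (fun s => tfun φ z₁ (h (v, s), s))
      ((((fderiv ℝ (fderiv ℝ φ) z).flip LCD.e2) (h', 1))
        - A₁ * (((fderiv ℝ (fderiv ℝ φ) z).flip LCD.e1) (h', 1))) y := by
    have := (hTpy.sub_const (py φ z₁)).sub
      ((hTpx.sub_const (px φ z₁)).const_mul A₁)
    exact this
  have hT0 : HasDerivAt (fun s => tfun φ z₁ (h (v, s), s)) 0 y := by
    refine (hasDerivAt_const y v).congr_of_eventuallyEq ?_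
    filter_upwards [Icc_mem_nhds hy.1 hy.2] with s hs
    exact hlevel s hs
  have heq0 : (((fderiv ℝ (fderiv ℝ φ) z).flip LCD.e2) (h', 1))
      - A₁ * (((fderiv ℝ (fderiv ℝ φ) z).flip LCD.e1) (h', 1)) = 0 := hT.unique hT0
  have hv' : ((h', 1) : ℝ × ℝ) = h' • LCD.e1 + LCD.e2 := by
    simp [LCD.e1, LCD.e2, Prod.ext_iff]
  have exp2 : ((fderiv ℝ (fderiv ℝ φ) z).flip LCD.e2) (h', 1) = h' * Q + R := by
    have expand : ((fderiv ℝ (fderiv ℝ φ) z).flip LCD.e2) (h', 1)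
        = h' * (fderiv ℝ (fderiv ℝ φ) z LCD.e1 LCD.e2)
          + fderiv ℝ (fderiv ℝ φ) z LCD.e2 LCD.e2 := by
      rw [ContinuousLinearMap.flip_apply, hv']
      simp
    rw [expand, LCD.sym2 hf hzU LCD.e1 LCD.e2, ← LCD.pxy_eq hf hzU, ← LCD.pyy_eq hf hzU]
  have exp1 : ((fderiv ℝ (fderiv ℝ φ) z).flip LCD.e1) (h', 1) = h' * P + Q := by
    have expand : ((fderiv ℝ (fderiv ℝ φ) z).flip LCD.e1) (h', 1)
        = h' * (fderiv ℝ (fderiv ℝ φ) z LCD.e1 LCD.e1)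
          + fderiv ℝ (fderiv ℝ φ) z LCD.e2 LCD.e1 := by
      rw [ContinuousLinearMap.flip_apply, hv']
      simp
    rw [expand, ← LCD.pxx_eq hf hzU, ← LCD.pxy_eq hf hzU]
  rw [exp1, exp2] at heq0
  -- denominator positive
  have hA1P : |A₁ * P| ≤ 1/100 := by
    rw [abs_mul]
    exact le_trans (mul_le_mul hA1small hP (abs_nonneg _) (by norm_num)) (by norm_num)
  have hDge : (9:ℝ)/10 ≤ Q - A₁ * P := by
    have := abs_le.mp hQ; have := abs_le.mp hA1P; linarith
  have hDpos : (0:ℝ) < Q - A₁ * P := lt_of_lt_of_le (by norm_num) hDge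
  have part1 : h' = -((R - A₁ * Q) / (Q - A₁ * P)) := by
    have hne : Q - A₁ * P ≠ 0 := ne_of_gt hDpos
    field_simp
    linear_combination heq0
  constructor
  · exact part1
  · intro lam hlam0 hlam1 hAclose
    have habs : |A₁ - A| ≤ lam := by rwa [abs_sub_comm] at hAclose
    have key : (h' + A₁) * (Q - A₁ * P) = (A₁ - A) * (2*Q - P*(A₁+A)) := by
      have e0 : h' * (Q - A₁ * P) = -(R - A₁ * Q) := by linear_combination heq0
      linear_combination e0 - hAquad
    have hAbnd : |A| ≤ 1/10000 := hAsmall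
    have hnum : |(A₁ - A) * (2*Q - P*(A₁+A))| ≤ lam * (22/10) := by
      rw [abs_mul]
      have hQabs : |Q| ≤ 1 + 2/100000 := by
        have := abs_le.mp hQ; rw [abs_le]; constructor <;> linarith
      have hA1A : |A₁ + A| ≤ 2/10000 := by
        refine (abs_add_le _ _).trans ?_; linarith
      have hPA : |P * (A₁ + A)| ≤ 1/10 := by
        rw [abs_mul]
        calc |P| * |A₁ + A| ≤ (2/100000) * (2/10000) :=
              mul_le_mul hP hA1A (abs_nonneg _) (by norm_num)
          _ ≤ 1/10 := by norm_num
      have htri : |2*Q - P*(A₁+A)| ≤ |2*Q| + |P*(A₁+A)| := by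
        have := abs_add_le (2*Q) (-(P*(A₁+A)))
        simpa [sub_eq_add_neg] using this
      have h2 : |2*Q - P*(A₁+A)| ≤ 22/10 := by
        have h2q : |2*Q| = 2 * |Q| := by rw [abs_mul]; norm_num
        rw [h2q] at htri
        linarith
      exact mul_le_mul habs h2 (abs_nonneg _) (le_of_lt hlam0)
    have habs2 : |h' + A₁| * (Q - A₁ * P) ≤ lam * (22/10) := by
      calc |h' + A₁| * (Q - A₁ * P) = |(h' + A₁) * (Q - A₁ * P)| := by
            rw [abs_mul, abs_of_pos hDpos]
        _ = |(A₁ - A) * (2*Q - P*(A₁+A))| := by rw [key]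
        _ ≤ lam * (22/10) := hnum
    have hX : (0:ℝ) ≤ |h' + A₁| := abs_nonneg _
    have s1 : |h' + A₁| * (9/10) ≤ lam * (22/10) :=
      le_trans (mul_le_mul_of_nonneg_left hDge hX) habs2
    linarith
end

section
/- Let g ∈ C^r(I,ℝ) on a compact interval I with ‖g'‖_∞ ≤ 1, let C > 0, and let 0 < λ ≤ ‖g‖_∞ with Cλ ≤ |I|. Then there is a finite family of pairwise disjoint open intervals I_{λ,i} (i ∈ 𝓘_λ), each of length at least Cλ, with |𝓘_λ| ≤ 30 r (1 + |I| ‖g^{(r)}‖_∞^{1/r} λ^{-1/r}), such that the union V_λ of the intervals satisfies {t ∈ I : |g(t)| < λ} ⊆ V_λ ⊆ {t ∈ I : |g(t)| < (8+C)λ}. -/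
open Set

private lemma myIteratedDerivWithin_congr_set {f : ℝ → ℝ} {s t : Set ℝ} {x : ℝ} {n : ℕ}
    (h : s =ᶠ[nhds x] t) :
    iteratedDerivWithin n f s x = iteratedDerivWithin n f t x := by
  simp only [iteratedDerivWithin, iteratedFDerivWithin_congr_set h]

private lemma deriv_bound_transfer {g : ℝ → ℝ} {a b t Cr : ℝ} {r : ℕ}
    (hat : a ≤ t) (htb : t < b) (hg : ContDiffOn ℝ r g (Icc a b))
    (hCr : ∀ y ∈ Icc a b, |iteratedDerivWithin r g (Icc a b) y| ≤ Cr) :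
    ∀ y ∈ Icc t b, |iteratedDerivWithin r g (Icc t b) y| ≤ Cr := by
  have hsub : Icc t b ⊆ Icc a b := Icc_subset_Icc hat le_rfl
  have key : ∀ y ∈ Ioc t b, iteratedDerivWithin r g (Icc t b) y
      = iteratedDerivWithin r g (Icc a b) y := by
    intro y hy
    apply myIteratedDerivWithin_congr_set
    have hIoi : Ioi t ∈ nhds y := Ioi_mem_nhds hy.1
    rw [Filter.eventuallyEq_set]
    filter_upwards [hIoi] with z hz
    simp only [mem_Icc, mem_Ioi] at *
    constructor
    · rintro ⟨h1, h2⟩; exact ⟨le_trans hat h1, h2⟩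
    · rintro ⟨_, h2⟩; exact ⟨le_of_lt hz, h2⟩
  intro y hy
  rcases eq_or_lt_of_le hy.1 with rfl | hty
  case inr => rw [key y ⟨hty, hy.2⟩]; exact hCr y (hsub hy)
  case inl =>
    have hcont : ContinuousOn (iteratedDerivWithin r g (Icc t b)) (Icc t b) :=
      (hg.mono hsub).continuousOn_iteratedDerivWithin le_rfl (uniqueDiffOn_Icc htb)
    have hne : (nhdsWithin t (Ioc t b)).NeBot := by
      rw [← mem_closure_iff_nhdsWithin_neBot, closure_Ioc (ne_of_lt htb)]
      exact left_mem_Icc.mpr htb.le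
    have htend : Filter.Tendsto (fun z => |iteratedDerivWithin r g (Icc t b) z|)
        (nhdsWithin t (Ioc t b)) (nhds |iteratedDerivWithin r g (Icc t b) t|) :=
      Filter.Tendsto.abs ((hcont t (left_mem_Icc.mpr htb.le)).mono Ioc_subset_Icc_self)
    refine le_of_tendsto htend ?_
    filter_upwards [self_mem_nhdsWithin] with z hz
    rw [key z hz]
    exact hCr z (hsub (Ioc_subset_Icc_self hz))

private lemma component_inf_spec {c d mu : ℝ} {f : ℝ → ℝ} (hf : Continuous f) {x : ℝ}
    {U : Set ℝ} (hU : U = {y | y ∈ Icc c d ∧ |f y| < mu})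
    (hx : x ∈ U) :
    ∃ s : ℝ, c ≤ s ∧ s ≤ x ∧ (s = c ∨ |f s| = mu) ∧
      (∀ ε > 0, ∃ x', x' ∈ connectedComponentIn U x ∧ s ≤ x' ∧ x' ≤ s + ε) := by
  have hKU : connectedComponentIn U x ⊆ U := connectedComponentIn_subset U x
  have hxU := hx
  rw [hU] at hxU
  have hxK : x ∈ connectedComponentIn U x := mem_connectedComponentIn hx
  set K := connectedComponentIn U x with hK
  have hKU' : ∀ y ∈ K, y ∈ Icc c d ∧ |f y| < mu := by
    intro y hy; have := hKU hy; rwa [hU] at this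
  have hKne : K.Nonempty := ⟨x, hxK⟩
  have hKbdd : BddBelow K := ⟨c, fun y hy => (hKU' y hy).1.1⟩
  set s := sInf K with hs
  have hsc : c ≤ s := le_csInf hKne fun y hy => (hKU' y hy).1.1
  have hsx : s ≤ x := csInf_le hKbdd hxK
  have hscl : s ∈ closure K := csInf_mem_closure hKne hKbdd
  have hsle : |f s| ≤ mu := by
    have h1 : closure K ⊆ {y | |f y| ≤ mu} := by
      apply closure_minimal
      · exact fun y hy => le_of_lt (hKU' y hy).2
      · exact isClosed_le (continuous_abs.comp hf) continuous_const
    exact h1 hscl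
  refine ⟨s, hsc, hsx, ?_, ?_⟩
  · by_contra hcon
    push_neg at hcon
    obtain ⟨hsc', hsmu⟩ := hcon
    have hsc2 : c < s := lt_of_le_of_ne hsc (Ne.symm hsc')
    have hslt : |f s| < mu := lt_of_le_of_ne hsle hsmu
    have hopen : IsOpen {y | |f y| < mu} := isOpen_lt (continuous_abs.comp hf) continuous_const
    obtain ⟨ε, hε, hball⟩ := Metric.isOpen_iff.mp hopen s hslt
    set δ := min ε (s - c) with hδ
    have hδ0 : 0 < δ := lt_min hε (by linarith)
    have hδε : δ ≤ ε := min_le_left _ _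
    have hδsc : δ ≤ s - c := min_le_right _ _
    have hIccU : Icc (s - δ/2) s ⊆ U := by
      intro y hy
      rw [hU]
      refine ⟨⟨by linarith [hy.1], le_trans hy.2 (le_trans hsx (hKU' x hxK).1.2)⟩, hball ?_⟩
      simp only [Metric.mem_ball, Real.dist_eq]
      rw [abs_sub_lt_iff]
      constructor
      · linarith [hy.2]
      · linarith [hy.1]
    have hAU : Icc (s - δ/2) s ∪ K ⊆ U := union_subset hIccU hKU
    have hKord : K.OrdConnected := isPreconnected_connectedComponentIn.ordConnected
    have hAord : (Icc (s - δ/2) s ∪ K).OrdConnected := by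
      constructor
      rintro p (hp | hp) q (hq | hq) z hz
      · exact Or.inl ⟨le_trans hp.1 hz.1, le_trans hz.2 hq.2⟩
      · rcases le_or_gt z s with hzs | hzs
        · exact Or.inl ⟨le_trans hp.1 hz.1, hzs⟩
        · obtain ⟨x', hx'K, hx'z⟩ := exists_lt_of_csInf_lt hKne hzs
          exact Or.inr (hKord.out hx'K hq ⟨le_of_lt hx'z, hz.2⟩)
      · have h1 : s ≤ p := csInf_le hKbdd hp
        have h2 : z = p := le_antisymm (le_trans hz.2 (le_trans hq.2 h1)) hz.1
        exact Or.inr (h2 ▸ hp)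
      · exact Or.inr (hKord.out hp hq hz)
    have hAx : x ∈ Icc (s - δ/2) s ∪ K := Or.inr hxK
    have hsub2 : Icc (s - δ/2) s ∪ K ⊆ K :=
      (hAord.isPreconnected).subset_connectedComponentIn hAx hAU
    have hmem : s - δ/2 ∈ K := hsub2 (Or.inl ⟨le_refl _, by linarith⟩)
    have := csInf_le hKbdd hmem
    linarith
  · intro ε hε
    obtain ⟨x', hx'K, hx'⟩ := exists_lt_of_csInf_lt hKne (show sInf K < s + ε by linarith)
    exact ⟨x', hx'K, csInf_le hKbdd hx'K, le_of_lt hx'⟩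

set_option maxHeartbeats 1000000 in
/-- Thickened sublevel-set decomposition: if in addition `‖g'‖_∞ ≤ 1` and `Cλ ≤ |I|`, the
sublevel set `{|g| < λ}` can be covered by at most `30 r (1 + |I| C_r^{1/r} λ^{-1/r})`
pairwise disjoint intervals, each of length at least `Cλ`, on which `|g| < (8+C)λ`. -/
theorem thick_sublevel_set_decomposition
    (a b : ℝ) (hab : a ≤ b) (r : ℕ) (hr : 1 ≤ r)
    (g : ℝ → ℝ) (hg : ContDiffOn ℝ r g (Icc a b))
    (hg' : ∀ t ∈ Icc a b, |derivWithin g (Icc a b) t| ≤ 1)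
    (Cr : ℝ) (hCr : ∀ t ∈ Icc a b, |iteratedDerivWithin r g (Icc a b) t| ≤ Cr)
    (C : ℝ) (hC : 0 < C)
    (lam : ℝ) (hlam : 0 < lam) (hlam' : ∃ t ∈ Icc a b, lam ≤ |g t|)
    (hClam : C * lam ≤ b - a) :
    ∃ (n : ℕ) (J : Fin n → Set ℝ),
      (∀ i, (J i).OrdConnected) ∧
      Pairwise (Function.onFun Disjoint J) ∧
      (∀ i, ∃ u ∈ J i, ∃ w ∈ J i, C * lam ≤ w - u) ∧
      ((n : ℝ) ≤ 30 * r * (1 + (b - a) * Cr ^ ((1 : ℝ) / r) * lam ^ (-(1 : ℝ) / r))) ∧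
      {t ∈ Icc a b | |g t| < lam} ⊆ (⋃ i, J i) ∧
      (⋃ i, J i) ⊆ {t ∈ Icc a b | |g t| < (8 + C) * lam} := by
  classical
  have hCl0 : 0 < C * lam := mul_pos hC hlam
  have hab' : a < b := by nlinarith
  have haI : a ∈ Icc a b := left_mem_Icc.mpr hab
  have hCr0 : 0 ≤ Cr := le_trans (abs_nonneg _) (hCr a haI)
  have hrR : (1:ℝ) ≤ (r:ℝ) := by exact_mod_cast hr
  have hrne : (r:ℝ) ≠ 0 := by positivity
  set X := (b - a) * Cr ^ ((1:ℝ)/r) * lam ^ (-(1:ℝ)/r) with hX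
  have hX0 : 0 ≤ X := by
    apply mul_nonneg (mul_nonneg (by linarith) (Real.rpow_nonneg hCr0 _))
    positivity
  set N := ⌈X⌉₊ + 1 with hN
  have hN0 : 0 < N := Nat.succ_pos _
  have hNR : (0:ℝ) < N := by exact_mod_cast hN0
  have hNX : X ≤ (N:ℝ) := by
    have := Nat.le_ceil X
    push_cast [hN]
    linarith
  have hNle : (N:ℝ) ≤ X + 2 := by
    have := Nat.ceil_lt_add_one hX0
    push_cast [hN]
    linarith
  set L := (b - a)/N with hL
  have hL0 : 0 < L := div_pos (by linarith) hNR
  set tk : ℕ → ℝ := fun k => a + k * L with htkdef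
  have htkN : tk N = b := by
    have hNne : (N:ℝ) ≠ 0 := ne_of_gt hNR
    show a + (N:ℝ) * ((b - a) / N) = b
    have h' : (N:ℝ) * ((b - a) / N) = b - a := by field_simp
    linarith
  have htkmono : ∀ i j : ℕ, i ≤ j → tk i ≤ tk j := by
    intro i j hij
    simp only [htkdef, add_le_add_iff_left]
    have h1 : (i:ℝ) ≤ j := by exact_mod_cast hij
    nlinarith
  have htka : ∀ k : ℕ, a ≤ tk k := by
    intro k
    simp only [htkdef, le_add_iff_nonneg_right]
    positivity
  have htkb : ∀ k : ℕ, k ≤ N → tk k ≤ b := fun k hk => le_of_le_of_eq (htkmono k N hk) htkN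
  have hstep : ∀ k : ℕ, tk (k+1) = tk k + L := by
    intro k
    simp only [htkdef]
    push_cast
    ring
  have htklt : ∀ k : ℕ, k < N → tk k < b := by
    intro k hk
    have h1 : tk k < tk (k+1) := by rw [hstep]; linarith
    exact lt_of_lt_of_le h1 (htkb (k+1) hk)
  -- Taylor polynomials
  set Q : ℕ → Polynomial ℝ := fun k =>
    ∑ i ∈ Finset.range r, Polynomial.C (iteratedDerivWithin i g (Icc (tk k) b) (tk k) / (Nat.factorial i : ℝ)) *
      (Polynomial.X - Polynomial.C (tk k)) ^ i with hQ
  have hQeval : ∀ k x, (Q k).eval x = taylorWithinEval g (r-1) (Icc (tk k) b) (tk k) x := by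
    intro k x
    rw [taylor_within_apply, hQ]
    rw [Nat.sub_add_cancel hr]
    simp only [Polynomial.eval_finset_sum, Polynomial.eval_mul, Polynomial.eval_pow,
      Polynomial.eval_sub, Polynomial.eval_X, Polynomial.eval_C, smul_eq_mul]
    apply Finset.sum_congr rfl
    intro i _
    have : (Nat.factorial i : ℝ) ≠ 0 := by exact_mod_cast (Nat.factorial_pos i).ne'
    field_simp
  have hQdeg : ∀ k, (Q k).natDegree ≤ r - 1 := by
    intro k
    rw [hQ]
    apply Polynomial.natDegree_sum_le_of_forall_le
    intro i hi
    refine le_trans (Polynomial.natDegree_mul_le) ?_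
    rw [Polynomial.natDegree_C, zero_add]
    refine le_trans (Polynomial.natDegree_pow_le) ?_
    rw [Polynomial.natDegree_X_sub_C, mul_one]
    exact Nat.le_pred_of_lt (Finset.mem_range.mp hi)
  -- Cr * L^r ≤ lam
  have hCrL : Cr * L ^ r ≤ lam := by
    rcases eq_or_lt_of_le hCr0 with hCr0' | hCrpos
    · rw [← hCr0', zero_mul]; exact le_of_lt hlam
    · have hP1 : 0 < Cr ^ ((1:ℝ)/r) := Real.rpow_pos_of_pos hCrpos _
      have hP2 : 0 < lam ^ ((1:ℝ)/r) := Real.rpow_pos_of_pos hlam _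
      have hXeq : X = (b - a) * (Cr ^ ((1:ℝ)/r) / lam ^ ((1:ℝ)/r)) := by
        rw [hX, neg_div, Real.rpow_neg hlam.le]
        ring
      have hXpos : 0 < X := by
        rw [hXeq]
        apply mul_pos (by linarith) (div_pos hP1 hP2)
      have hLX : L ≤ (b - a) / X := by
        rw [hL]
        exact div_le_div_of_nonneg_left (by linarith) hXpos hNX
      have hXdiv : (b - a) / X = (lam/Cr) ^ ((1:ℝ)/r) := by
        rw [Real.div_rpow hlam.le hCrpos.le, hXeq]
        have hba : b - a ≠ 0 := by linarith
        field_simp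
      have hlr : L ≤ (lam / Cr) ^ ((1:ℝ)/r) := hXdiv ▸ hLX
      have h3 : ((lam / Cr) ^ ((1:ℝ)/r)) ^ r = lam / Cr := by
        rw [← Real.rpow_natCast ((lam / Cr) ^ ((1:ℝ)/r)) r, ← Real.rpow_mul (by positivity)]
        rw [one_div, inv_mul_cancel₀ hrne, Real.rpow_one]
      calc Cr * L ^ r ≤ Cr * ((lam/Cr) ^ ((1:ℝ)/r)) ^ r :=
            mul_le_mul_of_nonneg_left (pow_le_pow_left₀ hL0.le hlr r) hCr0
        _ = lam := by rw [h3]; field_simp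
  -- Taylor error bound
  have herr : ∀ k, k < N → ∀ x ∈ Icc (tk k) (tk (k+1)), |g x - (Q k).eval x| ≤ lam := by
    intro k hk x hx
    have htkb' : tk k < b := htklt k hk
    have hsub : Icc (tk k) b ⊆ Icc a b := Icc_subset_Icc (htka k) le_rfl
    have hxIcc : x ∈ Icc (tk k) b := ⟨hx.1, le_trans hx.2 (htkb (k+1) hk)⟩
    have hCr' := deriv_bound_transfer (htka k) htkb' hg hCr
    have hgk : ContDiffOn ℝ ((r - 1 + 1 : ℕ) : ℕ∞) g (Icc (tk k) b) := by
      rw [Nat.sub_add_cancel hr]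
      exact hg.mono hsub
    have hCgoal : ∀ y ∈ Icc (tk k) b, ‖iteratedDerivWithin ((r - 1) + 1) g (Icc (tk k) b) y‖ ≤ Cr := by
      intro y hy
      rw [Real.norm_eq_abs, Nat.sub_add_cancel hr]
      exact hCr' y hy
    have hbound := taylor_mean_remainder_bound (n := r - 1) (le_of_lt htkb') hgk hxIcc hCgoal
    rw [Real.norm_eq_abs] at hbound
    rw [hQeval]
    refine le_trans hbound ?_
    have hx1 : 0 ≤ x - tk k := by linarith [hx.1]
    have hx2 : x - tk k ≤ L := by
      have := hx.2
      rw [hstep k] at this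
      linarith
    have h1 : (x - tk k) ^ (r - 1 + 1) ≤ L ^ (r - 1 + 1) := pow_le_pow_left₀ hx1 hx2 _
    have h2 : Cr * (x - tk k) ^ (r - 1 + 1) ≤ Cr * L ^ (r - 1 + 1) :=
      mul_le_mul_of_nonneg_left h1 hCr0
    have h3 : Cr * L ^ (r - 1 + 1) ≤ lam := by rw [Nat.sub_add_cancel hr]; exact hCrL
    have h4 : (1:ℝ) ≤ (Nat.factorial (r-1) : ℝ) := by
      exact_mod_cast Nat.one_le_iff_ne_zero.mpr (Nat.factorial_pos (r-1)).ne'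
    have h5 : 0 ≤ Cr * (x - tk k) ^ (r - 1 + 1) := by positivity
    calc Cr * (x - tk k) ^ (r - 1 + 1) / (Nat.factorial (r-1) : ℝ)
        ≤ Cr * (x - tk k) ^ (r - 1 + 1) := div_le_self h5 h4
      _ ≤ lam := le_trans h2 h3
  -- the sets
  set U : ℕ → Set ℝ := fun k => {y | y ∈ Icc (tk k) (tk (k+1)) ∧ |Polynomial.eval y (Q k)| < 2 * lam} with hU
  have hUk : ∀ k, U k = {y | y ∈ Icc (tk k) (tk (k+1)) ∧ |(fun y => Polynomial.eval y (Q k)) y| < 2 * lam} := by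
    intro k; rw [hU]
  set UU : Set ℝ := {y | ∃ k, k < N ∧ y ∈ U k} with hUU
  set V : Set ℝ := {y | y ∈ Icc a b ∧ ∃ x, x ∈ UU ∧ |y - x| ≤ C * lam} with hV
  have hUmem : ∀ k y, y ∈ U k ↔ (y ∈ Icc (tk k) (tk (k+1)) ∧ |Polynomial.eval y (Q k)| < 2 * lam) := by
    intro k y; rw [hU]; rfl
  have hUUmem : ∀ y, y ∈ UU ↔ ∃ k, k < N ∧ y ∈ U k := by intro y; rw [hUU]; rfl
  have hVmem : ∀ y, y ∈ V ↔ (y ∈ Icc a b ∧ ∃ x, x ∈ UU ∧ |y - x| ≤ C * lam) := by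
    intro y; rw [hV]; rfl
  have hUUI : UU ⊆ Icc a b := by
    intro y hy
    obtain ⟨k, hk, hy2⟩ := (hUUmem y).mp hy
    obtain ⟨hy3, _⟩ := (hUmem k y).mp hy2
    exact ⟨le_trans (htka k) hy3.1, le_trans hy3.2 (htkb (k+1) hk)⟩
  have hUUV : UU ⊆ V := by
    intro y hy
    rw [hVmem]
    exact ⟨hUUI hy, y, hy, by rw [sub_self, abs_zero]; positivity⟩
  have hVI : V ⊆ Icc a b := fun y hy => ((hVmem y).mp hy).1
  have hLip : ∀ x ∈ Icc a b, ∀ y ∈ Icc a b, |g y - g x| ≤ |y - x| := by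
    intro x hx y hy
    have h1 := Convex.norm_image_sub_le_of_norm_derivWithin_le
      (hg.differentiableOn (by exact_mod_cast Nat.one_le_iff_ne_zero.mp hr)) (fun z hz => by
        rw [Real.norm_eq_abs]; exact hg' z hz) (convex_Icc a b) hx hy
    simpa [Real.norm_eq_abs] using h1
  have hUg : ∀ y ∈ UU, |g y| < 3 * lam := by
    intro y hy
    obtain ⟨k, hk, hy2⟩ := (hUUmem y).mp hy
    obtain ⟨hy3, hy4⟩ := (hUmem k y).mp hy2
    have h1 := herr k hk y hy3
    have h2 : g y = (g y - Polynomial.eval y (Q k)) + Polynomial.eval y (Q k) := by ring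
    calc |g y| = |(g y - Polynomial.eval y (Q k)) + Polynomial.eval y (Q k)| := by rw [← h2]
      _ ≤ |g y - Polynomial.eval y (Q k)| + |Polynomial.eval y (Q k)| := abs_add_le _ _
      _ < lam + 2 * lam := add_lt_add_of_le_of_lt h1 hy4
      _ = 3 * lam := by ring
  have hVg : ∀ y ∈ V, |g y| < (3 + C) * lam := by
    intro y hy
    obtain ⟨hyI, x, hxUU, hdist⟩ := (hVmem y).mp hy
    have h1 := hLip x (hUUI hxUU) y hyI
    have h2 := hUg x hxUU
    have h3 : g y = (g y - g x) + g x := by ring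
    calc |g y| = |(g y - g x) + g x| := by rw [← h3]
      _ ≤ |g y - g x| + |g x| := abs_add_le _ _
      _ ≤ |y - x| + |g x| := by linarith
      _ < C * lam + 3 * lam := by linarith
      _ = (3 + C) * lam := by ring
  -- the sublevel set is inside UU
  have hS : ∀ x, x ∈ Icc a b → |g x| < lam → x ∈ UU := by
    intro x hx hgx
    set k0 := min (⌊(x - a)/L⌋₊) (N - 1) with hk0
    have hk0N : k0 < N := lt_of_le_of_lt (min_le_right _ _) (Nat.sub_lt hN0 one_pos)
    have hdiv0 : 0 ≤ (x - a)/L := div_nonneg (by linarith [hx.1]) hL0.le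
    have hfl : (k0:ℝ) ≤ (x - a)/L := by
      have h1 : (k0:ℕ) ≤ ⌊(x-a)/L⌋₊ := min_le_left _ _
      have h2 : ((⌊(x-a)/L⌋₊ : ℕ):ℝ) ≤ (x-a)/L := Nat.floor_le hdiv0
      exact le_trans (by exact_mod_cast h1) h2
    have hxl : tk k0 ≤ x := by
      have h3 : (k0:ℝ) * L ≤ x - a := (le_div_iff₀ hL0).mp hfl
      simp only [htkdef]
      linarith
    have hxr : x ≤ tk (k0 + 1) := by
      rcases le_or_gt (⌊(x-a)/L⌋₊) (N-1) with hc | hc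
      · have hk0eq : k0 = ⌊(x-a)/L⌋₊ := min_eq_left hc
        have h3 : (x - a)/L < (⌊(x-a)/L⌋₊:ℝ) + 1 := Nat.lt_floor_add_one _
        have h4 : x - a < ((k0:ℝ) + 1) * L := by
          rw [hk0eq]
          have h5 := (div_lt_iff₀ hL0).mp h3
          linarith
        simp only [htkdef]
        push_cast
        linarith
      · have hk0eq : k0 = N - 1 := min_eq_right (le_of_lt hc)
        have h6 : k0 + 1 = N := by omega
        rw [h6, htkN]
        exact hx.2
    have hQx : |Polynomial.eval x (Q k0)| < 2 * lam := by
      have h1 := herr k0 hk0N x ⟨hxl, hxr⟩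
      have h2 : Polynomial.eval x (Q k0) = g x - (g x - Polynomial.eval x (Q k0)) := by ring
      calc |Polynomial.eval x (Q k0)| = |g x - (g x - Polynomial.eval x (Q k0))| := by rw [← h2]
        _ ≤ |g x| + |g x - Polynomial.eval x (Q k0)| := abs_sub _ _
        _ < lam + lam := add_lt_add_of_lt_of_le hgx h1
        _ = 2 * lam := by ring
    rw [hUUmem]
    exact ⟨k0, hk0N, (hUmem k0 x).mpr ⟨⟨hxl, hxr⟩, hQx⟩⟩
  -- joining points within C*lam inside I stay in the same component of V
  have hjoin : ∀ z ∈ V, ∀ x' ∈ UU, |z - x'| ≤ C * lam →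
      connectedComponentIn V z = connectedComponentIn V x' := by
    intro z hz x' hx' hd
    have hzI := hVI hz
    have hx'I := hUUI hx'
    have hx'V : x' ∈ V := hUUV hx'
    rw [abs_le] at hd
    have hIccV : Icc (min z x') (max z x') ⊆ V := by
      intro y hy
      have hyI : y ∈ Icc a b :=
        ⟨le_trans (le_min hzI.1 hx'I.1) hy.1, le_trans hy.2 (max_le hzI.2 hx'I.2)⟩
      rw [hVmem]
      refine ⟨hyI, x', hx', ?_⟩
      rw [abs_le]
      rcases le_total z x' with hc | hc
      · rw [min_eq_left hc, max_eq_right hc] at hy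
        constructor <;> [linarith [hy.1, hd.1]; linarith [hy.2]]
      · rw [min_eq_right hc, max_eq_left hc] at hy
        constructor <;> [linarith [hy.1]; linarith [hy.2, hd.2]]
    have hzmem : z ∈ Icc (min z x') (max z x') := ⟨min_le_left _ _, le_max_left _ _⟩
    have hsub1 : Icc (min z x') (max z x') ⊆ connectedComponentIn V z :=
      isPreconnected_Icc.subset_connectedComponentIn hzmem hIccV
    exact connectedComponentIn_eq (hsub1 ⟨min_le_right _ _, le_max_right _ _⟩)
  -- the finite set of candidate seeds
  set Root : ℕ → Finset ℝ := fun k =>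
    insert (tk k) (((Q k - Polynomial.C (2*lam)).roots.toFinset) ∪
      ((Q k + Polynomial.C (2*lam)).roots.toFinset)) with hRoot
  set FF : Finset (ℕ × ℝ) := (Finset.range N).biUnion (fun k => (Root k).image (Prod.mk k)) with hFF
  have hRootcard : ∀ k, (Root k).card ≤ 2 * r := by
    intro k
    have h1 : (Q k - Polynomial.C (2*lam)).roots.toFinset.card ≤ r - 1 := by
      refine le_trans (Multiset.toFinset_card_le _) (le_trans (Polynomial.card_roots' _) ?_)
      refine le_trans (Polynomial.natDegree_sub_le _ _) (max_le (hQdeg k) ?_)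
      rw [Polynomial.natDegree_C]
      exact Nat.zero_le _
    have h2 : (Q k + Polynomial.C (2*lam)).roots.toFinset.card ≤ r - 1 := by
      refine le_trans (Multiset.toFinset_card_le _) (le_trans (Polynomial.card_roots' _) ?_)
      refine le_trans (Polynomial.natDegree_add_le _ _) (max_le (hQdeg k) ?_)
      rw [Polynomial.natDegree_C]
      exact Nat.zero_le _
    have h3 := Finset.card_insert_le (tk k) (((Q k - Polynomial.C (2*lam)).roots.toFinset) ∪
      ((Q k + Polynomial.C (2*lam)).roots.toFinset))
    have h4 := Finset.card_union_le ((Q k - Polynomial.C (2*lam)).roots.toFinset)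
      ((Q k + Polynomial.C (2*lam)).roots.toFinset)
    simp only [hRoot]
    omega
  have hFFcard : FF.card ≤ N * (2*r) := by
    rw [hFF]
    refine le_trans (Finset.card_biUnion_le) ?_
    refine le_trans (Finset.sum_le_card_nsmul _ _ (2*r) ?_) ?_
    · intro k _
      exact le_trans (Finset.card_image_le) (hRootcard k)
    · simp [Finset.card_range, smul_eq_mul]
  -- the family of connected components
  set 𝒞 : Set (Set ℝ) := (fun z => connectedComponentIn V z) '' V with h𝒞
  have hsurj : 𝒞 ⊆ (fun p : ℕ × ℝ => connectedComponentIn V p.2) '' ↑FF := by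
    rintro W ⟨z₀, hz₀, rfl⟩
    obtain ⟨hz₀I, x, hxUU, hdist⟩ := (hVmem z₀).mp hz₀
    obtain ⟨k, hk, hxUk⟩ := (hUUmem x).mp hxUU
    obtain ⟨s, hsc, hsx, hsor, hsapprox⟩ :=
      component_inf_spec (Polynomial.continuous (Q k)) (hUk k) hxUk
    obtain ⟨x', hx'K, hsx', hx's⟩ := hsapprox (C * lam) hCl0
    have hx'Uk : x' ∈ U k := connectedComponentIn_subset _ _ hx'K
    have hx'UU : x' ∈ UU := (hUUmem x').mpr ⟨k, hk, hx'Uk⟩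
    have hxmem := (hUmem k x).mp hxUk
    have hsI : s ∈ Icc a b :=
      ⟨le_trans (htka k) hsc, le_trans hsx (le_trans hxmem.1.2 (htkb (k+1) hk))⟩
    have hsV : s ∈ V := (hVmem s).mpr ⟨hsI, x', hx'UU, by rw [abs_le]; constructor <;> linarith⟩
    have hkey1 : connectedComponentIn V s = connectedComponentIn V x' :=
      hjoin s hsV x' hx'UU (by rw [abs_le]; constructor <;> linarith)
    have hUkV : U k ⊆ V := fun y hy => hUUV ((hUUmem y).mpr ⟨k, hk, hy⟩)
    have hsub3 : connectedComponentIn (U k) x ⊆ connectedComponentIn V x' :=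
      isPreconnected_connectedComponentIn.subset_connectedComponentIn hx'K
        (le_trans (connectedComponentIn_subset _ _) hUkV)
    have hxK : x ∈ connectedComponentIn (U k) x := mem_connectedComponentIn hxUk
    have hkey2 : connectedComponentIn V x' = connectedComponentIn V x :=
      connectedComponentIn_eq (hsub3 hxK)
    have hkey3 : connectedComponentIn V z₀ = connectedComponentIn V x := hjoin z₀ hz₀ x hxUU hdist
    refine ⟨(k, s), ?_, ?_⟩
    · rw [Finset.mem_coe, hFF, Finset.mem_biUnion]
      refine ⟨k, Finset.mem_range.mpr hk, ?_⟩
      rw [Finset.mem_image]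
      refine ⟨s, ?_, rfl⟩
      simp only [hRoot]
      rcases hsor with hsc' | hsmu
      · rw [hsc']; exact Finset.mem_insert_self _ _
      · apply Finset.mem_insert_of_mem
        rcases (abs_eq (by positivity)).mp hsmu with he | he
        · apply Finset.mem_union_left
          apply Multiset.mem_toFinset.mpr
          rw [Polynomial.mem_roots']
          constructor
          · intro h0
            have h1 : Q k = Polynomial.C (2*lam) := by
              have := sub_eq_zero.mp h0
              exact this
            have h2 := hxmem.2
            rw [h1, Polynomial.eval_C, abs_of_pos (by positivity)] at h2
            linarith
          · simp [Polynomial.IsRoot, Polynomial.eval_sub, Polynomial.eval_C, he]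
        · apply Finset.mem_union_right
          apply Multiset.mem_toFinset.mpr
          rw [Polynomial.mem_roots']
          constructor
          · intro h0
            have h1 : Q k = Polynomial.C (-(2*lam)) := by
              have h2 : Q k = - Polynomial.C (2*lam) := by linear_combination h0
              rw [h2, Polynomial.C_neg]
            have h2 := hxmem.2
            rw [h1, Polynomial.eval_C, abs_neg, abs_of_pos (by positivity)] at h2
            linarith
          · simp [Polynomial.IsRoot, Polynomial.eval_add, Polynomial.eval_C, he]
    · show connectedComponentIn V s = connectedComponentIn V z₀
      rw [hkey1, hkey2, hkey3]
  have hfin : 𝒞.Finite := Set.Finite.subset (FF.finite_toSet.image _) hsurj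
  have hncard : hfin.toFinset.card ≤ N * (2*r) := by
    have h1 : 𝒞.ncard ≤ Set.ncard ((fun p : ℕ × ℝ => connectedComponentIn V p.2) '' ↑FF) :=
      Set.ncard_le_ncard hsurj (FF.finite_toSet.image _)
    have h2 : Set.ncard ((fun p : ℕ × ℝ => connectedComponentIn V p.2) '' ↑FF) ≤ FF.card := by
      refine le_trans (Set.ncard_image_le FF.finite_toSet) ?_
      rw [Set.ncard_coe_finset]
    have h3 : 𝒞.ncard = hfin.toFinset.card := Set.ncard_eq_toFinset_card 𝒞 hfin
    omega
  set J : Fin hfin.toFinset.card → Set ℝ :=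
    fun i => ((hfin.toFinset.equivFin.symm i : hfin.toFinset) : Set ℝ) with hJdef
  have hJval : ∀ i, J i = ((hfin.toFinset.equivFin.symm i : hfin.toFinset) : Set ℝ) := by
    intro i; rw [hJdef]
  have hJ𝒞 : ∀ i, ∃ z ∈ V, J i = connectedComponentIn V z := by
    intro i
    obtain ⟨z, hzV, hzeq⟩ := hfin.mem_toFinset.mp (hfin.toFinset.equivFin.symm i).2
    exact ⟨z, hzV, by rw [hJval i, ← hzeq]⟩
  refine ⟨hfin.toFinset.card, J, ?_, ?_, ?_, ?_, ?_, ?_⟩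
  · -- OrdConnected
    intro i
    obtain ⟨z, _, hzeq⟩ := hJ𝒞 i
    rw [hzeq]
    exact isPreconnected_connectedComponentIn.ordConnected
  · -- pairwise disjoint
    intro i j hij
    obtain ⟨z, _, hzeq⟩ := hJ𝒞 i
    obtain ⟨w, _, hweq⟩ := hJ𝒞 j
    show Disjoint (J i) (J j)
    by_contra hcon
    obtain ⟨y, hyi, hyj⟩ := Set.not_disjoint_iff.mp hcon
    have h1 : J i = J j := by
      rw [hzeq] at hyi ⊢
      rw [hweq] at hyj ⊢
      rw [connectedComponentIn_eq hyi, connectedComponentIn_eq hyj]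
    have h2 : hfin.toFinset.equivFin.symm i = hfin.toFinset.equivFin.symm j :=
      Subtype.coe_injective ((hJval i).symm.trans (h1.trans (hJval j)))
    exact hij (hfin.toFinset.equivFin.symm.injective h2)
  · -- length at least C*lam
    intro i
    obtain ⟨z, hzV, hzeq⟩ := hJ𝒞 i
    obtain ⟨hzI, x, hxUU, hdist⟩ := (hVmem z).mp hzV
    have hxI := hUUI hxUU
    rw [abs_le] at hdist
    set u := max a (x - C*lam) with hu
    set w := min b (x + C*lam) with hw
    have hIccV : Icc u w ⊆ V := by
      intro y hy
      have hya : a ≤ y := le_trans (le_max_left _ _) hy.1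
      have hyb : y ≤ b := le_trans hy.2 (min_le_left _ _)
      rw [hVmem]
      refine ⟨⟨hya, hyb⟩, x, hxUU, ?_⟩
      rw [abs_le]
      constructor
      · have := le_trans (le_max_right a (x - C*lam)) hy.1
        linarith
      · have := le_trans hy.2 (min_le_right b (x + C*lam))
        linarith
    have hzmem : z ∈ Icc u w := by
      constructor
      · exact max_le hzI.1 (by linarith)
      · exact le_min hzI.2 (by linarith)
    have hsub4 : Icc u w ⊆ connectedComponentIn V z :=
      isPreconnected_Icc.subset_connectedComponentIn hzmem hIccV
    have huw : u + C * lam ≤ w := by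
      apply le_min
      · have h1 : u ≤ b - C * lam := max_le (by linarith) (by linarith [hxI.2])
        linarith
      · have h2 : u ≤ x := max_le hxI.1 (by linarith)
        linarith
    have huww : u ≤ w := by linarith
    refine ⟨u, ?_, w, ?_, by linarith⟩
    · rw [hzeq]; exact hsub4 ⟨le_refl u, huww⟩
    · rw [hzeq]; exact hsub4 ⟨huww, le_refl w⟩
  · -- cardinality bound
    have h1 : ((hfin.toFinset.card : ℕ):ℝ) ≤ (N : ℝ) * (2*r) := by
      exact_mod_cast hncard
    have h2 : (N:ℝ) * (2*r) ≤ (X + 2) * (2*r) := by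
      apply mul_le_mul_of_nonneg_right hNle (by positivity)
    refine le_trans h1 (le_trans h2 ?_)
    nlinarith [hX0, hrR]
  · -- covers the sublevel set
    intro y hy
    simp only [Set.mem_setOf_eq] at hy
    obtain ⟨hyI, hylam⟩ := hy
    have hyUU := hS y hyI hylam
    have hyV := hUUV hyUU
    have hmem𝒞 : connectedComponentIn V y ∈ 𝒞 := ⟨y, hyV, rfl⟩
    rw [mem_iUnion]
    refine ⟨hfin.toFinset.equivFin ⟨connectedComponentIn V y, hfin.mem_toFinset.mpr hmem𝒞⟩, ?_⟩
    rw [hJval]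
    simp only [Equiv.symm_apply_apply]
    exact mem_connectedComponentIn hyV
  · -- inside the larger sublevel set
    intro y hy
    rw [mem_iUnion] at hy
    obtain ⟨i, hyi⟩ := hy
    obtain ⟨z, _, hzeq⟩ := hJ𝒞 i
    rw [hzeq] at hyi
    have hyV : y ∈ V := connectedComponentIn_subset _ _ hyi
    simp only [Set.mem_setOf_eq]
    refine ⟨hVI hyV, ?_⟩
    have := hVg y hyV
    nlinarith
end
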